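/- arXiv:2107.06331 — 7 statements merged into one kernel-verified Lean document; each statement's English description precedes it below -/
import Mathlib

section
/- In any congestion game equipped with the marginal cost incentives τ_e(x) = (x−1)[ℓ_e(x) − ℓ_e(x−1)] for x ∈ {1,…,n} (with ℓ_e(0) = 0), for every assignment a, every user i, and every alternative action a'_i ∈ A_i, the change in user i's cost equals the change in social cost: C_i(a) − C_i(a'_i, a_{−i}) = SC(a) − SC(a'_i, a_{−i}). -/
open scoped BigOperators ENNReal

noncomputable section

/-- A congestion game with incentives: `n` users, `R` resources,
finite nonempty action sets `act i ⊆ 2^E`, resource cost functions `cost e`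
and incentive functions `tax e`. -/
structure CGame where
  n : ℕ
  R : ℕ
  act : Fin n → Finset (Finset (Fin R))
  act_ne : ∀ i, (act i).Nonempty
  cost : Fin R → ℕ → ℝ
  tax : Fin R → ℕ → ℝ

namespace CGame

variable (G : CGame)

/-- An assignment of actions (not necessarily feasible). -/
abbrev Assign := Fin G.n → Finset (Fin G.R)

/-- Feasibility of an assignment. -/
def IsAssign (a : G.Assign) : Prop := ∀ i, a i ∈ G.act i

/-- The load `|a|_e`: the number of users selecting resource `e`. -/
def load (a : G.Assign) (e : Fin G.R) : ℕ :=
  (Finset.univ.filter fun i => e ∈ a i).card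

/-- The social cost `SC(a)`. -/
def SC (a : G.Assign) : ℝ := ∑ i, ∑ e ∈ a i, G.cost e (G.load a e)

/-- The cost `C_i(a)` experienced by user `i` (resource costs plus incentives). -/
def userCost (i : Fin G.n) (a : G.Assign) : ℝ :=
  ∑ e ∈ a i, (G.cost e (G.load a e) + G.tax e (G.load a e))

/-- Pure Nash equilibrium. -/
def IsNE (a : G.Assign) : Prop :=
  G.IsAssign a ∧ ∀ i : Fin G.n, ∀ s ∈ G.act i,
    G.userCost i a ≤ G.userCost i (Function.update a i s)

/-- The Rosenthal potential of the game with incentives. -/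
def potential (a : G.Assign) : ℝ :=
  ∑ e, ∑ k ∈ Finset.Icc 1 (G.load a e), (G.cost e k + G.tax e k)

/-- The minimum achievable social cost. -/
def MinCost : ℝ := sInf {c | ∃ a, G.IsAssign a ∧ G.SC a = c}

end CGame


namespace CGame

variable (G : CGame)

private def Phi (e : Fin G.R) (k : ℕ) : ℝ := (k : ℝ) * G.cost e k

private lemma load_le (a : G.Assign) (e : Fin G.R) : G.load a e ≤ G.n := by
  classical
  calc G.load a e ≤ (Finset.univ : Finset (Fin G.n)).card := Finset.card_filter_le _ _
  _ = G.n := by simp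

private lemma one_le_load (a : G.Assign) (i : Fin G.n) (e : Fin G.R) (he : e ∈ a i) :
    1 ≤ G.load a e := by
  classical
  exact Finset.card_pos.mpr ⟨i, by simp [he]⟩

private lemma load_update_add (a : G.Assign) (i : Fin G.n) (s : Finset (Fin G.R)) (e : Fin G.R) :
    G.load (Function.update a i s) e + (if e ∈ a i then 1 else 0)
      = G.load a e + (if e ∈ s then 1 else 0) := by
  classical
  have h : ∀ b : G.Assign, G.load b e = ∑ j, if e ∈ b j then 1 else 0 := by
    intro b; simp only [load, Finset.card_filter]
  rw [h, h, ← Finset.sum_erase_add _ _ (Finset.mem_univ i),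
      ← Finset.sum_erase_add _ _ (Finset.mem_univ i)]
  have h2 : ∀ j ∈ Finset.univ.erase i,
      (if e ∈ Function.update a i s j then (1:ℕ) else 0) = (if e ∈ a j then 1 else 0) := by
    intro j hj
    rw [Function.update_of_ne (Finset.ne_of_mem_erase hj)]
  rw [Finset.sum_congr rfl h2, Function.update_self]
  ring

private lemma SC_eq (a : G.Assign) : G.SC a = ∑ e, G.Phi e (G.load a e) := by
  classical
  unfold SC Phi
  have h : ∀ i : Fin G.n, ∑ e ∈ a i, G.cost e (G.load a e)
      = ∑ e, if e ∈ a i then G.cost e (G.load a e) else 0 := by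
    intro i
    rw [← Finset.sum_filter]
    congr 1
    simp
  simp_rw [h]
  rw [Finset.sum_comm]
  refine Finset.sum_congr rfl fun e _ => ?_
  rw [← Finset.sum_filter, Finset.sum_const, load]
  simp [mul_comm]

private lemma cost_add_tax
    (htax : ∀ e, ∀ x : ℕ, 1 ≤ x → x ≤ G.n →
      G.tax e x = ((x : ℝ) - 1) * (G.cost e x - G.cost e (x - 1)))
    (e : Fin G.R) (x : ℕ) (h1 : 1 ≤ x) (h2 : x ≤ G.n) :
    G.cost e x + G.tax e x = G.Phi e x - G.Phi e (x - 1) := by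
  have hc : ((x - 1 : ℕ) : ℝ) = (x : ℝ) - 1 := by
    have := Nat.cast_sub h1 (R := ℝ); simpa using this
  rw [htax e x h1 h2]
  unfold Phi
  rw [hc]
  ring

end CGame

/-- In any congestion game equipped with the marginal cost
incentives `τ_e(x) = (x−1)[ℓ_e(x) − ℓ_e(x−1)]` for `x ∈ {1,…,n}` (with
`ℓ_e(0) = 0`), for every assignment `a`, every user `i` and every alternative
action `a'_i ∈ A_i`, the change in user `i`'s cost equals the change in social
cost. -/
theorem marginal_cost_incentives_exact_social_cost (G : CGame)
    (hcost0 : ∀ e, G.cost e 0 = 0)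
    (htax : ∀ e, ∀ x : ℕ, 1 ≤ x → x ≤ G.n →
      G.tax e x = ((x : ℝ) - 1) * (G.cost e x - G.cost e (x - 1))) :
    ∀ a : G.Assign, G.IsAssign a → ∀ i : Fin G.n, ∀ s ∈ G.act i,
      G.userCost i a - G.userCost i (Function.update a i s)
        = G.SC a - G.SC (Function.update a i s) := by
  classical
  intro a _ i s _
  set b := Function.update a i s with hb
  have hbi : b i = s := Function.update_self i s a
  have key : ∀ e, G.load b e + (if e ∈ a i then 1 else 0)
      = G.load a e + (if e ∈ s then 1 else 0) := fun e => G.load_update_add a i s e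
  have hfilter : ∀ (t : Finset (Fin G.R)), Finset.univ.filter (fun e => e ∈ t) = t := by
    intro t; simp
  have hUCa : G.userCost i a
      = ∑ e, if e ∈ a i then (G.Phi e (G.load a e) - G.Phi e (G.load a e - 1)) else 0 := by
    unfold CGame.userCost
    rw [← Finset.sum_filter, hfilter]
    refine Finset.sum_congr rfl fun e he => ?_
    exact G.cost_add_tax htax e _ (G.one_le_load a i e he) (G.load_le a e)
  have hUCb : G.userCost i b
      = ∑ e, if e ∈ s then (G.Phi e (G.load b e) - G.Phi e (G.load b e - 1)) else 0 := by
    unfold CGame.userCost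
    rw [hbi, ← Finset.sum_filter, hfilter]
    refine Finset.sum_congr rfl fun e he => ?_
    have : e ∈ b i := by rw [hbi]; exact he
    exact G.cost_add_tax htax e _ (G.one_le_load b i e this) (G.load_le b e)
  rw [hUCa, hUCb, G.SC_eq a, G.SC_eq b, ← Finset.sum_sub_distrib, ← Finset.sum_sub_distrib]
  refine Finset.sum_congr rfl fun e _ => ?_
  have hk := key e
  by_cases h1 : e ∈ a i <;> by_cases h2 : e ∈ s <;> simp only [h1, h2, if_true, if_false] at hk ⊢
  · have : G.load b e = G.load a e := by omega
    rw [this]; ring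
  · have : G.load a e - 1 = G.load b e := by omega
    rw [this]; ring
  · have : G.load b e - 1 = G.load a e := by omega
    rw [this]; ring
  · have : G.load b e = G.load a e := by omega
    rw [this]; ring
end
end

section
/- Let 𝒢 be a set of congestion games with incentives, each with at most n users and MinCost(G) > 0, and suppose there exist ζ > 0, λ > 0 and μ < 1 such that for every game G ∈ 𝒢 and every pair of assignments a, a' ∈ A: SC(a) + Σ_{i=1}^n [C_i(a'_i, a_{−i}) − C_i(a)] + ζ[Φ(a') − Φ(a)] ≤ λ SC(a') + μ SC(a). Then sup_{G∈𝒢} min_{a∈NE(G)} SC(a)/MinCost(G) ≤ λ/(1−μ). -/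
open scoped BigOperators ENNReal

noncomputable section

open scoped BigOperators

section
variable (G : CGame)
open Finset

lemma load_eq (a : G.Assign) (i : Fin G.n) (e : Fin G.R) :
    G.load a e = ((Finset.univ.erase i).filter fun j => e ∈ a j).card
      + (if e ∈ a i then 1 else 0) := by
  classical
  unfold CGame.load
  rw [Finset.card_filter, Finset.card_filter,
    ← Finset.sum_erase_add _ _ (Finset.mem_univ i)]

lemma load_update_eq (a : G.Assign) (i : Fin G.n) (s : Finset (Fin G.R)) (e : Fin G.R) :
    G.load (Function.update a i s) e
      = ((Finset.univ.erase i).filter fun j => e ∈ a j).card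
        + (if e ∈ s then 1 else 0) := by
  classical
  rw [load_eq G (Function.update a i s) i e, Function.update_self]
  congr 2
  apply Finset.filter_congr
  intro j hj
  rw [Function.update_of_ne (Finset.ne_of_mem_erase hj)]

lemma icc_sum_diff (f : ℕ → ℝ) (m : ℕ) (b c : Prop) [Decidable b] [Decidable c] :
    (∑ k ∈ Finset.Icc 1 (m + if c then 1 else 0), f k)
      - (∑ k ∈ Finset.Icc 1 (m + if b then 1 else 0), f k)
    = (if c then f (m + if c then 1 else 0) else 0)
      - (if b then f (m + if b then 1 else 0) else 0) := by
  have h := Finset.sum_Icc_succ_top (Nat.succ_le_succ (Nat.zero_le m)) f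
  by_cases hb : b <;> by_cases hc : c <;> simp [hb, hc, h]

lemma potential_update (a : G.Assign) (i : Fin G.n) (s : Finset (Fin G.R)) :
    G.potential (Function.update a i s) - G.potential a
      = G.userCost i (Function.update a i s) - G.userCost i a := by
  classical
  unfold CGame.potential CGame.userCost
  rw [Function.update_self, ← Finset.sum_sub_distrib]
  have key : ∀ e : Fin G.R,
      (∑ k ∈ Finset.Icc 1 (G.load (Function.update a i s) e), (G.cost e k + G.tax e k))
      - (∑ k ∈ Finset.Icc 1 (G.load a e), (G.cost e k + G.tax e k))
      = (if e ∈ s then (G.cost e (G.load (Function.update a i s) e)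
            + G.tax e (G.load (Function.update a i s) e)) else 0)
        - (if e ∈ a i then (G.cost e (G.load a e) + G.tax e (G.load a e)) else 0) := by
    intro e
    rw [load_update_eq G a i s e, load_eq G a i e]
    exact icc_sum_diff (fun k => G.cost e k + G.tax e k) _ _ _
  rw [Finset.sum_congr rfl fun e _ => key e, Finset.sum_sub_distrib]
  congr 1 <;> · rw [Finset.sum_ite_mem]; simp

end

/-- If a set `𝒢` of congestion games with incentives, each with
at most `n` users and positive minimum cost, satisfies the generalized
smoothness condition with parameters `ζ > 0`, `λ > 0`, `μ < 1`, then the price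
of stability of `𝒢` is at most `λ/(1−μ)`. -/
theorem smoothness_PoS_bound (n : ℕ) (𝒢 : Set CGame)
    (h𝒢 : ∀ G ∈ 𝒢, G.n ≤ n ∧ 0 < G.MinCost)
    (zeta lam mu : ℝ) (hzeta : 0 < zeta) (hlam : 0 < lam) (hmu : mu < 1)
    (hsmooth : ∀ G ∈ 𝒢, ∀ a a' : G.Assign, G.IsAssign a → G.IsAssign a' →
      G.SC a + (∑ i, (G.userCost i (Function.update a i (a' i)) - G.userCost i a))
          + zeta * (G.potential a' - G.potential a)
        ≤ lam * G.SC a' + mu * G.SC a) :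
    (⨆ G : CGame, ⨆ _ : G ∈ 𝒢,
        ⨅ a : {a : G.Assign // G.IsNE a}, ENNReal.ofReal (G.SC a.1 / G.MinCost))
      ≤ ENNReal.ofReal (lam / (1 - mu)) := by
  classical
  refine iSup_le fun G => iSup_le fun hG => ?_
  obtain ⟨-, hMin⟩ := h𝒢 G hG
  -- a feasible assignment exists
  choose a0 ha0 using G.act_ne
  -- the finite set of feasible assignments
  set S : Finset G.Assign := Finset.univ.filter (fun a => G.IsAssign a) with hS
  have ha0S : a0 ∈ S := by simp only [hS, Finset.mem_filter, Finset.mem_univ, true_and]; exact ha0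
  obtain ⟨a, haS, hamin⟩ := S.exists_min_image G.potential ⟨a0, ha0S⟩
  have ha : G.IsAssign a := (Finset.mem_filter.mp haS).2
  -- updates of feasible assignments are feasible
  have hupd : ∀ (i : Fin G.n) (s : Finset (Fin G.R)), s ∈ G.act i →
      G.IsAssign (Function.update a i s) := by
    intro i s hs j
    rcases eq_or_ne j i with rfl | hj
    · rw [Function.update_self]; exact hs
    · rw [Function.update_of_ne hj]; exact ha j
  -- a is a Nash equilibrium
  have hNE : G.IsNE a := by
    refine ⟨ha, fun i s hs => ?_⟩
    have h1 : G.potential a ≤ G.potential (Function.update a i s) := by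
      refine hamin _ ?_
      simp only [hS, Finset.mem_filter, Finset.mem_univ, true_and]
      exact hupd i s hs
    have h2 := potential_update G a i s
    linarith
  -- an optimal assignment exists
  have hTfin : {c | ∃ b, G.IsAssign b ∧ G.SC b = c}.Finite := by
    have : {c | ∃ b, G.IsAssign b ∧ G.SC b = c} = G.SC '' {b | G.IsAssign b} := by
      ext c; simp [Set.mem_image, eq_comm]
    rw [this]
    exact (Set.toFinite _).image _
  have hTne : {c | ∃ b, G.IsAssign b ∧ G.SC b = c}.Nonempty := ⟨G.SC a0, a0, ha0, rfl⟩
  obtain ⟨astar, hastar, hSCstar⟩ : ∃ b, G.IsAssign b ∧ G.SC b = G.MinCost :=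
    hTne.csInf_mem hTfin
  -- apply smoothness at (a, astar)
  have hsm := hsmooth G hG a astar ha hastar
  have hsum : 0 ≤ ∑ i, (G.userCost i (Function.update a i (astar i)) - G.userCost i a) := by
    refine Finset.sum_nonneg fun i _ => ?_
    have := hNE.2 i (astar i) (hastar i)
    linarith
  have hpot : 0 ≤ G.potential astar - G.potential a := by
    have : G.potential a ≤ G.potential astar := by
      refine hamin _ ?_
      simp only [hS, Finset.mem_filter, Finset.mem_univ, true_and]
      exact hastar
    linarith
  have hkey : (1 - mu) * G.SC a ≤ lam * G.MinCost := by nlinarith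
  have hdiv : G.SC a / G.MinCost ≤ lam / (1 - mu) := by
    rw [div_le_div_iff₀ hMin (by linarith)]
    nlinarith
  exact iInf_le_of_le ⟨a, hNE⟩ (ENNReal.ofReal_le_ofReal hdiv)
end
end

section
/- Let G be a congestion game with incentives and at most n users, and suppose there exist ζ > 0, λ > 0 and μ < 1 such that for every pair of assignments a, a' ∈ A: SC(a) + Σ_{i=1}^n [C_i(a'_i, a_{−i}) − C_i(a)] + ζ[Φ(a') − Φ(a)] ≤ λ SC(a') + μ SC(a). Then for every optimal assignment a* (i.e. SC(a*) = MinCost(G)) and every pure Nash equilibrium ā with Φ(ā) ≤ Φ(a*), it holds that SC(ā) ≤ (λ/(1−μ)) · SC(a*). -/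
open scoped BigOperators ENNReal

noncomputable section

/-- If a congestion game with incentives and at most `n` users
satisfies the generalized smoothness condition with parameters `ζ > 0`,
`λ > 0`, `μ < 1`, then for every optimal assignment `a*` and every pure Nash
equilibrium `ā` with `Φ(ā) ≤ Φ(a*)`, we have `SC(ā) ≤ (λ/(1−μ))·SC(a*)`. -/
theorem smoothness_single_game (n : ℕ) (G : CGame) (hGn : G.n ≤ n)
    (zeta lam mu : ℝ) (hzeta : 0 < zeta) (hlam : 0 < lam) (hmu : mu < 1)
    (hsmooth : ∀ a a' : G.Assign, G.IsAssign a → G.IsAssign a' →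
      G.SC a + (∑ i, (G.userCost i (Function.update a i (a' i)) - G.userCost i a))
          + zeta * (G.potential a' - G.potential a)
        ≤ lam * G.SC a' + mu * G.SC a) :
    ∀ astar : G.Assign, G.IsAssign astar → G.SC astar = G.MinCost →
      ∀ abar : G.Assign, G.IsNE abar → G.potential abar ≤ G.potential astar →
        G.SC abar ≤ (lam / (1 - mu)) * G.SC astar := by
  intro astar hstar _ abar hNE hpot
  have h := hsmooth abar astar hNE.1 hstar
  have hsum : 0 ≤ ∑ i, (G.userCost i (Function.update abar i (astar i)) - G.userCost i abar) := by
    apply Finset.sum_nonneg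
    intro i _
    have := hNE.2 i (astar i) (hstar i)
    linarith
  have hzp : 0 ≤ zeta * (G.potential astar - G.potential abar) := by
    apply mul_nonneg hzeta.le; linarith
  have key : (1 - mu) * G.SC abar ≤ lam * G.SC astar := by nlinarith
  have h1 : 0 < 1 - mu := by linarith
  rw [div_mul_eq_mul_div, le_div_iff₀ h1, mul_comm]
  exact key
end
end

section
/- Consider the set 𝒢 of congestion games with at most n users and resource cost functions in 𝓛 for convex, nondecreasing basis functions b_1,…,b_m. For every local incentive mechanism T, the linear local mechanism T' defined by T'(Σ_{j=1}^m α_j b_j) = Σ_{j=1}^m α_j T(b_j) satisfies PoA(T') ≤ PoA(T) and PoS(T') ≤ PoS(T). Consequently, any mechanism that is Pareto optimal with respect to the pair (PoA, PoS) within the set of linear local mechanisms is Pareto optimal over all local mechanisms. -/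
open scoped BigOperators ENNReal

noncomputable section

/-- A (local) incentive mechanism: a map from resource cost functions to
incentive functions. -/
abbrev Mech : Type := (ℕ → ℝ) → (ℕ → ℝ)

/-- Membership of a game in the class `𝒢` of congestion games with at most `n`
users, resource cost functions that are nonnegative linear combinations of the
basis functions `b`, and incentives generated by the mechanism `T`. -/
def InClass (n m : ℕ) (b : Fin m → ℕ → ℝ) (T : Mech) (G : CGame) : Prop :=
  G.n ≤ n ∧
  (∀ e, ∃ α : Fin m → ℝ, (∀ j, 0 ≤ α j) ∧ ∀ x, G.cost e x = ∑ j, α j * b j x) ∧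
  (∀ e x, G.tax e x = T (G.cost e) x)

/-- Price of anarchy of mechanism `T` over the class of congestion games with
at most `n` users and costs generated by the basis `b`. -/
def PoA (n m : ℕ) (b : Fin m → ℕ → ℝ) (T : Mech) : ℝ≥0∞ :=
  ⨆ G : CGame, ⨆ _ : InClass n m b T G ∧ 0 < G.MinCost,
    ⨆ a : G.Assign, ⨆ _ : G.IsNE a, ENNReal.ofReal (G.SC a / G.MinCost)

/-- Price of stability of mechanism `T` over the class of congestion games with
at most `n` users and costs generated by the basis `b`. -/
def PoS (n m : ℕ) (b : Fin m → ℕ → ℝ) (T : Mech) : ℝ≥0∞ :=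
  ⨆ G : CGame, ⨆ _ : InClass n m b T G ∧ 0 < G.MinCost,
    ⨅ a : {a : G.Assign // G.IsNE a}, ENNReal.ofReal (G.SC a.1 / G.MinCost)

/-- The marginal cost mechanism `T^mc(ℓ)(x) = (x−1)·[ℓ(x) − ℓ(x−1)]`. -/
def Tmc : Mech := fun ℓ x => ((x : ℝ) - 1) * (ℓ x - ℓ (x - 1))

/-- A mechanism is linear (w.r.t. the basis `b`) if
`T(Σ_j α_j b_j) = Σ_j α_j T(b_j)` for all nonnegative coefficients. -/
def IsLinear (m : ℕ) (b : Fin m → ℕ → ℝ) (T : Mech) : Prop :=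
  ∀ α : Fin m → ℝ, (∀ j, 0 ≤ α j) →
    ∀ x, T (fun y => ∑ j, α j * b j y) x = ∑ j, α j * T (b j) x

/-- `T` (strictly Pareto-) dominates `T'` with respect to `(PoA, PoS)`. -/
def Dominates (n m : ℕ) (b : Fin m → ℕ → ℝ) (T T' : Mech) : Prop :=
  PoA n m b T ≤ PoA n m b T' ∧ PoS n m b T ≤ PoS n m b T' ∧
    (PoA n m b T < PoA n m b T' ∨ PoS n m b T < PoS n m b T')

-- ========================= auxiliary development =========================

open Finset Filter
open scoped Classical

namespace PF

variable (G : CGame)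

lemma load_le_n (a : G.Assign) (e : Fin G.R) : G.load a e ≤ G.n := by
  classical
  calc G.load a e ≤ (Finset.univ : Finset (Fin G.n)).card := Finset.card_filter_le _ _
    _ = G.n := by simp

lemma one_le_load {a : G.Assign} {i : Fin G.n} {e : Fin G.R} (h : e ∈ a i) :
    1 ≤ G.load a e := by
  classical
  have : i ∈ Finset.univ.filter fun i' => e ∈ a i' := by simp [h]
  exact Finset.card_pos.mpr ⟨i, this⟩

lemma exists_assign : ∃ a : G.Assign, G.IsAssign a :=
  ⟨fun i => (G.act_ne i).choose, fun i => (G.act_ne i).choose_spec⟩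

/-- the finset of feasible assignments -/
def feas : Finset G.Assign := Finset.univ.filter fun a => G.IsAssign a

lemma mem_feas {a : G.Assign} : a ∈ feas G ↔ G.IsAssign a := by
  simp only [feas, Finset.mem_filter, Finset.mem_univ, true_and]

lemma feas_nonempty : (feas G).Nonempty := by
  obtain ⟨a, ha⟩ := exists_assign G
  exact ⟨a, (mem_feas G).mpr ha⟩

lemma minCost_set_eq :
    {c | ∃ a, G.IsAssign a ∧ G.SC a = c} = ↑((feas G).image G.SC) := by
  ext c
  constructor
  · rintro ⟨a, ha, rfl⟩
    simp only [Finset.coe_image, Set.mem_image, Finset.mem_coe]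
    exact ⟨a, (mem_feas G).mpr ha, rfl⟩
  · intro hc
    simp only [Finset.coe_image, Set.mem_image, Finset.mem_coe] at hc
    obtain ⟨a, ha, rfl⟩ := hc
    exact ⟨a, (mem_feas G).mp ha, rfl⟩

lemma minCost_le {a : G.Assign} (h : G.IsAssign a) : G.MinCost ≤ G.SC a := by
  rw [CGame.MinCost, minCost_set_eq]
  exact csInf_le (Finset.bddBelow _)
    (by simp only [Finset.coe_image, Set.mem_image, Finset.mem_coe];
        exact ⟨a, (mem_feas G).mpr h, rfl⟩)

lemma exists_minCost : ∃ a, G.IsAssign a ∧ G.SC a = G.MinCost := by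
  have hne : ({c | ∃ a, G.IsAssign a ∧ G.SC a = c}).Nonempty := by
    obtain ⟨a, ha⟩ := exists_assign G
    exact ⟨G.SC a, a, ha, rfl⟩
  have hfin : ({c | ∃ a, G.IsAssign a ∧ G.SC a = c}).Finite := by
    rw [minCost_set_eq]; exact ((feas G).image G.SC).finite_toSet
  have := hne.csInf_mem hfin
  exact this

/-- balance of loads under update -/
lemma load_update_bal (a : G.Assign) (i : Fin G.n) (s : Finset (Fin G.R)) (e : Fin G.R) :
    G.load (Function.update a i s) e + (if e ∈ a i then 1 else 0)
      = G.load a e + (if e ∈ s then 1 else 0) := by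
  classical
  have key : ∀ (t : Finset (Fin G.R)),
      (Finset.univ.filter fun i' => e ∈ Function.update a i t i').card
        = (if e ∈ t then 1 else 0) + (Finset.univ.erase i |>.filter fun i' => e ∈ a i').card := by
    intro t
    rw [Finset.card_filter]
    rw [Finset.sum_eq_add_sum_sdiff_singleton_of_mem (Finset.mem_univ i)
      (fun i' => if e ∈ Function.update a i t i' then 1 else 0)]
    congr 1
    · simp
    · rw [Finset.card_filter]
      rw [show Finset.univ \ {i} = Finset.univ.erase i by ext x; simp [Finset.mem_erase, and_comm]]
      apply Finset.sum_congr rfl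
      intro x hx
      have hxi : x ≠ i := (Finset.mem_erase.mp hx).1
      rw [Function.update_of_ne hxi]
  have h1 := key s
  have h2 : G.load a e = (if e ∈ a i then 1 else 0)
      + (Finset.univ.erase i |>.filter fun i' => e ∈ a i').card := by
    have := key (a i)
    rw [show Function.update a i (a i) = a from Function.update_eq_self i a] at this
    exact this
  rw [CGame.load, h1, h2]
  ring

lemma potential_update (a : G.Assign) (i : Fin G.n) (s : Finset (Fin G.R)) :
    G.potential (Function.update a i s) - G.potential a
      = G.userCost i (Function.update a i s) - G.userCost i a := by
  classical
  set a' := Function.update a i s with ha'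
  have hai' : a' i = s := Function.update_self i s a
  set f : Fin G.R → ℕ → ℝ := fun e k => G.cost e k + G.tax e k with hf
  have per_e : ∀ e : Fin G.R,
      (∑ k ∈ Finset.Icc 1 (G.load a' e), f e k) - (∑ k ∈ Finset.Icc 1 (G.load a e), f e k)
        = (if e ∈ s then f e (G.load a' e) else 0) - (if e ∈ a i then f e (G.load a e) else 0) := by
    intro e
    have hbal := load_update_bal G a i s e
    by_cases h1 : e ∈ s <;> by_cases h2 : e ∈ a i <;> simp [h1, h2] at hbal ⊢
    · -- both: loads equal
      rw [hbal]; ring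
    · -- e ∈ s, e ∉ a i : load a' = load a + 1
      rw [hbal, Finset.sum_Icc_succ_top (Nat.succ_le_succ (Nat.zero_le _))]
      ring
    · -- e ∉ s, e ∈ a i : load a = load a' + 1
      rw [← hbal, Finset.sum_Icc_succ_top (Nat.succ_le_succ (Nat.zero_le _))]
      ring
    · rw [hbal]; ring
  have sum_ite : ∀ (t : Finset (Fin G.R)) (g : Fin G.R → ℝ),
      (∑ e, (if e ∈ t then g e else 0)) = ∑ e ∈ t, g e := by
    intro t g
    rw [Finset.sum_ite_mem Finset.univ t g, Finset.univ_inter]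
  have huc' : G.userCost i a' = ∑ e, (if e ∈ s then f e (G.load a' e) else 0) := by
    rw [CGame.userCost, hai', sum_ite s (fun e => f e (G.load a' e))]
  have huc : G.userCost i a = ∑ e, (if e ∈ a i then f e (G.load a e) else 0) := by
    rw [CGame.userCost, sum_ite (a i) (fun e => f e (G.load a e))]
  rw [CGame.potential, CGame.potential, ← Finset.sum_sub_distrib]
  rw [huc', huc, ← Finset.sum_sub_distrib]
  exact Finset.sum_congr rfl fun e _ => per_e e

lemma exists_NE : ∃ a, G.IsNE a := by
  classical
  obtain ⟨a, ha, hmin⟩ := Finset.exists_min_image (feas G) G.potential (feas_nonempty G)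
  refine ⟨a, (mem_feas G).mp ha, ?_⟩
  intro i s hs
  have hfeas' : Function.update a i s ∈ feas G := by
    rw [mem_feas]
    intro i'
    by_cases h : i' = i
    · subst h; simpa using hs
    · rw [Function.update_of_ne h]; exact (mem_feas G).mp ha i'
  have := hmin _ hfeas'
  have hpd := potential_update G a i s
  linarith

end PF

section Chunk2

open Finset Filter
open scoped Classical

namespace PF

variable {m : ℕ} (b : Fin m → ℕ → ℝ) (T : Mech)

/-- combined per-unit cost-plus-tax of basis `j` -/
def vf (j : Fin m) (k : ℕ) : ℝ := b j k + T (b j) k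

/-- the game with coefficients `w` whose taxes are the linearized ones -/
def mkG (K R : ℕ) (act : Fin K → Finset (Finset (Fin R))) (hne : ∀ i, (act i).Nonempty)
    (w : Fin R → Fin m → ℝ) : CGame :=
  ⟨K, R, act, hne, fun e x => ∑ j, w e j * b j x, fun e x => ∑ j, w e j * T (b j) x⟩

variable {K R : ℕ} {act : Fin K → Finset (Finset (Fin R))} {hne : ∀ i, (act i).Nonempty}

lemma mkG_load (w : Fin R → Fin m → ℝ) (a : Fin K → Finset (Fin R)) (e : Fin R) :
    (mkG b T K R act hne w).load a e = (Finset.univ.filter fun i => e ∈ a i).card := rfl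

lemma mkG_SC (w : Fin R → Fin m → ℝ) (a : Fin K → Finset (Fin R)) :
    (mkG b T K R act hne w).SC a
      = ∑ i, ∑ e ∈ a i, ∑ j, w e j * b j ((mkG b T K R act hne w).load a e) := rfl

lemma mkG_userCost (w : Fin R → Fin m → ℝ) (i : Fin K) (a : Fin K → Finset (Fin R)) :
    (mkG b T K R act hne w).userCost i a
      = ∑ e ∈ a i, ∑ j, w e j * vf b T j ((mkG b T K R act hne w).load a e) := by
  unfold CGame.userCost
  apply Finset.sum_congr rfl
  intro e _
  show (∑ j, w e j * b j _) + (∑ j, w e j * T (b j) _) = _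
  rw [← Finset.sum_add_distrib]
  apply Finset.sum_congr rfl
  intro j _
  rw [vf]; ring

lemma exists_mkG {n : ℕ} {T' : Mech}
    (hT' : ∀ α : Fin m → ℝ, (∀ j, 0 ≤ α j) →
      ∀ x, T' (fun y => ∑ j, α j * b j y) x = ∑ j, α j * T (b j) x)
    (G : CGame) (hG : InClass n m b T' G) :
    ∃ w : Fin G.R → Fin m → ℝ, (∀ e j, 0 ≤ w e j) ∧
      G = mkG b T G.n G.R G.act G.act_ne w := by
  choose w hw0 hwc using hG.2.1
  refine ⟨w, hw0, ?_⟩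
  have hcost : G.cost = fun e x => ∑ j, w e j * b j x := by
    funext e x; exact hwc e x
  have htax : G.tax = fun e x => ∑ j, w e j * T (b j) x := by
    funext e x
    rw [hG.2.2 e x]
    have : G.cost e = fun y => ∑ j, w e j * b j y := by funext y; exact hwc e y
    rw [this, hT' (w e) (hw0 e) x]
  obtain ⟨K, R, act, hnea, cost, tax⟩ := G
  simp only at hcost htax
  exact congrArg₂ (CGame.mk K R act hnea) hcost htax

section Rep

variable (c : Fin R → Fin m → ℕ)

/-- capacity bound -/
def Qb : ℕ := (∑ e, ∑ j, c e j) + 1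

lemma c_lt_Qb (e : Fin R) (j : Fin m) : c e j < Qb c := by
  have h1 : c e j ≤ ∑ j', c e j' := Finset.single_le_sum (fun _ _ => Nat.zero_le _) (mem_univ j)
  have h2 : (∑ j', c e j') ≤ ∑ e', ∑ j', c e' j' :=
    Finset.single_le_sum (f := fun e' => ∑ j', c e' j') (fun _ _ => Nat.zero_le _) (mem_univ e)
  exact Nat.lt_succ_of_le (h1.trans h2)

/-- resource encoding -/
def EE : (Fin R × (Fin m × Fin (Qb c))) ≃ Fin (R * (m * Qb c)) :=
  (Equiv.prodCongr (Equiv.refl _) finProdFinEquiv).trans finProdFinEquiv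

def dec (x : Fin (R * (m * Qb c))) : Fin R × (Fin m × Fin (Qb c)) := (EE c).symm x

def ψ (s : Finset (Fin R)) : Finset (Fin (R * (m * Qb c))) :=
  Finset.univ.filter fun x => (dec c x).1 ∈ s ∧ ((dec c x).2.2 : ℕ) < c (dec c x).1 (dec c x).2.1

lemma card_filter_fin_lt {Q k : ℕ} (h : k ≤ Q) :
    ((Finset.univ : Finset (Fin Q)).filter (fun t : Fin Q => (t : ℕ) < k)).card = k := by
  have h1 : ((Finset.univ : Finset (Fin Q)).filter (fun t : Fin Q => (t : ℕ) < k)).card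
      = (((Finset.univ : Finset (Fin Q)).map Fin.valEmbedding).filter (fun t : ℕ => t < k)).card := by
    rw [Finset.filter_map, Finset.card_map]; rfl
  rw [h1, Fin.map_valEmbedding_univ]
  have h2 : (Finset.Iio Q).filter (fun t => t < k) = Finset.Iio k := by
    ext x; simp only [Finset.mem_filter, Finset.mem_Iio]; omega
  rw [h2, Nat.card_Iio]

lemma sum_psi (s : Finset (Fin R)) (F : Fin R → Fin m → ℝ) :
    (∑ x ∈ ψ c s, F (dec c x).1 (dec c x).2.1) = ∑ e ∈ s, ∑ j, (c e j : ℝ) * F e j := by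
  classical
  rw [ψ, Finset.sum_filter]
  rw [← Equiv.sum_comp (EE c)
    (fun x => if (dec c x).1 ∈ s ∧ ((dec c x).2.2 : ℕ) < c (dec c x).1 (dec c x).2.1
      then F (dec c x).1 (dec c x).2.1 else 0)]
  have hsimp : ∀ y : Fin R × (Fin m × Fin (Qb c)), dec c (EE c y) = y := by
    intro y; rw [dec, Equiv.symm_apply_apply]
  simp only [hsimp]
  rw [Fintype.sum_prod_type]
  have inner : ∀ e : Fin R,
      (∑ y : Fin m × Fin (Qb c), if e ∈ s ∧ (y.2 : ℕ) < c e y.1 then F e y.1 else 0)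
        = if e ∈ s then ∑ j, (c e j : ℝ) * F e j else 0 := by
    intro e
    by_cases he : e ∈ s
    · simp only [he, true_and, if_true]
      rw [Fintype.sum_prod_type]
      apply Finset.sum_congr rfl
      intro j _
      have hkey : (∑ t : Fin (Qb c), if (t : ℕ) < c e j then F e j else 0)
          = (c e j : ℝ) * F e j := by
        rw [← Finset.sum_filter, Finset.sum_const,
          card_filter_fin_lt (le_of_lt (c_lt_Qb c e j)), nsmul_eq_mul]
      simpa using hkey
    · simp [he]
  rw [Finset.sum_congr rfl (fun e _ => inner e)]
  rw [Finset.sum_ite_mem, Finset.univ_inter]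

/-- the replicated game, lying in the class of `T` -/
def Rep : CGame :=
  ⟨K, R * (m * Qb c), fun i => (act i).image (ψ c),
    fun i => (hne i).image _,
    fun x => b ((dec c x).2.1), fun x => T (b ((dec c x).2.1))⟩

def Ψ (a : Fin K → Finset (Fin R)) : Fin K → Finset (Fin (R * (m * Qb c))) :=
  fun i => ψ c (a i)

lemma load_Rep (a : Fin K → Finset (Fin R)) (x : Fin (R * (m * Qb c)))
    (hx : ((dec c x).2.2 : ℕ) < c (dec c x).1 (dec c x).2.1) :
    (Rep b T (hne := hne) c).load (Ψ c a) x
      = (Finset.univ.filter fun i => (dec c x).1 ∈ a i).card := by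
  unfold CGame.load
  congr 1
  ext i
  have mf : ∀ {α : Type} (p : α → Prop) (inst : DecidablePred p) (t : Finset α) (y : α),
      y ∈ @Finset.filter α p inst t ↔ y ∈ t ∧ p y := fun p inst t y => @Finset.mem_filter _ p inst t y
  exact ⟨fun h => (mf _ _ _ _).mpr ⟨Finset.mem_univ _, (((mf _ _ _ _).mp ((mf _ _ _ _).mp h).2).2).1⟩,
    fun h => (mf _ _ _ _).mpr ⟨Finset.mem_univ _, (mf _ _ _ _).mpr ⟨Finset.mem_univ _, ((mf _ _ _ _).mp h).2, hx⟩⟩⟩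

lemma update_Rep (a : Fin K → Finset (Fin R)) (i : Fin K) (s : Finset (Fin R)) :
    Ψ c (Function.update a i s) = Function.update (Ψ c a) i (ψ c s) := by
  funext i'
  by_cases h : i' = i
  · subst h; simp [Ψ]
  · simp [Ψ, Function.update_of_ne h]

lemma SC_Rep (a : Fin K → Finset (Fin R)) :
    (Rep b T (hne := hne) c).SC (Ψ c a)
      = (mkG b T K R act hne (fun e j => (c e j : ℝ))).SC a := by
  unfold CGame.SC
  apply Finset.sum_congr rfl
  intro i _
  have step : ∀ x ∈ ψ c (a i),
      (Rep b T (hne := hne) c).cost x ((Rep b T (hne := hne) c).load (Ψ c a) x)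
        = b (dec c x).2.1 ((Finset.univ.filter fun i' => (dec c x).1 ∈ a i').card) := by
    intro x hx
    have hx' := (Finset.mem_filter.mp hx).2
    rw [show (Rep b T (hne := hne) c).cost x = b ((dec c x).2.1) from rfl]
    rw [load_Rep b T c a x hx'.2]
  calc (∑ x ∈ (Ψ c a) i, (Rep b T (hne := hne) c).cost x ((Rep b T (hne := hne) c).load (Ψ c a) x))
      = ∑ x ∈ ψ c (a i), b (dec c x).2.1 ((Finset.univ.filter fun i' => (dec c x).1 ∈ a i').card) :=
        Finset.sum_congr rfl step
    _ = ∑ e ∈ a i, ∑ j, (c e j : ℝ) * b j ((Finset.univ.filter fun i' => e ∈ a i').card) :=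
        sum_psi c (a i) (fun e j => b j ((Finset.univ.filter fun i' => e ∈ a i').card))
    _ = _ := rfl

lemma userCost_Rep (i : Fin K) (a : Fin K → Finset (Fin R)) :
    (Rep b T (hne := hne) c).userCost i (Ψ c a)
      = (mkG b T K R act hne (fun e j => (c e j : ℝ))).userCost i a := by
  rw [mkG_userCost]
  unfold CGame.userCost
  have step : ∀ x ∈ ψ c (a i),
      ((Rep b T (hne := hne) c).cost x ((Rep b T (hne := hne) c).load (Ψ c a) x)
        + (Rep b T (hne := hne) c).tax x ((Rep b T (hne := hne) c).load (Ψ c a) x))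
        = vf b T (dec c x).2.1 ((Finset.univ.filter fun i' => (dec c x).1 ∈ a i').card) := by
    intro x hx
    have hx' := (Finset.mem_filter.mp hx).2
    rw [show (Rep b T (hne := hne) c).cost x = b ((dec c x).2.1) from rfl,
        show (Rep b T (hne := hne) c).tax x = T (b ((dec c x).2.1)) from rfl,
        load_Rep b T c a x hx'.2]
    rfl
  calc (∑ x ∈ (Ψ c a) i, ((Rep b T (hne := hne) c).cost x ((Rep b T (hne := hne) c).load (Ψ c a) x)
          + (Rep b T (hne := hne) c).tax x ((Rep b T (hne := hne) c).load (Ψ c a) x)))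
      = ∑ x ∈ ψ c (a i), vf b T (dec c x).2.1 ((Finset.univ.filter fun i' => (dec c x).1 ∈ a i').card) :=
        Finset.sum_congr rfl step
    _ = ∑ e ∈ a i, ∑ j, (c e j : ℝ) * vf b T j ((Finset.univ.filter fun i' => e ∈ a i').card) :=
        sum_psi c (a i) (fun e j => vf b T j ((Finset.univ.filter fun i' => e ∈ a i').card))
    _ = _ := rfl

lemma isAssign_Rep_iff (ah : Fin K → Finset (Fin (R * (m * Qb c)))) :
    (Rep b T (hne := hne) c).IsAssign ah ↔ ∃ a, (∀ i, a i ∈ act i) ∧ ah = Ψ c a := by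
  constructor
  · intro h
    choose s hs hψ using fun i => Finset.mem_image.mp (h i)
    exact ⟨s, hs, by funext i; exact (hψ i).symm⟩
  · rintro ⟨a, ha, rfl⟩
    intro i
    exact Finset.mem_image.mpr ⟨a i, ha i, rfl⟩

lemma NE_Rep_iff (a : Fin K → Finset (Fin R)) (ha : ∀ i, a i ∈ act i) :
    (Rep b T (hne := hne) c).IsNE (Ψ c a)
      ↔ (mkG b T K R act hne (fun e j => (c e j : ℝ))).IsNE a := by
  unfold CGame.IsNE
  constructor
  · rintro ⟨-, hdev⟩
    refine ⟨ha, ?_⟩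
    intro i s hs
    have := hdev i (ψ c s) (Finset.mem_image.mpr ⟨s, hs, rfl⟩)
    erw [userCost_Rep b T c i a, ← update_Rep, userCost_Rep b T c i] at this
    exact this
  · rintro ⟨-, hdev⟩
    refine ⟨(isAssign_Rep_iff b T c _).mpr ⟨a, ha, rfl⟩, ?_⟩
    intro i sh hsh
    obtain ⟨s, hs, rfl⟩ := Finset.mem_image.mp hsh
    erw [userCost_Rep b T c i a, ← update_Rep, userCost_Rep b T c i]
    exact hdev i s hs

lemma minCost_Rep :
    (Rep b T (hne := hne) c).MinCost
      = (mkG b T K R act hne (fun e j => (c e j : ℝ))).MinCost := by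
  unfold CGame.MinCost
  congr 1
  ext v
  simp only [Set.mem_setOf_eq]
  constructor
  · rintro ⟨ah, hah, rfl⟩
    obtain ⟨a, ha, rfl⟩ := (isAssign_Rep_iff b T c ah).mp hah
    exact ⟨a, ha, (SC_Rep b T c a).symm⟩
  · rintro ⟨a, ha, rfl⟩
    exact ⟨Ψ c a, (isAssign_Rep_iff b T c _).mpr ⟨a, ha, rfl⟩, SC_Rep b T c a⟩

lemma inClass_Rep {n : ℕ} (hK : K ≤ n) : InClass n m b T (Rep b T (hne := hne) c) := by
  refine ⟨hK, ?_, ?_⟩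
  · intro x
    refine ⟨fun j => if j = (dec c x).2.1 then 1 else 0, fun j => by positivity, ?_⟩
    intro x'
    rw [show (Rep b T (hne := hne) c).cost x x' = b ((dec c x).2.1) x' from rfl]
    rw [Finset.sum_congr rfl (fun j _ => by
      rw [ite_mul, one_mul, zero_mul])]
    rw [Finset.sum_ite_eq' Finset.univ ((dec c x).2.1) (fun j => b j x')]
    simp
  · intro x x'
    rfl

end Rep

end PF
end Chunk2

section Chunk3

open Finset Filter
open scoped Classical

namespace PF

/-! Strictification: all declarations take explicit parameters. -/

section Strict

variable {m K R : ℕ}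

/-- the original (real-coefficient) game -/
def GG (b : Fin m → ℕ → ℝ) (T : Mech) (act : Fin K → Finset (Finset (Fin R)))
    (hne : ∀ i, (act i).Nonempty) (w : Fin R → Fin m → ℝ) : CGame :=
  mkG b T K R act hne w

def embb (K : ℕ) {R : ℕ} : Fin R ↪ Fin (R + K) :=
  ⟨Fin.castAdd K, Fin.castAdd_injective R K⟩

def starr (R : ℕ) {K : ℕ} : Fin K ↪ Fin (R + K) :=
  ⟨Fin.natAdd R, fun a a' h => by
    have : R + (a : ℕ) = R + (a' : ℕ) := congrArg Fin.val h
    exact Fin.ext (by omega)⟩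

lemma embb_ne_starr (e : Fin R) (i : Fin K) : embb K e ≠ starr R i := by
  intro h
  have h1 : ((embb K e : Fin (R + K)) : ℕ) = ((starr R i : Fin (R + K)) : ℕ) := congrArg Fin.val h
  have h2 : ((embb K e : Fin (R + K)) : ℕ) = (e : ℕ) := rfl
  have h3 : ((starr R i : Fin (R + K)) : ℕ) = R + (i : ℕ) := rfl
  have := e.2
  omega

/-- carriers-with-own-membership set for resource `star i'` in action of player `i` -/
def Mset (p : Fin K → Finset (Fin R) → Prop) (S : Fin K → Finset (Fin K))
    (i : Fin K) (s : Finset (Fin R)) : Finset (Fin K) :=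
  Finset.univ.filter fun i' => i ∈ S i' ∨ (i' = i ∧ p i s)

/-- strictified action -/
def φm (p : Fin K → Finset (Fin R) → Prop) (S : Fin K → Finset (Fin K))
    (i : Fin K) (s : Finset (Fin R)) : Finset (Fin (R + K)) :=
  s.map (embb K) ∪ (Mset p S i s).map (starr R)

def act' (act : Fin K → Finset (Finset (Fin R))) (p : Fin K → Finset (Fin R) → Prop)
    (S : Fin K → Finset (Fin K)) : Fin K → Finset (Finset (Fin (R + K))) :=
  fun i => (act i).image (φm p S i)

lemma act'_ne (act : Fin K → Finset (Finset (Fin R))) (hne : ∀ i, (act i).Nonempty)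
    (p : Fin K → Finset (Fin R) → Prop) (S : Fin K → Finset (Fin K)) :
    ∀ i, (act' act p S i).Nonempty := fun i => (hne i).image _

def Φm (p : Fin K → Finset (Fin R) → Prop) (S : Fin K → Finset (Fin K))
    (a : Fin K → Finset (Fin R)) : Fin K → Finset (Fin (R + K)) :=
  fun i => φm p S i (a i)

variable {p : Fin K → Finset (Fin R) → Prop} {S : Fin K → Finset (Fin K)}

lemma mem_φm_emb (i : Fin K) (s : Finset (Fin R)) (e : Fin R) :
    embb K e ∈ φm p S i s ↔ e ∈ s := by
  simp only [φm, Finset.mem_union, Finset.mem_map]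
  constructor
  · rintro (⟨e', he', heq⟩ | ⟨i', hi', heq⟩)
    · rwa [← (embb K).injective heq]
    · exact absurd heq.symm (embb_ne_starr e i')
  · intro h; exact Or.inl ⟨e, h, rfl⟩

lemma mem_φm_star (i : Fin K) (s : Finset (Fin R)) (i' : Fin K) :
    starr R i' ∈ φm p S i s ↔ (i ∈ S i' ∨ (i' = i ∧ p i s)) := by
  simp only [φm, Finset.mem_union, Finset.mem_map]
  constructor
  · rintro (⟨e', he', heq⟩ | ⟨i'', hi'', heq⟩)
    · exact absurd heq (embb_ne_starr e' i')
    · rw [← (starr R).injective heq]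
      simpa [Mset] using hi''
  · intro h
    exact Or.inr ⟨i', by simpa [Mset] using h, rfl⟩

/-- integer coefficients: ceiling of `q•w` on base resources, `cs` on stars -/
def cQ (w : Fin R → Fin m → ℝ) (cs : Fin m → ℕ) (q : ℕ) :
    Fin (R + K) → Fin m → ℕ := fun e' j =>
  Fin.addCases (fun e => ⌈(q : ℝ) * w e j⌉₊) (fun _ => cs j) e'

lemma cQ_emb (w : Fin R → Fin m → ℝ) (cs : Fin m → ℕ) (q : ℕ) (e : Fin R) (j : Fin m) :
    cQ (K := K) w cs q (embb K e) j = ⌈(q : ℝ) * w e j⌉₊ :=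
  Fin.addCases_left e

lemma cQ_star (w : Fin R → Fin m → ℝ) (cs : Fin m → ℕ) (q : ℕ) (i : Fin K) (j : Fin m) :
    cQ (K := K) w cs q (starr R i) j = cs j :=
  Fin.addCases_right i

/-- the strictified integer game -/
def HG (b : Fin m → ℕ → ℝ) (T : Mech) (act : Fin K → Finset (Finset (Fin R)))
    (hne : ∀ i, (act i).Nonempty) (w : Fin R → Fin m → ℝ)
    (p : Fin K → Finset (Fin R) → Prop) (S : Fin K → Finset (Fin K))
    (cs : Fin m → ℕ) (q : ℕ) : CGame :=
  mkG b T K (R + K) (act' act p S) (act'_ne act hne p S)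
    (fun e' j => (cQ (K := K) w cs q e' j : ℝ))

/-- plain load on the original structure -/
def ld (a : Fin K → Finset (Fin R)) (e : Fin R) : ℕ :=
  (Finset.univ.filter fun i => e ∈ a i).card

lemma ld_le (a : Fin K → Finset (Fin R)) (e : Fin R) : ld a e ≤ K := by
  calc ld a e ≤ (Finset.univ : Finset (Fin K)).card := Finset.card_filter_le _ _
    _ = K := by simp

variable {b : Fin m → ℕ → ℝ} {T : Mech} {act : Fin K → Finset (Finset (Fin R))}
  {hne : ∀ i, (act i).Nonempty} {w : Fin R → Fin m → ℝ} {cs : Fin m → ℕ} {q : ℕ}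

lemma load_GG (a : Fin K → Finset (Fin R)) (e : Fin R) :
    (GG b T act hne w).load a e = ld a e := rfl

lemma load_Φm_emb (a : Fin K → Finset (Fin R)) (e : Fin R) :
    (HG b T act hne w p S cs q).load (Φm p S a) (embb K e) = ld a e := by
  show (Finset.univ.filter fun i : Fin K => embb K e ∈ (Φm p S a) i).card
      = (Finset.univ.filter fun i : Fin K => e ∈ a i).card
  congr 1
  ext i
  simp only [Finset.mem_filter, Finset.mem_univ, true_and]
  exact mem_φm_emb i (a i) e

lemma load_Φm_star (hS1 : ∀ i, i ∉ S i) (a : Fin K → Finset (Fin R)) (i' : Fin K) :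
    (HG b T act hne w p S cs q).load (Φm p S a) (starr R i')
      = (S i').card + (if p i' (a i') then 1 else 0) := by
  have hset : (Finset.univ.filter fun i : Fin K => starr R i' ∈ (Φm p S a) i)
      = S i' ∪ (if p i' (a i') then {i'} else ∅) := by
    ext i
    simp only [Finset.mem_filter, Finset.mem_univ, true_and, Φm, mem_φm_star,
      Finset.mem_union]
    constructor
    · rintro (h | ⟨rfl, h⟩)
      · exact Or.inl h
      · exact Or.inr (by simp [h])
    · rintro (h | h)
      · exact Or.inl h
      · by_cases hp : p i' (a i')
        · simp only [hp, if_true, Finset.mem_singleton] at h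
          subst h
          exact Or.inr ⟨rfl, hp⟩
        · simp [hp] at h
  show (Finset.univ.filter fun i : Fin K => starr R i' ∈ (Φm p S a) i).card = _
  rw [hset, Finset.card_union_of_disjoint, apply_ite Finset.card]
  · simp
  · by_cases hp : p i' (a i')
    · simp only [hp, if_true]
      rw [Finset.disjoint_singleton_right]
      exact hS1 i'
    · simp [hp]

lemma sum_φm (i : Fin K) (s : Finset (Fin R)) (F : Fin (R + K) → ℝ) :
    (∑ x ∈ φm p S i s, F x)
      = (∑ e ∈ s, F (embb K e)) + ∑ i' ∈ Mset p S i s, F (starr R i') := by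
  rw [φm, Finset.sum_union, Finset.sum_map, Finset.sum_map]
  rw [Finset.disjoint_left]
  rintro x hx hx'
  obtain ⟨e, -, rfl⟩ := Finset.mem_map.mp hx
  obtain ⟨i', -, heq⟩ := Finset.mem_map.mp hx'
  exact embb_ne_starr e i' heq.symm

/-- full userCost formula for the strictified game -/
lemma userCost_HG (hS1 : ∀ i, i ∉ S i) (i : Fin K) (a : Fin K → Finset (Fin R)) :
    (HG b T act hne w p S cs q).userCost i (Φm p S a)
      = (∑ e ∈ a i, ∑ j, ((⌈(q : ℝ) * w e j⌉₊ : ℝ) * vf b T j (ld a e)))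
        + ∑ i' ∈ Mset p S i (a i), ∑ j,
            (cs j : ℝ) * vf b T j ((S i').card + (if p i' (a i') then 1 else 0)) := by
  have h0 : (HG b T act hne w p S cs q).userCost i (Φm p S a)
      = ∑ x ∈ φm p S i (a i), ∑ j, (cQ (K := K) w cs q x j : ℝ)
          * vf b T j ((HG b T act hne w p S cs q).load (Φm p S a) x) :=
    mkG_userCost b T _ i (Φm p S a)
  rw [h0]
  rw [sum_φm]
  congr 1
  · apply Finset.sum_congr rfl
    intro e _
    rw [load_Φm_emb]
    apply Finset.sum_congr rfl
    intro j _
    rw [cQ_emb]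
  · apply Finset.sum_congr rfl
    intro i' _
    rw [load_Φm_star hS1]
    apply Finset.sum_congr rfl
    intro j _
    rw [cQ_star]

end Strict

end PF
end Chunk3

section Chunk4

open Finset Filter
open scoped Classical

namespace PF

section Bounds

variable {m K R : ℕ}

/-- crude uniform bound for a family of basis-indexed functions on `[0,K]` -/
def bndC (v : Fin m → ℕ → ℝ) (K : ℕ) : ℝ := ∑ j, ∑ k ∈ Finset.range (K + 1), |v j k|

lemma bndC_nonneg (v : Fin m → ℕ → ℝ) (K : ℕ) : 0 ≤ bndC v K :=
  Finset.sum_nonneg fun j _ => Finset.sum_nonneg fun k _ => abs_nonneg _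

lemma abs_le_inner (v : Fin m → ℕ → ℝ) {K : ℕ} (j : Fin m) {k : ℕ} (hk : k ≤ K) :
    |v j k| ≤ ∑ k' ∈ Finset.range (K + 1), |v j k'| :=
  Finset.single_le_sum (f := fun k' => |v j k'|) (fun _ _ => abs_nonneg _)
    (Finset.mem_range.mpr (Nat.lt_succ_of_le hk))

lemma sum_abs_le_bndC (v : Fin m → ℕ → ℝ) {K : ℕ} {k : ℕ} (hk : k ≤ K) :
    (∑ j, |v j k|) ≤ bndC v K :=
  Finset.sum_le_sum fun j _ => abs_le_inner v j hk

/-- bound for sums weighted by ceiling errors -/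
lemma theta_sum_bound (v : Fin m → ℕ → ℝ) (w : Fin R → Fin m → ℝ)
    (hw : ∀ e j, 0 ≤ w e j) (q : ℕ) (t : Finset (Fin R)) (L : Fin R → ℕ)
    (hL : ∀ e, L e ≤ K) :
    |∑ e ∈ t, ∑ j, ((⌈(q : ℝ) * w e j⌉₊ : ℝ) - (q : ℝ) * w e j) * v j (L e)|
      ≤ R * bndC v K := by
  have habs : ∀ e ∈ t, |∑ j, ((⌈(q : ℝ) * w e j⌉₊ : ℝ) - (q : ℝ) * w e j) * v j (L e)|
      ≤ bndC v K := by
    intro e _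
    calc |∑ j, ((⌈(q : ℝ) * w e j⌉₊ : ℝ) - (q : ℝ) * w e j) * v j (L e)|
        ≤ ∑ j, |((⌈(q : ℝ) * w e j⌉₊ : ℝ) - (q : ℝ) * w e j) * v j (L e)| :=
          Finset.abs_sum_le_sum_abs _ _
      _ ≤ ∑ j, |v j (L e)| := by
          apply Finset.sum_le_sum
          intro j _
          rw [abs_mul]
          have h0 : (0 : ℝ) ≤ (q : ℝ) * w e j := mul_nonneg (Nat.cast_nonneg _) (hw e j)
          have h1 : (0 : ℝ) ≤ (⌈(q : ℝ) * w e j⌉₊ : ℝ) - (q : ℝ) * w e j :=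
            sub_nonneg.mpr (Nat.le_ceil _)
          have h2 : (⌈(q : ℝ) * w e j⌉₊ : ℝ) - (q : ℝ) * w e j ≤ 1 := by
            have := Nat.ceil_lt_add_one h0
            linarith
          have h3 : |(⌈(q : ℝ) * w e j⌉₊ : ℝ) - (q : ℝ) * w e j| ≤ 1 := by
            rw [abs_of_nonneg h1]; exact h2
          calc |(⌈(q : ℝ) * w e j⌉₊ : ℝ) - (q : ℝ) * w e j| * |v j (L e)|
              ≤ 1 * |v j (L e)| :=
                mul_le_mul_of_nonneg_right h3 (abs_nonneg _)
            _ = |v j (L e)| := one_mul _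
      _ ≤ bndC v K := sum_abs_le_bndC v (hL e)
  calc |∑ e ∈ t, ∑ j, ((⌈(q : ℝ) * w e j⌉₊ : ℝ) - (q : ℝ) * w e j) * v j (L e)|
      ≤ ∑ e ∈ t, |∑ j, ((⌈(q : ℝ) * w e j⌉₊ : ℝ) - (q : ℝ) * w e j) * v j (L e)| :=
        Finset.abs_sum_le_sum_abs _ _
    _ ≤ ∑ _e ∈ t, bndC v K := Finset.sum_le_sum habs
    _ = t.card * bndC v K := by rw [Finset.sum_const, nsmul_eq_mul]
    _ ≤ R * bndC v K := by
        apply mul_le_mul_of_nonneg_right _ (bndC_nonneg v K)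
        have := Finset.card_le_univ t
        simp only [Finset.card_univ, Fintype.card_fin] at this
        exact_mod_cast this

/-- bound for star sums with natural coefficients -/
lemma coeff_sum_bound {ι : Type*} [Fintype ι] (v : Fin m → ℕ → ℝ) (c : Fin m → ℕ)
    (M : Finset ι) (L : ι → ℕ) (hL : ∀ i' ∈ M, L i' ≤ K) (hM : M.card ≤ K) :
    |∑ i' ∈ M, ∑ j, (c j : ℝ) * v j (L i')|
      ≤ K * (∑ j, (c j : ℝ) * (∑ k ∈ Finset.range (K + 1), |v j k|)) := by
  have hCB : 0 ≤ ∑ j, (c j : ℝ) * (∑ k ∈ Finset.range (K + 1), |v j k|) :=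
    Finset.sum_nonneg fun j _ => mul_nonneg (Nat.cast_nonneg _)
      (Finset.sum_nonneg fun _ _ => abs_nonneg _)
  have habs : ∀ i' ∈ M, |∑ j, (c j : ℝ) * v j (L i')|
      ≤ ∑ j, (c j : ℝ) * (∑ k ∈ Finset.range (K + 1), |v j k|) := by
    intro i' hi'
    calc |∑ j, (c j : ℝ) * v j (L i')| ≤ ∑ j, |(c j : ℝ) * v j (L i')| :=
          Finset.abs_sum_le_sum_abs _ _
      _ ≤ ∑ j, (c j : ℝ) * (∑ k ∈ Finset.range (K + 1), |v j k|) := by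
          apply Finset.sum_le_sum
          intro j _
          rw [abs_mul, Nat.abs_cast]
          exact mul_le_mul_of_nonneg_left (abs_le_inner v j (hL i' hi')) (by positivity)
  calc |∑ i' ∈ M, ∑ j, (c j : ℝ) * v j (L i')|
      ≤ ∑ i' ∈ M, |∑ j, (c j : ℝ) * v j (L i')| := Finset.abs_sum_le_sum_abs _ _
    _ ≤ ∑ _i' ∈ M, ∑ j, (c j : ℝ) * (∑ k ∈ Finset.range (K + 1), |v j k|) :=
        Finset.sum_le_sum habs
    _ = M.card * ∑ j, (c j : ℝ) * (∑ k ∈ Finset.range (K + 1), |v j k|) := by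
        rw [Finset.sum_const, nsmul_eq_mul]
    _ ≤ K * ∑ j, (c j : ℝ) * (∑ k ∈ Finset.range (K + 1), |v j k|) := by
        apply mul_le_mul_of_nonneg_right _ hCB
        exact_mod_cast hM

end Bounds

section Strict2

variable {m K R : ℕ} {b : Fin m → ℕ → ℝ} {T : Mech}
  {act : Fin K → Finset (Finset (Fin R))} {hne : ∀ i, (act i).Nonempty}
  {w : Fin R → Fin m → ℝ} {p : Fin K → Finset (Fin R) → Prop}
  {S : Fin K → Finset (Fin K)} {cs : Fin m → ℕ} {q : ℕ}

lemma Φm_update (a : Fin K → Finset (Fin R)) (i : Fin K) (s : Finset (Fin R)) :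
    Φm p S (Function.update a i s) = Function.update (Φm p S a) i (φm p S i s) := by
  funext i'
  by_cases h : i' = i
  · subst h; simp [Φm]
  · simp [Φm, Function.update_of_ne h]

/-- splitting the Mset star sum: carriers vs the own-star -/
lemma star_sum_split (hS1 : ∀ i, i ∉ S i) (i : Fin K) (a : Fin K → Finset (Fin R))
    (s : Finset (Fin R)) (hai : a i = s) :
    (∑ i' ∈ Mset p S i s, ∑ j,
        (cs j : ℝ) * vf b T j ((S i').card + (if p i' (a i') then 1 else 0)))
      = (∑ i' ∈ Finset.univ.filter (fun i' => i ∈ S i'), ∑ j,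
          (cs j : ℝ) * vf b T j ((S i').card + (if p i' (a i') then 1 else 0)))
        + (if p i s then 1 else 0) * ∑ j, (cs j : ℝ) * vf b T j ((S i).card + 1) := by
  have hMset : Mset p S i s
      = (Finset.univ.filter (fun i' => i ∈ S i')) ∪ (if p i s then {i} else ∅) := by
    ext i'
    simp only [Mset, Finset.mem_filter, Finset.mem_univ, true_and, Finset.mem_union]
    constructor
    · rintro (h | ⟨rfl, h⟩)
      · exact Or.inl h
      · exact Or.inr (by simp [h])
    · rintro (h | h)
      · exact Or.inl h
      · by_cases hp : p i s
        · simp only [hp, if_true, Finset.mem_singleton] at h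
          exact Or.inr ⟨h, hp⟩
        · simp [hp] at h
  rw [hMset, Finset.sum_union]
  · congr 1
    by_cases hp : p i s
    · simp only [hp, if_true, Finset.sum_singleton, one_mul]
      rw [hai, if_pos hp]
    · simp [hp]
  · by_cases hp : p i s
    · simp only [hp, if_true, Finset.disjoint_singleton_right, Finset.mem_filter]
      intro h
      exact hS1 i h.2
    · simp [hp]

/-- the carrier part of the star sum does not change under own deviations -/
lemma carrier_sum_invariant (hS1 : ∀ i, i ∉ S i) (i : Fin K) (a : Fin K → Finset (Fin R))
    (s : Finset (Fin R)) :
    (∑ i' ∈ Finset.univ.filter (fun i' => i ∈ S i'), ∑ j,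
        (cs j : ℝ) * vf b T j ((S i').card + (if p i' (Function.update a i s i') then 1 else 0)))
      = ∑ i' ∈ Finset.univ.filter (fun i' => i ∈ S i'), ∑ j,
          (cs j : ℝ) * vf b T j ((S i').card + (if p i' (a i') then 1 else 0)) := by
  apply Finset.sum_congr rfl
  intro i' hi'
  have hne' : i' ≠ i := by
    rintro rfl
    exact hS1 i' (by simpa using (Finset.mem_filter.mp hi').2)
  rw [Function.update_of_ne hne']

/-- exact decomposition of the strictified slack -/
lemma slack_HG_decomp (hS1 : ∀ i, i ∉ S i) (i : Fin K) (a : Fin K → Finset (Fin R))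
    (s : Finset (Fin R)) :
    (HG b T act hne w p S cs q).userCost i (Φm p S (Function.update a i s))
      - (HG b T act hne w p S cs q).userCost i (Φm p S a)
    = ((∑ e ∈ s, ∑ j, (⌈(q : ℝ) * w e j⌉₊ : ℝ) * vf b T j (ld (Function.update a i s) e))
        - ∑ e ∈ a i, ∑ j, (⌈(q : ℝ) * w e j⌉₊ : ℝ) * vf b T j (ld a e))
      + (∑ j, (cs j : ℝ) * vf b T j ((S i).card + 1))
        * ((if p i s then 1 else 0) - (if p i (a i) then 1 else 0)) := by
  erw [userCost_HG hS1 i (Function.update a i s), userCost_HG hS1 i a]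
  have hupd : (Function.update a i s) i = s := Function.update_self i s a
  rw [hupd]
  rw [star_sum_split (cs := cs) hS1 i (Function.update a i s) s hupd]
  rw [star_sum_split (cs := cs) hS1 i a (a i) rfl]
  rw [carrier_sum_invariant hS1 i a s]
  ring

end Strict2

end PF
end Chunk4

section Chunk5

open Finset Filter
open scoped Classical

namespace PF

section Strict3

variable {m K R : ℕ} {b : Fin m → ℕ → ℝ} {T : Mech}
  {act : Fin K → Finset (Finset (Fin R))} {hne : ∀ i, (act i).Nonempty}
  {w : Fin R → Fin m → ℝ} {p : Fin K → Finset (Fin R) → Prop}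
  {S : Fin K → Finset (Fin K)} {cs : Fin m → ℕ} {q : ℕ}

/-- star-coefficient magnitude constant (w.r.t. `b`) -/
def CBc (b : Fin m → ℕ → ℝ) (K : ℕ) (cs : Fin m → ℕ) : ℝ :=
  ∑ j, (cs j : ℝ) * (∑ k ∈ Finset.range (K + 1), |b j k|)

/-- the SC-error constant -/
def C4 (b : Fin m → ℕ → ℝ) (K R : ℕ) (cs : Fin m → ℕ) : ℝ :=
  K * (R * bndC b K) + K * (K * CBc b K cs)

lemma GG_userCost (i : Fin K) (a : Fin K → Finset (Fin R)) :
    (GG b T act hne w).userCost i a = ∑ e ∈ a i, ∑ j, w e j * vf b T j (ld a e) :=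
  mkG_userCost b T w i a

lemma GG_SC (a : Fin K → Finset (Fin R)) :
    (GG b T act hne w).SC a = ∑ i, ∑ e ∈ a i, ∑ j, w e j * b j (ld a e) :=
  mkG_SC b T w a

/-- approximation of the strictified slack by `q`-times the original slack -/
lemma slack_HG_approx (hS1 : ∀ i, i ∉ S i) (hw : ∀ e j, 0 ≤ w e j)
    (i : Fin K) (a : Fin K → Finset (Fin R)) (s : Finset (Fin R)) :
    |((HG b T act hne w p S cs q).userCost i (Φm p S (Function.update a i s))
        - (HG b T act hne w p S cs q).userCost i (Φm p S a))
      - ((q : ℝ) * ((GG b T act hne w).userCost i (Function.update a i s)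
            - (GG b T act hne w).userCost i a)
         + (∑ j, (cs j : ℝ) * vf b T j ((S i).card + 1))
            * ((if p i s then 1 else 0) - (if p i (a i) then 1 else 0)))|
      ≤ 2 * (R * bndC (vf b T) K) := by
  rw [slack_HG_decomp hS1 i a s]
  erw [GG_userCost i (Function.update a i s), GG_userCost i a]
  rw [Function.update_self i s a]
  have expand : ∀ (t : Finset (Fin R)) (L : Fin R → ℕ),
      (∑ e ∈ t, ∑ j, (⌈(q : ℝ) * w e j⌉₊ : ℝ) * vf b T j (L e))
        - (q : ℝ) * (∑ e ∈ t, ∑ j, w e j * vf b T j (L e))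
      = ∑ e ∈ t, ∑ j, ((⌈(q : ℝ) * w e j⌉₊ : ℝ) - (q : ℝ) * w e j) * vf b T j (L e) := by
    intro t L
    rw [Finset.mul_sum, ← Finset.sum_sub_distrib]
    apply Finset.sum_congr rfl
    intro e _
    rw [Finset.mul_sum, ← Finset.sum_sub_distrib]
    apply Finset.sum_congr rfl
    intro j _
    ring
  have key : ((∑ e ∈ s, ∑ j, (⌈(q : ℝ) * w e j⌉₊ : ℝ) * vf b T j (ld (Function.update a i s) e))
        - ∑ e ∈ a i, ∑ j, (⌈(q : ℝ) * w e j⌉₊ : ℝ) * vf b T j (ld a e))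
      + (∑ j, (cs j : ℝ) * vf b T j ((S i).card + 1))
        * ((if p i s then 1 else 0) - (if p i (a i) then 1 else 0))
      - ((q : ℝ) * ((∑ e ∈ s, ∑ j, w e j * vf b T j (ld (Function.update a i s) e))
            - ∑ e ∈ a i, ∑ j, w e j * vf b T j (ld a e))
         + (∑ j, (cs j : ℝ) * vf b T j ((S i).card + 1))
            * ((if p i s then 1 else 0) - (if p i (a i) then 1 else 0)))
      = (∑ e ∈ s, ∑ j, ((⌈(q : ℝ) * w e j⌉₊ : ℝ) - (q : ℝ) * w e j)
            * vf b T j (ld (Function.update a i s) e))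
        - ∑ e ∈ a i, ∑ j, ((⌈(q : ℝ) * w e j⌉₊ : ℝ) - (q : ℝ) * w e j) * vf b T j (ld a e) := by
    rw [← expand s (fun e => ld (Function.update a i s) e), ← expand (a i) (fun e => ld a e)]
    ring
  rw [key]
  calc |(∑ e ∈ s, ∑ j, ((⌈(q : ℝ) * w e j⌉₊ : ℝ) - (q : ℝ) * w e j)
            * vf b T j (ld (Function.update a i s) e))
        - ∑ e ∈ a i, ∑ j, ((⌈(q : ℝ) * w e j⌉₊ : ℝ) - (q : ℝ) * w e j) * vf b T j (ld a e)|
      ≤ |∑ e ∈ s, ∑ j, ((⌈(q : ℝ) * w e j⌉₊ : ℝ) - (q : ℝ) * w e j)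
            * vf b T j (ld (Function.update a i s) e)|
        + |∑ e ∈ a i, ∑ j, ((⌈(q : ℝ) * w e j⌉₊ : ℝ) - (q : ℝ) * w e j) * vf b T j (ld a e)| :=
      abs_sub _ _
    _ ≤ R * bndC (vf b T) K + R * bndC (vf b T) K := by
        apply add_le_add
        · exact theta_sum_bound (vf b T) w hw q s _ (fun e => ld_le _ e)
        · exact theta_sum_bound (vf b T) w hw q (a i) _ (fun e => ld_le _ e)
    _ = 2 * (R * bndC (vf b T) K) := by ring

/-- SC formula for the strictified game -/
lemma SC_HG_formula (hS1 : ∀ i, i ∉ S i) (a : Fin K → Finset (Fin R)) :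
    (HG b T act hne w p S cs q).SC (Φm p S a)
      = ∑ i, ((∑ e ∈ a i, ∑ j, (⌈(q : ℝ) * w e j⌉₊ : ℝ) * b j (ld a e))
          + ∑ i' ∈ Mset p S i (a i), ∑ j,
              (cs j : ℝ) * b j ((S i').card + (if p i' (a i') then 1 else 0))) := by
  have h0 : (HG b T act hne w p S cs q).SC (Φm p S a)
      = ∑ i, ∑ x ∈ φm p S i (a i), ∑ j, (cQ (K := K) w cs q x j : ℝ)
          * b j ((HG b T act hne w p S cs q).load (Φm p S a) x) :=
    mkG_SC b T _ (Φm p S a)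
  rw [h0]
  apply Finset.sum_congr rfl
  intro i _
  rw [sum_φm]
  congr 1
  · apply Finset.sum_congr rfl
    intro e _
    rw [load_Φm_emb]
    apply Finset.sum_congr rfl
    intro j _
    rw [cQ_emb]
  · apply Finset.sum_congr rfl
    intro i' _
    rw [load_Φm_star hS1]
    apply Finset.sum_congr rfl
    intro j _
    rw [cQ_star]

lemma SC_HG_approx (hS1 : ∀ i, i ∉ S i) (hw : ∀ e j, 0 ≤ w e j)
    (hSK : ∀ i', (S i').card + 1 ≤ K) (a : Fin K → Finset (Fin R)) :
    |(HG b T act hne w p S cs q).SC (Φm p S a) - (q : ℝ) * (GG b T act hne w).SC a|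
      ≤ C4 b K R cs := by
  rw [SC_HG_formula hS1 a, GG_SC a, Finset.mul_sum, ← Finset.sum_sub_distrib]
  have per_i : ∀ i : Fin K,
      |((∑ e ∈ a i, ∑ j, (⌈(q : ℝ) * w e j⌉₊ : ℝ) * b j (ld a e))
          + ∑ i' ∈ Mset p S i (a i), ∑ j,
              (cs j : ℝ) * b j ((S i').card + (if p i' (a i') then 1 else 0)))
        - (q : ℝ) * ∑ e ∈ a i, ∑ j, w e j * b j (ld a e)|
      ≤ R * bndC b K + K * CBc b K cs := by
    intro i
    have expand : (∑ e ∈ a i, ∑ j, (⌈(q : ℝ) * w e j⌉₊ : ℝ) * b j (ld a e))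
        - (q : ℝ) * (∑ e ∈ a i, ∑ j, w e j * b j (ld a e))
        = ∑ e ∈ a i, ∑ j, ((⌈(q : ℝ) * w e j⌉₊ : ℝ) - (q : ℝ) * w e j) * b j (ld a e) := by
      rw [Finset.mul_sum, ← Finset.sum_sub_distrib]
      apply Finset.sum_congr rfl
      intro e _
      rw [Finset.mul_sum, ← Finset.sum_sub_distrib]
      apply Finset.sum_congr rfl
      intro j _
      ring
    have key : ((∑ e ∈ a i, ∑ j, (⌈(q : ℝ) * w e j⌉₊ : ℝ) * b j (ld a e))
          + ∑ i' ∈ Mset p S i (a i), ∑ j,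
              (cs j : ℝ) * b j ((S i').card + (if p i' (a i') then 1 else 0)))
        - (q : ℝ) * ∑ e ∈ a i, ∑ j, w e j * b j (ld a e)
        = (∑ e ∈ a i, ∑ j, ((⌈(q : ℝ) * w e j⌉₊ : ℝ) - (q : ℝ) * w e j) * b j (ld a e))
          + ∑ i' ∈ Mset p S i (a i), ∑ j,
              (cs j : ℝ) * b j ((S i').card + (if p i' (a i') then 1 else 0)) := by
      rw [← expand]; ring
    rw [key]
    calc |(∑ e ∈ a i, ∑ j, ((⌈(q : ℝ) * w e j⌉₊ : ℝ) - (q : ℝ) * w e j) * b j (ld a e))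
          + ∑ i' ∈ Mset p S i (a i), ∑ j,
              (cs j : ℝ) * b j ((S i').card + (if p i' (a i') then 1 else 0))|
        ≤ |∑ e ∈ a i, ∑ j, ((⌈(q : ℝ) * w e j⌉₊ : ℝ) - (q : ℝ) * w e j) * b j (ld a e)|
          + |∑ i' ∈ Mset p S i (a i), ∑ j,
              (cs j : ℝ) * b j ((S i').card + (if p i' (a i') then 1 else 0))| := abs_add_le _ _
      _ ≤ R * bndC b K + K * CBc b K cs := by
          apply add_le_add
          · exact theta_sum_bound b w hw q (a i) _ (fun e => ld_le _ e)
          · apply coeff_sum_bound b cs (Mset p S i (a i))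
              (fun i' => (S i').card + (if p i' (a i') then 1 else 0))
            · intro i' _
              by_cases hp : p i' (a i')
              · simpa [hp] using hSK i'
              · simp only [hp, if_false, add_zero]
                exact le_trans (Nat.le_succ _) (hSK i')
            · calc (Mset p S i (a i)).card ≤ (Finset.univ : Finset (Fin K)).card :=
                  Finset.card_filter_le _ _
                _ = K := by simp
  calc |∑ i, (((∑ e ∈ a i, ∑ j, (⌈(q : ℝ) * w e j⌉₊ : ℝ) * b j (ld a e))
          + ∑ i' ∈ Mset p S i (a i), ∑ j,
              (cs j : ℝ) * b j ((S i').card + (if p i' (a i') then 1 else 0)))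
        - (q : ℝ) * ∑ e ∈ a i, ∑ j, w e j * b j (ld a e))|
      ≤ ∑ i : Fin K, (R * bndC b K + K * CBc b K cs) :=
      le_trans (Finset.abs_sum_le_sum_abs _ _) (Finset.sum_le_sum fun i _ => per_i i)
    _ = K * (R * bndC b K + K * CBc b K cs) := by
        rw [Finset.sum_const, nsmul_eq_mul]; simp
    _ = C4 b K R cs := by rw [C4]; ring

/-- feasibility correspondence for the strictified game -/
lemma isAssign_HG_iff (ah : Fin K → Finset (Fin (R + K))) :
    (HG b T act hne w p S cs q).IsAssign ah
      ↔ ∃ a, (∀ i, a i ∈ act i) ∧ ah = Φm p S a := by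
  constructor
  · intro h
    choose s hs hψ using fun i => Finset.mem_image.mp (h i)
    exact ⟨s, hs, by funext i; exact (hψ i).symm⟩
  · rintro ⟨a, ha, rfl⟩
    intro i
    exact Finset.mem_image.mpr ⟨a i, ha i, rfl⟩

lemma isAssign_GG_iff (a : Fin K → Finset (Fin R)) :
    (GG b T act hne w).IsAssign a ↔ ∀ i, a i ∈ act i := Iff.rfl

lemma minCost_HG_le (hS1 : ∀ i, i ∉ S i) (hw : ∀ e j, 0 ≤ w e j)
    (hSK : ∀ i', (S i').card + 1 ≤ K) :
    (HG b T act hne w p S cs q).MinCost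
      ≤ (q : ℝ) * (GG b T act hne w).MinCost + C4 b K R cs := by
  obtain ⟨aopt, hfeas, hval⟩ := exists_minCost (GG b T act hne w)
  have h1 : (HG b T act hne w p S cs q).MinCost
      ≤ (HG b T act hne w p S cs q).SC (Φm p S aopt) :=
    minCost_le _ ((isAssign_HG_iff _).mpr ⟨aopt, hfeas, rfl⟩)
  have h2 := SC_HG_approx (b := b) (T := T) (act := act) (hne := hne) (p := p) (cs := cs) (q := q) hS1 hw hSK aopt
  have h3 := abs_le.mp h2
  rw [hval] at h3
  linarith [h3.2]

lemma le_minCost_HG (hS1 : ∀ i, i ∉ S i) (hw : ∀ e j, 0 ≤ w e j)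
    (hSK : ∀ i', (S i').card + 1 ≤ K) :
    (q : ℝ) * (GG b T act hne w).MinCost - C4 b K R cs
      ≤ (HG b T act hne w p S cs q).MinCost := by
  obtain ⟨ahopt, hfeas, hval⟩ := exists_minCost (HG b T act hne w p S cs q)
  obtain ⟨a, ha, rfl⟩ := (isAssign_HG_iff _).mp hfeas
  have h1 : (GG b T act hne w).MinCost ≤ (GG b T act hne w).SC a := minCost_le _ ha
  have h2 := SC_HG_approx (b := b) (T := T) (act := act) (hne := hne) (p := p) (cs := cs) (q := q) hS1 hw hSK a
  have h3 := abs_le.mp h2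
  erw [hval] at h3
  have h4 : (q : ℝ) * (GG b T act hne w).MinCost ≤ (q : ℝ) * (GG b T act hne w).SC a :=
    mul_le_mul_of_nonneg_left h1 (Nat.cast_nonneg q)
  linarith [h3.1]

end Strict3

end PF
end Chunk5

section Chunk6

open Finset Filter
open scoped Classical

namespace PF

lemma tendsto_ratio (A B C : ℝ) (hB : 0 < B) :
    Filter.Tendsto (fun q : ℕ => ((q : ℝ) * A - C) / ((q : ℝ) * B + C))
      Filter.atTop (nhds (A / B)) := by
  have hinv : Filter.Tendsto (fun q : ℕ => ((q : ℝ))⁻¹) Filter.atTop (nhds 0) :=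
    tendsto_inv_atTop_nhds_zero_nat
  have hnum : Filter.Tendsto (fun q : ℕ => A - C * ((q : ℝ))⁻¹) Filter.atTop (nhds (A - C * 0)) :=
    tendsto_const_nhds.sub (tendsto_const_nhds.mul hinv)
  have hden : Filter.Tendsto (fun q : ℕ => B + C * ((q : ℝ))⁻¹) Filter.atTop (nhds (B + C * 0)) :=
    tendsto_const_nhds.add (tendsto_const_nhds.mul hinv)
  have hBne : B + C * 0 ≠ 0 := by simpa using hB.ne'
  have hdiv := hnum.div hden hBne
  simp only [mul_zero, sub_zero, add_zero] at hdiv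
  apply hdiv.congr'
  filter_upwards [Filter.eventually_ge_atTop 1] with q hq
  have hq0 : (q : ℝ) ≠ 0 := by
    have : (1 : ℝ) ≤ (q : ℝ) := by exact_mod_cast hq
    linarith
  have hnum' : A - C * ((q : ℝ))⁻¹ = ((q : ℝ) * A - C) * ((q : ℝ))⁻¹ := by
    field_simp
  have hden' : B + C * ((q : ℝ))⁻¹ = ((q : ℝ) * B + C) * ((q : ℝ))⁻¹ := by
    field_simp
  show (fun q : ℕ => A - C * ((q : ℝ))⁻¹) q / (fun q : ℕ => B + C * ((q : ℝ))⁻¹) q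
      = ((q : ℝ) * A - C) / ((q : ℝ) * B + C)
  simp only
  rw [hnum', hden', mul_div_mul_right _ _ (inv_ne_zero hq0)]

lemma eventually_pos_lin {B C : ℝ} (hB : 0 < B) :
    ∀ᶠ q : ℕ in Filter.atTop, 0 < (q : ℝ) * B - C := by
  have : Filter.Tendsto (fun q : ℕ => (q : ℝ) * B - C) Filter.atTop Filter.atTop := by
    apply Filter.Tendsto.atTop_add _ tendsto_const_nhds
    exact Filter.Tendsto.atTop_mul_const hB tendsto_natCast_atTop_atTop
  exact this.eventually_gt_atTop 0

section Main

variable {n m K R : ℕ} (b : Fin m → ℕ → ℝ) (T : Mech)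
  (act : Fin K → Finset (Finset (Fin R))) (hne : ∀ i, (act i).Nonempty)
  (w : Fin R → Fin m → ℝ) (p : Fin K → Finset (Fin R) → Prop)
  (S : Fin K → Finset (Fin K)) (cs : Fin m → ℕ)

/-- the replicated strictified game: a member of the class of `T` -/
def RepHG (q : ℕ) : CGame :=
  Rep b T (act := act' act p S) (hne := act'_ne act hne p S) (cQ (K := K) w cs q)

lemma ofReal_ratio_le_PoA
    (hS1 : ∀ i, i ∉ S i) (hSK : ∀ i', (S i').card + 1 ≤ K)
    (hw : ∀ e j, 0 ≤ w e j) (hK : K ≤ n)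
    (hMC : 0 < (GG b T act hne w).MinCost)
    (a : Fin K → Finset (Fin R)) (hfa : ∀ i, a i ∈ act i)
    (hNEq : ∀ᶠ q : ℕ in Filter.atTop, (HG b T act hne w p S cs q).IsNE (Φm p S a)) :
    ENNReal.ofReal ((GG b T act hne w).SC a / (GG b T act hne w).MinCost)
      ≤ PoA n m b T := by
  have hlim0 := tendsto_ratio ((GG b T act hne w).SC a) ((GG b T act hne w).MinCost)
    (C4 b K R cs) hMC
  have hlim : Filter.Tendsto
      (fun q : ℕ => ENNReal.ofReal (((q : ℝ) * (GG b T act hne w).SC a - C4 b K R cs)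
        / ((q : ℝ) * (GG b T act hne w).MinCost + C4 b K R cs)))
      Filter.atTop (nhds (ENNReal.ofReal ((GG b T act hne w).SC a / (GG b T act hne w).MinCost))) :=
    (ENNReal.continuous_ofReal.tendsto _).comp hlim0
  apply le_of_tendsto hlim
  filter_upwards [hNEq, eventually_pos_lin (C := C4 b K R cs) hMC] with q hNE hq
  -- the replicated game
  set Gh := RepHG b T act hne w p S cs q with hGh
  have hminEq : Gh.MinCost = (HG b T act hne w p S cs q).MinCost :=
    minCost_Rep b T (cQ (K := K) w cs q)
  have hMClb := le_minCost_HG (b := b) (T := T) (act := act) (hne := hne) (w := w)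
    (p := p) (S := S) (cs := cs) (q := q) hS1 hw hSK
  have hMCub := minCost_HG_le (b := b) (T := T) (act := act) (hne := hne) (w := w)
    (p := p) (S := S) (cs := cs) (q := q) hS1 hw hSK
  have hMCpos : 0 < Gh.MinCost := by
    rw [hminEq]; linarith
  have hSClb : (q : ℝ) * (GG b T act hne w).SC a - C4 b K R cs
      ≤ (HG b T act hne w p S cs q).SC (Φm p S a) := by
    have := (abs_le.mp (SC_HG_approx (b := b) (T := T) (act := act) (hne := hne)
      (p := p) (cs := cs) (q := q) hS1 hw hSK a)).1
    linarith
  have hfa' : ∀ i, Φm p S a i ∈ act' act p S i :=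
    fun i => Finset.mem_image.mpr ⟨a i, hfa i, rfl⟩
  have hNEGh : Gh.IsNE (Ψ (cQ (K := K) w cs q) (Φm p S a)) :=
    (NE_Rep_iff b T (cQ (K := K) w cs q) (Φm p S a) hfa').mpr hNE
  have hSCeq : Gh.SC (Ψ (cQ (K := K) w cs q) (Φm p S a))
      = (HG b T act hne w p S cs q).SC (Φm p S a) :=
    SC_Rep b T (cQ (K := K) w cs q) (Φm p S a)
  have hInCls : InClass n m b T Gh := inClass_Rep b T (cQ (K := K) w cs q) hK
  have hfeasGh : Gh.IsAssign (Ψ (cQ (K := K) w cs q) (Φm p S a)) := hNEGh.1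
  have hSCGh_nonneg : 0 ≤ Gh.SC (Ψ (cQ (K := K) w cs q) (Φm p S a)) :=
    le_trans hMCpos.le (minCost_le Gh hfeasGh)
  have hreal : ((q : ℝ) * (GG b T act hne w).SC a - C4 b K R cs)
      / ((q : ℝ) * (GG b T act hne w).MinCost + C4 b K R cs)
      ≤ Gh.SC (Ψ (cQ (K := K) w cs q) (Φm p S a)) / Gh.MinCost := by
    apply div_le_div₀ hSCGh_nonneg
    · rw [hSCeq]; exact hSClb
    · exact hMCpos
    · rw [hminEq]; exact hMCub
  refine le_trans (ENNReal.ofReal_le_ofReal hreal) ?_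
  calc ENNReal.ofReal (Gh.SC (Ψ (cQ (K := K) w cs q) (Φm p S a)) / Gh.MinCost)
      ≤ ⨆ _ : Gh.IsNE (Ψ (cQ (K := K) w cs q) (Φm p S a)),
          ENNReal.ofReal (Gh.SC (Ψ (cQ (K := K) w cs q) (Φm p S a)) / Gh.MinCost) :=
        le_iSup_of_le hNEGh le_rfl
    _ ≤ ⨆ a' : Gh.Assign, ⨆ _ : Gh.IsNE a', ENNReal.ofReal (Gh.SC a' / Gh.MinCost) :=
        le_iSup_of_le (Ψ (cQ (K := K) w cs q) (Φm p S a)) (le_refl _)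
    _ ≤ ⨆ _ : InClass n m b T Gh ∧ 0 < Gh.MinCost,
          ⨆ a' : Gh.Assign, ⨆ _ : Gh.IsNE a', ENNReal.ofReal (Gh.SC a' / Gh.MinCost) :=
        le_iSup_of_le ⟨hInCls, hMCpos⟩ (le_refl _)
    _ ≤ PoA n m b T := le_iSup_of_le Gh (le_refl _)

end Main

end PF
end Chunk6

section Chunk7

open Finset Filter
open scoped Classical

namespace PF

section NElemmas

variable {n m K R : ℕ} {b : Fin m → ℕ → ℝ} {T : Mech}
  {act : Fin K → Finset (Finset (Fin R))} {hne : ∀ i, (act i).Nonempty}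
  {w : Fin R → Fin m → ℝ} {p : Fin K → Finset (Fin R) → Prop}
  {S : Fin K → Finset (Fin K)} {cs : Fin m → ℕ}

lemma one_le_ld {a : Fin K → Finset (Fin R)} {i : Fin K} {e : Fin R} (h : e ∈ a i) :
    1 ≤ ld a e := by
  have : i ∈ Finset.univ.filter fun i' => e ∈ a i' := by simp [h]
  exact Finset.card_pos.mpr ⟨i, this⟩

lemma sum_vf_zero (hdeg : ∀ (j : Fin m) (k : ℕ), 1 ≤ k → k ≤ K → vf b T j k = 0)
    (a' : Fin K → Finset (Fin R)) (i : Fin K) (t : Finset (Fin R)) (ht : t = a' i)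
    (X : Fin R → Fin m → ℝ) :
    (∑ e ∈ t, ∑ j, X e j * vf b T j (ld a' e)) = 0 := by
  apply Finset.sum_eq_zero
  intro e he
  apply Finset.sum_eq_zero
  intro j _
  rw [hdeg j (ld a' e) (one_le_ld (ht ▸ he)) (ld_le a' e), mul_zero]

lemma userCost_GG_degenerate (hdeg : ∀ (j : Fin m) (k : ℕ), 1 ≤ k → k ≤ K → vf b T j k = 0)
    (i : Fin K) (a : Fin K → Finset (Fin R)) :
    (GG b T act hne w).userCost i a = 0 := by
  rw [GG_userCost]
  exact sum_vf_zero hdeg a i (a i) rfl w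

lemma NE_GG_degenerate (hdeg : ∀ (j : Fin m) (k : ℕ), 1 ≤ k → k ≤ K → vf b T j k = 0)
    (a : Fin K → Finset (Fin R)) (hfa : ∀ i, a i ∈ act i) :
    (GG b T act hne w).IsNE a := by
  refine ⟨hfa, ?_⟩
  intro i s hs
  erw [userCost_GG_degenerate hdeg, userCost_GG_degenerate hdeg]

lemma NE_HG_degenerate (hdeg : ∀ (j : Fin m) (k : ℕ), 1 ≤ k → k ≤ K → vf b T j k = 0)
    (hS1 : ∀ i, i ∉ S i) (a : Fin K → Finset (Fin R)) (hfa : ∀ i, a i ∈ act i) (q : ℕ) :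
    (HG b T act hne w p S (fun _ => 0) q).IsNE (Φm p S a) := by
  refine ⟨(isAssign_HG_iff _).mpr ⟨a, hfa, rfl⟩, ?_⟩
  intro i sh hsh
  obtain ⟨s, hs, rfl⟩ := Finset.mem_image.mp hsh
  erw [← Φm_update]
  have hdecomp := slack_HG_decomp (b := b) (T := T) (act := act) (hne := hne) (w := w)
    (p := p) (cs := fun _ => 0) (q := q) hS1 i a s
  have h1 : (∑ e ∈ s, ∑ j, (⌈(q : ℝ) * w e j⌉₊ : ℝ)
      * vf b T j (ld (Function.update a i s) e)) = 0 :=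
    sum_vf_zero hdeg (Function.update a i s) i s (Function.update_self i s a).symm _
  have h2 : (∑ e ∈ a i, ∑ j, (⌈(q : ℝ) * w e j⌉₊ : ℝ) * vf b T j (ld a e)) = 0 :=
    sum_vf_zero hdeg a i (a i) rfl _
  have h3 : (∑ j, (((fun _ : Fin m => (0 : ℕ)) j : ℝ)) * vf b T j ((S i).card + 1)) = 0 := by
    simp
  rw [h1, h2, h3] at hdecomp
  have : (HG b T act hne w p S (fun _ => 0) q).userCost i (Φm p S (Function.update a i s))
      - (HG b T act hne w p S (fun _ => 0) q).userCost i (Φm p S a) = 0 := by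
    rw [hdecomp]; ring
  linarith

lemma NE_HG_strict (j0 : Fin m) (k0 : ℕ) (hk01 : 1 ≤ k0) (hk0K : k0 ≤ K)
    (hv : vf b T j0 k0 ≠ 0)
    (hS1 : ∀ i, i ∉ S i) (hScard : ∀ i, (S i).card = k0 - 1)
    (hw : ∀ e j, 0 ≤ w e j)
    (a : Fin K → Finset (Fin R)) (hfa : ∀ i, a i ∈ act i)
    (hNE : (GG b T act hne w).IsNE a)
    (hppos : 0 < vf b T j0 k0 → ∀ i s, (p i s ↔ s ≠ a i))
    (hpneg : vf b T j0 k0 < 0 → ∀ i s, (p i s ↔ s = a i))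
    (s0 : ℕ) (hcs : ∀ j, cs j = if j = j0 then s0 else 0)
    (hs0 : 2 * (R * bndC (vf b T) K) < (s0 : ℝ) * |vf b T j0 k0|) (q : ℕ) :
    (HG b T act hne w p S cs q).IsNE (Φm p S a) := by
  refine ⟨(isAssign_HG_iff _).mpr ⟨a, hfa, rfl⟩, ?_⟩
  intro i sh hsh
  obtain ⟨s, hs, rfl⟩ := Finset.mem_image.mp hsh
  erw [← Φm_update]
  by_cases hsa : s = a i
  · subst hsa
    rw [Function.update_eq_self i a]
  · have key := slack_HG_approx (b := b) (T := T) (act := act) (hne := hne) (w := w)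
      (p := p) (S := S) (cs := cs) (q := q) hS1 hw i a s
    have hcard : (S i).card + 1 = k0 := by
      rw [hScard i]; omega
    have hW : (∑ j, ((cs j : ℝ)) * vf b T j ((S i).card + 1))
        = (s0 : ℝ) * vf b T j0 k0 := by
      rw [hcard]
      have hterm : ∀ j ∈ Finset.univ, ((cs j : ℝ)) * vf b T j k0
          = if j = j0 then (s0 : ℝ) * vf b T j k0 else 0 := by
        intro j _
        rw [hcs j]
        push_cast
        rw [ite_mul, zero_mul]
      rw [Finset.sum_congr rfl hterm]
      rw [Finset.sum_ite_eq' Finset.univ j0 (fun j => (s0 : ℝ) * vf b T j k0)]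
      simp
    have hGGs : 0 ≤ (GG b T act hne w).userCost i (Function.update a i s)
        - (GG b T act hne w).userCost i a := by
      have := hNE.2 i s hs
      linarith
    have hq0 : (0 : ℝ) ≤ (q : ℝ) * ((GG b T act hne w).userCost i (Function.update a i s)
        - (GG b T act hne w).userCost i a) :=
      mul_nonneg (Nat.cast_nonneg q) hGGs
    have hχ : (∑ j, ((cs j : ℝ)) * vf b T j ((S i).card + 1))
        * ((if p i s then 1 else 0) - (if p i (a i) then 1 else 0))
        = (s0 : ℝ) * |vf b T j0 k0| := by
      rw [hW]
      by_cases hv0 : 0 < vf b T j0 k0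
      · have h1 : p i s := (hppos hv0 i s).mpr hsa
        have h2 : ¬ p i (a i) := by
          rw [hppos hv0 i (a i)]; simp
        rw [if_pos h1, if_neg h2, abs_of_pos hv0]; ring
      · have hvneg : vf b T j0 k0 < 0 := lt_of_le_of_ne (not_lt.mp hv0) hv
        have h1 : ¬ p i s := by
          rw [hpneg hvneg i s]; exact hsa
        have h2 : p i (a i) := (hpneg hvneg i (a i)).mpr rfl
        rw [if_neg h1, if_pos h2, abs_of_neg hvneg]; ring
    rw [hχ] at key
    have habs := abs_le.mp key
    linarith [habs.1]

/-- star coefficient magnitude constant w.r.t. `vf` -/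
def CVc (b : Fin m → ℕ → ℝ) (T : Mech) (K : ℕ) (cs : Fin m → ℕ) : ℝ :=
  ∑ j, (cs j : ℝ) * (∑ k ∈ Finset.range (K + 1), |vf b T j k|)

lemma CVc_nonneg : 0 ≤ CVc b T K cs :=
  Finset.sum_nonneg fun j _ => mul_nonneg (Nat.cast_nonneg _)
    (Finset.sum_nonneg fun _ _ => abs_nonneg _)

lemma NE_GG_of_NE_HG (hS1 : ∀ i, i ∉ S i) (hSK : ∀ i', (S i').card + 1 ≤ K)
    (hw : ∀ e j, 0 ≤ w e j)
    (bb : Fin K → Finset (Fin R)) (hfb : ∀ i, bb i ∈ act i) (q : ℕ)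
    (hmargin : ∀ i : Fin K, ∀ s ∈ act i,
      (GG b T act hne w).userCost i (Function.update bb i s)
          - (GG b T act hne w).userCost i bb < 0 →
        2 * (R * bndC (vf b T) K) + CVc b T K cs
          < (q : ℝ) * (-((GG b T act hne w).userCost i (Function.update bb i s)
              - (GG b T act hne w).userCost i bb)))
    (hNEH : (HG b T act hne w p S cs q).IsNE (Φm p S bb)) :
    (GG b T act hne w).IsNE bb := by
  refine ⟨hfb, ?_⟩
  intro i s hs
  by_contra hcon
  push_neg at hcon
  have hslack : (GG b T act hne w).userCost i (Function.update bb i s)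
      - (GG b T act hne w).userCost i bb < 0 := by linarith
  have hmar := hmargin i s hs hslack
  have hNEs := hNEH.2 i (φm p S i s) (Finset.mem_image.mpr ⟨s, hs, rfl⟩)
  erw [← Φm_update] at hNEs
  have hHGs : 0 ≤ (HG b T act hne w p S cs q).userCost i (Φm p S (Function.update bb i s))
      - (HG b T act hne w p S cs q).userCost i (Φm p S bb) := by linarith
  have key := slack_HG_approx (b := b) (T := T) (act := act) (hne := hne) (w := w)
    (p := p) (S := S) (cs := cs) (q := q) hS1 hw i bb s
  have hWb : |(∑ j, ((cs j : ℝ)) * vf b T j ((S i).card + 1))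
      * ((if p i s then 1 else 0) - (if p i (bb i) then 1 else 0))| ≤ CVc b T K cs := by
    rw [abs_mul]
    have hW1 : |∑ j, ((cs j : ℝ)) * vf b T j ((S i).card + 1)| ≤ CVc b T K cs := by
      calc |∑ j, ((cs j : ℝ)) * vf b T j ((S i).card + 1)|
          ≤ ∑ j, |((cs j : ℝ)) * vf b T j ((S i).card + 1)| := Finset.abs_sum_le_sum_abs _ _
        _ ≤ CVc b T K cs := by
            apply Finset.sum_le_sum
            intro j _
            rw [abs_mul, Nat.abs_cast]
            exact mul_le_mul_of_nonneg_left (abs_le_inner (vf b T) j (hSK i))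
              (Nat.cast_nonneg _)
    have hχ1 : |(if p i s then (1 : ℝ) else 0) - (if p i (bb i) then 1 else 0)| ≤ 1 := by
      by_cases h1 : p i s <;> by_cases h2 : p i (bb i) <;> simp [h1, h2]
    calc |∑ j, ((cs j : ℝ)) * vf b T j ((S i).card + 1)|
          * |(if p i s then (1 : ℝ) else 0) - (if p i (bb i) then 1 else 0)|
        ≤ CVc b T K cs * 1 := mul_le_mul hW1 hχ1 (abs_nonneg _) CVc_nonneg
      _ = CVc b T K cs := mul_one _
  have habs := abs_le.mp key
  -- HGslack ≤ q * GGslack + Wχ + 2RVv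
  have hub : (HG b T act hne w p S cs q).userCost i (Φm p S (Function.update bb i s))
      - (HG b T act hne w p S cs q).userCost i (Φm p S bb)
      ≤ (q : ℝ) * ((GG b T act hne w).userCost i (Function.update bb i s)
          - (GG b T act hne w).userCost i bb)
        + CVc b T K cs + 2 * (R * bndC (vf b T) K) := by
    have := habs.2
    have hWb' := (abs_le.mp hWb).2
    linarith
  linarith
end NElemmas

end PF
end Chunk7

section Chunk8

open Finset Filter
open scoped Classical

namespace PF

variable {n m : ℕ}

lemma K_pos_of_MC_pos {K R : ℕ} (b : Fin m → ℕ → ℝ) (T : Mech)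
    (act : Fin K → Finset (Finset (Fin R))) (hne : ∀ i, (act i).Nonempty)
    (w : Fin R → Fin m → ℝ) (hMC : 0 < (GG b T act hne w).MinCost) : 1 ≤ K := by
  by_contra hcon
  push_neg at hcon
  interval_cases K
  obtain ⟨a0, ha0⟩ := exists_assign (GG b T act hne w)
  have h1 := minCost_le _ ha0
  have h2 : (GG b T act hne w).SC a0 = 0 := by
    erw [GG_SC]
    simp
  rw [h2] at h1
  linarith

lemma ratio_le_PoA (b : Fin m → ℕ → ℝ) (T : Mech) {K R : ℕ}
    (act : Fin K → Finset (Finset (Fin R))) (hne : ∀ i, (act i).Nonempty)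
    (w : Fin R → Fin m → ℝ) (hw : ∀ e j, 0 ≤ w e j) (hK : K ≤ n)
    (hMC : 0 < (GG b T act hne w).MinCost)
    (a : Fin K → Finset (Fin R)) (hNE : (GG b T act hne w).IsNE a) :
    ENNReal.ofReal ((GG b T act hne w).SC a / (GG b T act hne w).MinCost)
      ≤ PoA n m b T := by
  have hK1 : 1 ≤ K := K_pos_of_MC_pos b T act hne w hMC
  by_cases hdeg : ∀ (j : Fin m) (k : ℕ), 1 ≤ k → k ≤ K → vf b T j k = 0
  · -- degenerate: trivial strictification parameters
    have hS1 : ∀ i : Fin K, i ∉ (fun _ : Fin K => (∅ : Finset (Fin K))) i := by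
      intro i; simp
    apply ofReal_ratio_le_PoA b T act hne w (fun _ _ => False)
      (fun _ => (∅ : Finset (Fin K))) (fun _ => 0) hS1
      (by intro i'; simpa using hK1) hw hK hMC a hNE.1
    exact Filter.Eventually.of_forall (fun q => NE_HG_degenerate hdeg hS1 a hNE.1 q)
  · push_neg at hdeg
    obtain ⟨j0, k0, hk01, hk0K, hv⟩ := hdeg
    have hSex : ∀ i : Fin K, ∃ s : Finset (Fin K),
        s ⊆ Finset.univ.erase i ∧ s.card = k0 - 1 := by
      intro i
      apply Finset.exists_subset_card_eq
      rw [Finset.card_erase_of_mem (Finset.mem_univ i)]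
      rw [Finset.card_univ, Fintype.card_fin]
      omega
    choose S hSsub hScard using hSex
    have hS1 : ∀ i, i ∉ S i := by
      intro i hi
      exact (Finset.mem_erase.mp (hSsub i hi)).1 rfl
    have hSK : ∀ i', (S i').card + 1 ≤ K := by
      intro i'
      rw [hScard i']
      omega
    set s0 : ℕ := ⌈(2 * (R * bndC (vf b T) K) + 1) / |vf b T j0 k0|⌉₊ with hs0def
    have habs : 0 < |vf b T j0 k0| := abs_pos.mpr hv
    have hs0 : 2 * (R * bndC (vf b T) K) < (s0 : ℝ) * |vf b T j0 k0| := by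
      have h1 : (2 * (R * bndC (vf b T) K) + 1) / |vf b T j0 k0| ≤ (s0 : ℝ) := Nat.le_ceil _
      rw [div_le_iff₀ habs] at h1
      nlinarith
    apply ofReal_ratio_le_PoA b T act hne w
      (fun i s => if 0 < vf b T j0 k0 then s ≠ a i else s = a i) S
      (fun j => if j = j0 then s0 else 0) hS1 hSK hw hK hMC a hNE.1
    apply Filter.Eventually.of_forall
    intro q
    exact NE_HG_strict j0 k0 hk01 hk0K hv hS1 hScard hw a hNE.1 hNE
      (fun h i s => by rw [if_pos h]) (fun h i s => by rw [if_neg (asymm h)])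
      s0 (fun j => rfl) hs0 q

lemma iInf_le_PoS (b : Fin m → ℕ → ℝ) (T : Mech) {K R : ℕ}
    (act : Fin K → Finset (Finset (Fin R))) (hne : ∀ i, (act i).Nonempty)
    (w : Fin R → Fin m → ℝ) (hw : ∀ e j, 0 ≤ w e j) (hK : K ≤ n)
    (hMC : 0 < (GG b T act hne w).MinCost) :
    (⨅ a : {a : (GG b T act hne w).Assign // (GG b T act hne w).IsNE a},
      ENNReal.ofReal ((GG b T act hne w).SC a.1 / (GG b T act hne w).MinCost))
      ≤ PoS n m b T := by
  classical
  have hK1 : 1 ≤ K := K_pos_of_MC_pos b T act hne w hMC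
  -- a minimum-social-cost equilibrium
  obtain ⟨aNE, haNE⟩ := exists_NE (GG b T act hne w)
  obtain ⟨astar, hastar, hmin⟩ := Finset.exists_min_image
    (Finset.univ.filter fun a => (GG b T act hne w).IsNE a) (GG b T act hne w).SC
    ⟨aNE, by simp [haNE]⟩
  have hastarNE : (GG b T act hne w).IsNE astar := by
    simpa using hastar
  refine le_trans (iInf_le _ ⟨astar, hastarNE⟩) ?_
  -- strictification parameters: trivial
  set p : Fin K → Finset (Fin R) → Prop := fun _ _ => False with hpdef
  set S : Fin K → Finset (Fin K) := fun _ => ∅ with hSdef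
  set cs : Fin m → ℕ := fun _ => 0 with hcsdef
  have hS1 : ∀ i, i ∉ S i := by intro i; simp [hSdef]
  have hSK : ∀ i', (S i').card + 1 ≤ K := by intro i'; simpa [hSdef] using hK1
  -- limit argument
  have hlim0 := tendsto_ratio ((GG b T act hne w).SC astar) ((GG b T act hne w).MinCost)
    (C4 b K R cs) hMC
  have hlim : Filter.Tendsto
      (fun q : ℕ => ENNReal.ofReal (((q : ℝ) * (GG b T act hne w).SC astar - C4 b K R cs)
        / ((q : ℝ) * (GG b T act hne w).MinCost + C4 b K R cs)))
      Filter.atTop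
      (nhds (ENNReal.ofReal ((GG b T act hne w).SC astar / (GG b T act hne w).MinCost))) :=
    (ENNReal.continuous_ofReal.tendsto _).comp hlim0
  apply le_of_tendsto hlim
  -- margin eventualities
  have hE2 : ∀ᶠ q : ℕ in Filter.atTop,
      ∀ t : (Fin K → Finset (Fin R)) × Fin K × Finset (Fin R),
        (GG b T act hne w).userCost t.2.1 (Function.update t.1 t.2.1 t.2.2)
            - (GG b T act hne w).userCost t.2.1 t.1 < 0 →
          2 * (R * bndC (vf b T) K) + CVc b T K cs
            < (q : ℝ) * (-((GG b T act hne w).userCost t.2.1 (Function.update t.1 t.2.1 t.2.2)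
                - (GG b T act hne w).userCost t.2.1 t.1)) := by
    rw [Filter.eventually_all]
    intro t
    by_cases hneg : (GG b T act hne w).userCost t.2.1 (Function.update t.1 t.2.1 t.2.2)
        - (GG b T act hne w).userCost t.2.1 t.1 < 0
    · have htend : Filter.Tendsto
          (fun q : ℕ => (q : ℝ) * (-((GG b T act hne w).userCost t.2.1
            (Function.update t.1 t.2.1 t.2.2) - (GG b T act hne w).userCost t.2.1 t.1)))
          Filter.atTop Filter.atTop :=
        Filter.Tendsto.atTop_mul_const (by linarith) tendsto_natCast_atTop_atTop
      filter_upwards [htend.eventually_gt_atTop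
        (2 * (R * bndC (vf b T) K) + CVc b T K cs)] with q hq
      exact fun _ => hq
    · exact Filter.Eventually.of_forall (fun q h => absurd h hneg)
  filter_upwards [hE2, eventually_pos_lin (C := C4 b K R cs) hMC] with q hq2 hq1
  -- the replicated game
  set Gh := RepHG b T act hne w p S cs q with hGh
  have hminEq : Gh.MinCost = (HG b T act hne w p S cs q).MinCost :=
    minCost_Rep b T (cQ (K := K) w cs q)
  have hMClb := le_minCost_HG (b := b) (T := T) (act := act) (hne := hne) (w := w)
    (p := p) (S := S) (cs := cs) (q := q) hS1 hw hSK
  have hMCub := minCost_HG_le (b := b) (T := T) (act := act) (hne := hne) (w := w)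
    (p := p) (S := S) (cs := cs) (q := q) hS1 hw hSK
  have hMCpos : 0 < Gh.MinCost := by rw [hminEq]; linarith
  have hInCls : InClass n m b T Gh := inClass_Rep b T (cQ (K := K) w cs q) hK
  -- every NE of Gh has high cost
  have hstep : ENNReal.ofReal (((q : ℝ) * (GG b T act hne w).SC astar - C4 b K R cs)
        / ((q : ℝ) * (GG b T act hne w).MinCost + C4 b K R cs))
      ≤ ⨅ a' : {a' : Gh.Assign // Gh.IsNE a'},
          ENNReal.ofReal (Gh.SC a'.1 / Gh.MinCost) := by
    apply le_iInf
    rintro ⟨ah, hNEah⟩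
    obtain ⟨a2, ha2, rfl⟩ := (isAssign_Rep_iff b T (cQ (K := K) w cs q) ah).mp hNEah.1
    have hNEH : (HG b T act hne w p S cs q).IsNE a2 :=
      (NE_Rep_iff b T (cQ (K := K) w cs q) a2 ha2).mp hNEah
    obtain ⟨bb, hfb, rfl⟩ := (isAssign_HG_iff a2).mp hNEH.1
    have hNEGG : (GG b T act hne w).IsNE bb := by
      apply NE_GG_of_NE_HG hS1 hSK hw bb hfb q _ hNEH
      intro i s hs hneg
      exact hq2 (bb, i, s) hneg
    have hSCb : (GG b T act hne w).SC astar ≤ (GG b T act hne w).SC bb :=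
      hmin bb (Finset.mem_filter.mpr ⟨Finset.mem_univ _, hNEGG⟩)
    have hSClb : (q : ℝ) * (GG b T act hne w).SC astar - C4 b K R cs
        ≤ (HG b T act hne w p S cs q).SC (Φm p S bb) := by
      have h1 := (abs_le.mp (SC_HG_approx (b := b) (T := T) (act := act) (hne := hne)
        (p := p) (cs := cs) (q := q) hS1 hw hSK bb)).1
      have h2 : (q : ℝ) * (GG b T act hne w).SC astar
          ≤ (q : ℝ) * (GG b T act hne w).SC bb :=
        mul_le_mul_of_nonneg_left hSCb (Nat.cast_nonneg q)
      linarith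
    have hSCeq : Gh.SC (Ψ (cQ (K := K) w cs q) (Φm p S bb))
        = (HG b T act hne w p S cs q).SC (Φm p S bb) :=
      SC_Rep b T (cQ (K := K) w cs q) (Φm p S bb)
    apply ENNReal.ofReal_le_ofReal
    apply div_le_div₀
    · rw [hSCeq]
      have hfeas : Gh.IsAssign (Ψ (cQ (K := K) w cs q) (Φm p S bb)) := hNEah.1
      have := minCost_le Gh hfeas
      rw [hSCeq] at this
      linarith
    · rw [hSCeq]; exact hSClb
    · exact hMCpos
    · rw [hminEq]; exact hMCub
  refine le_trans hstep ?_
  calc (⨅ a' : {a' : Gh.Assign // Gh.IsNE a'}, ENNReal.ofReal (Gh.SC a'.1 / Gh.MinCost))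
      ≤ ⨆ _ : InClass n m b T Gh ∧ 0 < Gh.MinCost,
          ⨅ a' : {a' : Gh.Assign // Gh.IsNE a'}, ENNReal.ofReal (Gh.SC a'.1 / Gh.MinCost) :=
        le_iSup_of_le ⟨hInCls, hMCpos⟩ le_rfl
    _ ≤ PoS n m b T := le_iSup_of_le Gh le_rfl

end PF
end Chunk8

section Final

open Finset Filter
open scoped Classical

/-- Over congestion games with at most `n` users and costs
generated by convex, nondecreasing basis functions: for every local mechanism
`T`, the linear mechanism `T'` defined by `T'(Σ α_j b_j) = Σ α_j T(b_j)`
satisfies `PoA(T') ≤ PoA(T)` and `PoS(T') ≤ PoS(T)`; consequently (assuming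
each mechanism admits such a linearization), any mechanism that is Pareto
optimal among linear local mechanisms is Pareto optimal among all local
mechanisms. -/
theorem linear_mechanisms_are_pareto_optimal
    (n m : ℕ) (b : Fin m → ℕ → ℝ)
    (hb0 : ∀ j, b j 0 = 0)
    (hbmono : ∀ j, ∀ x : ℕ, 1 ≤ x → x < n → b j x ≤ b j (x + 1))
    (hbconv : ∀ j, ∀ x : ℕ, 1 ≤ x → x + 1 ≤ n →
      b j x - b j (x - 1) ≤ b j (x + 1) - b j x) :
    (∀ T T' : Mech,
      (∀ α : Fin m → ℝ, (∀ j, 0 ≤ α j) →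
        ∀ x, T' (fun y => ∑ j, α j * b j y) x = ∑ j, α j * T (b j) x) →
      PoA n m b T' ≤ PoA n m b T ∧ PoS n m b T' ≤ PoS n m b T) ∧
    ((∀ T : Mech, ∃ T' : Mech,
        ∀ α : Fin m → ℝ, (∀ j, 0 ≤ α j) →
          ∀ x, T' (fun y => ∑ j, α j * b j y) x = ∑ j, α j * T (b j) x) →
      ∀ Tlin : Mech, IsLinear m b Tlin →
        (∀ T : Mech, IsLinear m b T → ¬ Dominates n m b T Tlin) →
        ∀ T : Mech, ¬ Dominates n m b T Tlin) := by
  have main : ∀ T T' : Mech,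
      (∀ α : Fin m → ℝ, (∀ j, 0 ≤ α j) →
        ∀ x, T' (fun y => ∑ j, α j * b j y) x = ∑ j, α j * T (b j) x) →
      PoA n m b T' ≤ PoA n m b T ∧ PoS n m b T' ≤ PoS n m b T := by
    intro T T' hT'
    constructor
    · apply iSup_le
      intro G
      apply iSup_le
      intro hGp
      apply iSup_le
      intro a
      apply iSup_le
      intro hNE
      obtain ⟨hcls, hMC⟩ := hGp
      obtain ⟨K, R, act2, hne2, cost2, tax2⟩ := G
      obtain ⟨w, hw0, hEq⟩ := PF.exists_mkG b T hT' (CGame.mk K R act2 hne2 cost2 tax2) hcls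
      have hEq' : CGame.mk K R act2 hne2 cost2 tax2 = PF.mkG b T K R act2 hne2 w := hEq
      rw [hEq'] at hMC
      revert hNE
      revert a
      rw [hEq']
      intro a hNE
      have hKn : K ≤ n := hcls.1
      exact PF.ratio_le_PoA b T act2 hne2 w hw0 hKn hMC a hNE
    · apply iSup_le
      intro G
      apply iSup_le
      intro hGp
      obtain ⟨hcls, hMC⟩ := hGp
      obtain ⟨K, R, act2, hne2, cost2, tax2⟩ := G
      obtain ⟨w, hw0, hEq⟩ := PF.exists_mkG b T hT' (CGame.mk K R act2 hne2 cost2 tax2) hcls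
      have hEq' : CGame.mk K R act2 hne2 cost2 tax2 = PF.mkG b T K R act2 hne2 w := hEq
      rw [hEq'] at hMC
      rw [hEq']
      have hKn : K ≤ n := hcls.1
      exact PF.iInf_le_PoS b T act2 hne2 w hw0 hKn hMC
  refine ⟨main, ?_⟩
  intro hex Tlin hTlin hopt T hdom
  obtain ⟨T', hT'⟩ := hex T
  have hm := main T T' hT'
  have hTb : ∀ (j : Fin m) (x : ℕ), T' (b j) x = T (b j) x := by
    intro j x
    have hfun : (fun y => ∑ j', (if j' = j then (1 : ℝ) else 0) * b j' y) = b j := by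
      funext y
      rw [Finset.sum_congr rfl (fun j' (_ : j' ∈ Finset.univ) => by
        rw [ite_mul, one_mul, zero_mul] :
        ∀ j' ∈ Finset.univ, (if j' = j then (1 : ℝ) else 0) * b j' y
          = if j' = j then b j' y else 0)]
      rw [Finset.sum_ite_eq' Finset.univ j (fun j' => b j' y)]
      simp
    have h := hT' (fun j' => if j' = j then 1 else 0)
      (fun j' => by by_cases hj : j' = j <;> simp [hj]) x
    rw [hfun] at h
    rw [h]
    rw [Finset.sum_congr rfl (fun j' (_ : j' ∈ Finset.univ) => by
      rw [ite_mul, one_mul, zero_mul] :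
      ∀ j' ∈ Finset.univ, (if j' = j then (1 : ℝ) else 0) * T (b j') x
        = if j' = j then T (b j') x else 0)]
    rw [Finset.sum_ite_eq' Finset.univ j (fun j' => T (b j') x)]
    simp
  have hlin : IsLinear m b T' := by
    intro α hα x
    rw [hT' α hα x]
    exact Finset.sum_congr rfl (fun j _ => by rw [hTb j x])
  apply hopt T' hlin
  exact ⟨hm.1.trans hdom.1, hm.2.trans hdom.2.1,
    hdom.2.2.imp (fun h => lt_of_le_of_lt hm.1 h) (fun h => lt_of_le_of_lt hm.2 h)⟩

end Final
end
end

section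
/- Let b : {0,…,n+1} → ℝ be a positive, convex, nondecreasing function on {1,…,n} with b(0) = 0, and consider the linear program: maximize ρ over F : {0,…,n+1} → ℝ with F(0) = F(n+1) = 0 and ρ ∈ ℝ, subject to b(y)·y − ρ·b(x)·x + F(x)·(x−z) − F(x+1)·(y−z) ≥ 0 for all (x,y,z) ∈ I(n). Every optimal solution (F, ρ*) has F nondecreasing on {1,…,n}, and if the optimal value satisfies ρ* < 1 then the optimal function is unique: any two optimal solutions (F, ρ*) and (F', ρ*) satisfy F(x) = F'(x) for all x ∈ {1,…,n}. -/
open scoped BigOperators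

noncomputable section

/-- Feasibility in the linear program: `(F, ρ)` is feasible for the basis
function `b` and `n` users if `F(0) = F(n+1) = 0` and
`b(y)·y − ρ·b(x)·x + F(x)·(x−z) − F(x+1)·(y−z) ≥ 0` for all triples
`(x, y, z) ∈ I(n)`, i.e. naturals with `z ≤ min{x,y}` and `1 ≤ x+y−z ≤ n`. -/
def FeasPoA (n : ℕ) (b : ℕ → ℝ) (F : ℕ → ℝ) (ρ : ℝ) : Prop :=
  F 0 = 0 ∧ F (n + 1) = 0 ∧
  ∀ x y z : ℕ, x ≤ n → y ≤ n → z ≤ x → z ≤ y → 1 ≤ x + y - z → x + y - z ≤ n →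
    b y * y - ρ * (b x * x) + F x * ((x : ℝ) - (z : ℝ))
      - F (x + 1) * ((y : ℝ) - (z : ℝ)) ≥ 0

set_option linter.unusedSectionVars false
set_option maxHeartbeats 1000000

namespace PoAAux

variable {n : ℕ} {b : ℕ → ℝ} {ρ : ℝ} {F : ℕ → ℝ}

def g (b : ℕ → ℝ) (x : ℕ) : ℝ := b x * x

def blk (n : ℕ) (x : ℕ) : Finset (ℕ × ℕ) :=
  ((Finset.range (n+1)) ×ˢ (Finset.range (n+1))).filter
    (fun p => p.2 ≤ x ∧ p.2 < p.1 ∧ x + p.1 - p.2 ≤ n)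

lemma mem_blk {x : ℕ} {p : ℕ × ℕ} :
    p ∈ blk n x ↔ p.1 ≤ n ∧ p.2 ≤ x ∧ p.2 < p.1 ∧ x + p.1 - p.2 ≤ n := by
  simp only [blk, Finset.mem_filter, Finset.mem_product, Finset.mem_range]
  constructor
  · rintro ⟨⟨h1, h2⟩, h3, h4, h5⟩; exact ⟨by omega, h3, h4, h5⟩
  · rintro ⟨h1, h3, h4, h5⟩; exact ⟨⟨by omega, by omega⟩, h3, h4, h5⟩

lemma blk_nonempty {x : ℕ} (hx : x + 1 ≤ n) : (blk n x).Nonempty :=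
  ⟨(x+1, x), by rw [mem_blk]; exact ⟨by omega, le_refl _, by omega, by omega⟩⟩

def term (b : ℕ → ℝ) (ρ : ℝ) (x : ℕ) (u : ℝ) (p : ℕ × ℕ) : ℝ :=
  (g b p.1 - ρ * g b x + ((x : ℝ) - (p.2 : ℝ)) * u) / ((p.1 : ℝ) - (p.2 : ℝ))

def M (n : ℕ) (b : ℕ → ℝ) (ρ : ℝ) : ℕ → ℝ
  | 0 => 0
  | (x+1) => if h : (blk n x).Nonempty then (blk n x).inf' h (term b ρ x (M n b ρ x)) else 0

def L (b : ℕ → ℝ) (ρ : ℝ) (x : ℕ) : ℝ :=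
  if h : (Finset.range x).Nonempty then
    (Finset.range x).sup' h (fun y => (ρ * g b x - g b y) / ((x : ℝ) - (y : ℝ)))
  else 0

section Gfacts
variable (hn : 0 < n) (hb0 : b 0 = 0)
  (hbpos : ∀ x : ℕ, 1 ≤ x → x ≤ n → 0 < b x)
  (hbmono : ∀ x : ℕ, 1 ≤ x → x < n → b x ≤ b (x + 1))
  (hbconv : ∀ x : ℕ, 1 ≤ x → x + 1 ≤ n → b x - b (x - 1) ≤ b (x + 1) - b x)

include hb0 hbpos hbmono in
lemma b_le : ∀ {x y : ℕ}, x ≤ y → y ≤ n → b x ≤ b y := by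
  intro x y hxy hyn
  induction y with
  | zero => interval_cases x; exact le_refl _
  | succ k ih =>
    rcases Nat.lt_or_ge x (k+1) with h | h
    · have hk : x ≤ k := by omega
      have h1 : b x ≤ b k := ih hk (by omega)
      rcases Nat.eq_zero_or_pos k with hk0 | hk0
      · have hx0 : x = 0 := by omega
        rw [hx0, hb0]
        exact le_of_lt (hbpos (k+1) (by omega) hyn)
      · exact le_trans h1 (hbmono k (by omega) (by omega))
    · have : x = k+1 := by omega
      rw [this]

include hb0 hbpos in
lemma b_nonneg : ∀ {x : ℕ}, x ≤ n → 0 ≤ b x := by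
  intro x hx
  rcases Nat.eq_zero_or_pos x with h | h
  · subst h; rw [hb0]
  · exact le_of_lt (hbpos x h hx)

include hb0 hbpos in
lemma g_nonneg {x : ℕ} (hx : x ≤ n) : 0 ≤ g b x := by
  have := b_nonneg hb0 hbpos hx
  simp only [g]; positivity

include hbpos in
lemma g_pos {x : ℕ} (h1 : 1 ≤ x) (hx : x ≤ n) : 0 < g b x := by
  have := hbpos x h1 hx
  have : (0:ℝ) < x := by exact_mod_cast h1
  simp only [g]
  have := hbpos x ‹1 ≤ x› hx
  positivity

include hb0 hbpos hbmono in
lemma g_mono : ∀ {x y : ℕ}, x ≤ y → y ≤ n → g b x ≤ g b y := by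
  intro x y hxy hyn
  have hb := b_le hb0 hbpos hbmono hxy hyn
  have hbx := b_nonneg hb0 hbpos (le_trans hxy hyn)
  have hc : (x:ℝ) ≤ (y:ℝ) := by exact_mod_cast hxy
  have hx0 : (0:ℝ) ≤ (x:ℝ) := by positivity
  simp only [g]
  nlinarith

include hb0 hbconv in
lemma b_inc : ∀ x : ℕ, x + 1 ≤ n → b 1 ≤ b (x+1) - b x := by
  intro x
  induction x with
  | zero => intro _; simp [hb0]
  | succ k ih =>
    intro h
    have h1 := hbconv (k+1) (by omega) (by omega)
    have h2 := ih (by omega)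
    simp only [Nat.add_sub_cancel] at h1
    linarith

include hb0 hbmono hbconv in
lemma Dstep : ∀ m : ℕ, m + 2 ≤ n → g b (m+1) - g b m ≤ g b (m+2) - g b (m+1) := by
  intro m hm
  rcases Nat.eq_zero_or_pos m with h0 | h0
  · subst h0
    have h1 := hbmono 1 le_rfl (by omega)
    simp only [g, hb0]
    push_cast
    nlinarith
  · have h1 := hbconv (m+1) (by omega) (by omega)
    have h2 := hbmono (m+1) (by omega) (by omega)
    simp only [Nat.add_sub_cancel] at h1
    have hm0 : (0:ℝ) ≤ (m:ℝ) := by positivity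
    simp only [g]
    push_cast
    nlinarith

include hb0 hbpos hbmono hbconv in
lemma Dmono : ∀ {j k : ℕ}, j ≤ k → k + 1 ≤ n →
    g b (j+1) - g b j ≤ g b (k+1) - g b k := by
  intro j k hjk hk
  induction k with
  | zero => interval_cases j; exact le_refl _
  | succ m ih =>
    rcases Nat.lt_or_ge j (m+1) with h | h
    · exact le_trans (ih (by omega) (by omega)) (Dstep hb0 hbmono hbconv m (by omega))
    · have : j = m+1 := by omega
      rw [this]

include hb0 hbpos hbmono hbconv in
/-- chord upper: g c - g a ≤ (c-a)·(g(m+1)-g m)  for a ≤ c ≤ m+1 ≤ n -/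
lemma chordU : ∀ {a c m : ℕ}, a ≤ c → c ≤ m + 1 → m + 1 ≤ n →
    g b c - g b a ≤ ((c:ℝ) - (a:ℝ)) * (g b (m+1) - g b m) := by
  intro a c m hac hcm hmn
  induction c with
  | zero => interval_cases a; simp
  | succ k ih =>
    rcases Nat.lt_or_ge a (k+1) with h | h
    · have h1 := ih (by omega) (by omega)
      have h2 := Dmono hb0 hbpos hbmono hbconv (show k ≤ m by omega) hmn
      push_cast
      push_cast at h1
      nlinarith
    · have : a = k+1 := by omega
      subst this
      simp

include hb0 hbpos hbmono hbconv in
/-- chord lower: g c - g a ≥ (c-a)·(g(m+1)-g m) for m ≤ a ≤ c ≤ n -/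
lemma chordL : ∀ {a c m : ℕ}, m ≤ a → a ≤ c → c ≤ n →
    ((c:ℝ) - (a:ℝ)) * (g b (m+1) - g b m) ≤ g b c - g b a := by
  intro a c m hma hac hcn
  induction c with
  | zero => interval_cases a; simp
  | succ k ih =>
    rcases Nat.lt_or_ge a (k+1) with h | h
    · have h1 := ih (by omega) (by omega)
      have h2 := Dmono hb0 hbpos hbmono hbconv (show m ≤ k by omega) (by omega)
      push_cast
      push_cast at h1
      nlinarith
    · have : a = k+1 := by omega
      subst this
      simp

end Gfacts

lemma blk_denpos {x : ℕ} {p : ℕ × ℕ} (hp : p ∈ blk n x) : (0:ℝ) < (p.1 : ℝ) - (p.2 : ℝ) := by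
  rw [mem_blk] at hp
  have : (p.2:ℝ) < p.1 := by exact_mod_cast hp.2.2.1
  linarith

lemma blk_coefnn {x : ℕ} {p : ℕ × ℕ} (hp : p ∈ blk n x) : (0:ℝ) ≤ (x : ℝ) - (p.2 : ℝ) := by
  rw [mem_blk] at hp
  have : (p.2:ℝ) ≤ x := by exact_mod_cast hp.2.1
  linarith

lemma term_mono {x : ℕ} {u v : ℝ} {p : ℕ × ℕ} (hp : p ∈ blk n x) (huv : u ≤ v) :
    term b ρ x u p ≤ term b ρ x v p := by
  have hd := blk_denpos hp
  have hc := blk_coefnn hp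
  unfold term
  apply (div_le_div_iff_of_pos_right hd).mpr
  nlinarith

lemma M_le_term {x : ℕ} {p : ℕ × ℕ} (hp : p ∈ blk n x) :
    M n b ρ (x+1) ≤ term b ρ x (M n b ρ x) p := by
  show (if h : (blk n x).Nonempty then (blk n x).inf' h (term b ρ x (M n b ρ x)) else 0) ≤ _
  rw [dif_pos ⟨p, hp⟩]
  exact Finset.inf'_le _ hp

lemma le_M {x : ℕ} {c : ℝ} (hx : x + 1 ≤ n)
    (h : ∀ p ∈ blk n x, c ≤ term b ρ x (M n b ρ x) p) : c ≤ M n b ρ (x+1) := by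
  show c ≤ (if h : (blk n x).Nonempty then (blk n x).inf' h (term b ρ x (M n b ρ x)) else 0)
  rw [dif_pos (blk_nonempty hx)]
  exact Finset.le_inf' _ _ h

lemma exists_M_eq {x : ℕ} (hx : x + 1 ≤ n) :
    ∃ p ∈ blk n x, M n b ρ (x+1) = term b ρ x (M n b ρ x) p := by
  obtain ⟨p, hp, he⟩ := Finset.exists_mem_eq_inf' (blk_nonempty hx) (term b ρ x (M n b ρ x))
  refine ⟨p, hp, ?_⟩
  show (if h : (blk n x).Nonempty then (blk n x).inf' h (term b ρ x (M n b ρ x)) else 0) = _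
  rw [dif_pos (blk_nonempty hx)]
  exact he

lemma L_ge {x y : ℕ} (hy : y < x) :
    (ρ * g b x - g b y) / ((x : ℝ) - (y : ℝ)) ≤ L b ρ x := by
  unfold L
  rw [dif_pos ⟨y, Finset.mem_range.mpr hy⟩]
  exact Finset.le_sup' (fun y => (ρ * g b x - g b y) / ((x : ℝ) - (y : ℝ))) (Finset.mem_range.mpr hy)

lemma L_le {x : ℕ} {c : ℝ} (h1 : 1 ≤ x)
    (h : ∀ y < x, (ρ * g b x - g b y) / ((x : ℝ) - (y : ℝ)) ≤ c) : L b ρ x ≤ c := by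
  unfold L
  rw [dif_pos ⟨0, Finset.mem_range.mpr h1⟩]
  exact Finset.sup'_le _ _ (fun y hy => h y (Finset.mem_range.mp hy))

lemma exists_L_eq {x : ℕ} (h1 : 1 ≤ x) :
    ∃ w < x, L b ρ x = (ρ * g b x - g b w) / ((x : ℝ) - (w : ℝ)) := by
  obtain ⟨w, hw, he⟩ := Finset.exists_mem_eq_sup' (⟨0, Finset.mem_range.mpr h1⟩ :
    (Finset.range x).Nonempty) (fun y => (ρ * g b x - g b y) / ((x : ℝ) - (y : ℝ)))
  refine ⟨w, Finset.mem_range.mp hw, ?_⟩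
  unfold L
  rw [dif_pos ⟨0, Finset.mem_range.mpr h1⟩]
  exact he

section WithHyp
variable (hn : 0 < n) (hb0 : b 0 = 0)
  (hbpos : ∀ x : ℕ, 1 ≤ x → x ≤ n → 0 < b x)
  (hbmono : ∀ x : ℕ, 1 ≤ x → x < n → b x ≤ b (x + 1))
  (hbconv : ∀ x : ℕ, 1 ≤ x → x + 1 ≤ n → b x - b (x - 1) ≤ b (x + 1) - b x)
  (hρ0 : 0 ≤ ρ) (hρ1 : ρ ≤ 1)
  (hF : FeasPoA n b F ρ)

lemma g_zero : g b 0 = 0 := by simp [g]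


lemma term_simp {x : ℕ} {u : ℝ} {p : ℕ × ℕ} :
    term b ρ x u p = (g b p.1 - ρ * g b x + ((x : ℝ) - (p.2 : ℝ)) * u) / ((p.1 : ℝ) - (p.2 : ℝ)) := rfl

include hb0 hbpos hbmono hn in
lemma M_one : M n b ρ 1 = b 1 := by
  have key : ∀ p ∈ blk n 0, term b ρ 0 (M n b ρ 0) p = b p.1 := by
    intro p hp
    rw [mem_blk] at hp
    obtain ⟨hy, hz, hzy, _⟩ := hp
    have hz0 : p.2 = 0 := by omega
    have hy1 : 1 ≤ p.1 := by omega
    have hyR : (0:ℝ) < (p.1:ℝ) := by exact_mod_cast hy1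
    rw [term_simp, hz0]
    simp only [g, hb0, Nat.cast_zero, zero_mul, mul_zero, sub_zero, sub_self, zero_mul]
    rw [mul_comm (b p.1) ((p.1:ℝ))]
    field_simp
    ring
  have h10 : (1, 0) ∈ blk n 0 := by rw [mem_blk]; exact ⟨hn, le_refl _, by omega, by omega⟩
  apply le_antisymm
  · have := M_le_term (n:=n) (b:=b) (ρ := ρ) h10
    rwa [key _ h10] at this
  · apply le_M hn
    intro p hp
    rw [key p hp]
    rw [mem_blk] at hp
    exact b_le hb0 hbpos hbmono (by omega) hp.1

include hF in
lemma feas_le {x : ℕ} {p : ℕ × ℕ} (hp : p ∈ blk n x) :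
    F (x+1) ≤ term b ρ x (F x) p := by
  have hd := blk_denpos hp
  rw [mem_blk] at hp
  obtain ⟨hy, hz, hzy, hs⟩ := hp
  have hcon := hF.2.2 x p.1 p.2 (by omega) hy hz (by omega) (by omega) hs
  rw [term_simp, le_div_iff₀ hd]
  simp only [g]
  nlinarith [hcon]

include hF in
lemma feas_lower {x y : ℕ} (h1 : 1 ≤ x) (hx : x ≤ n) (hy : y < x) :
    ρ * g b x - g b y ≤ ((x:ℝ) - (y:ℝ)) * F x := by
  have hcon := hF.2.2 x y y hx (by omega) (by omega) (le_refl _) (by omega) (by omega)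
  have : ((y:ℝ) - (y:ℝ)) = 0 := by ring
  simp only [g]
  nlinarith [hcon]

include hn hb0 hbpos hbmono hF in
lemma F_le_M : ∀ x : ℕ, 1 ≤ x → x ≤ n → F x ≤ M n b ρ x := by
  intro x
  induction x with
  | zero => omega
  | succ k ih =>
    intro _ hkn
    rcases Nat.eq_zero_or_pos k with hk0 | hk0
    · subst hk0
      rw [M_one hn hb0 hbpos hbmono]
      have hcon := hF.2.2 0 1 0 (by omega) (by omega) (by omega) (by omega) (by omega) (by omega)
      have hF0 : F 0 = 0 := hF.1
      simp only [hF0, g] at hcon ⊢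
      push_cast at hcon
      nlinarith [hcon]
    · apply le_M hkn
      intro p hp
      exact le_trans (feas_le hF hp) (term_mono hp (ih hk0 (by omega)))

include hF in
lemma L_le_F {x : ℕ} (h1 : 1 ≤ x) (hx : x ≤ n) : L b ρ x ≤ F x := by
  apply L_le h1
  intro y hy
  have hd : (0:ℝ) < (x:ℝ) - (y:ℝ) := by
    have : (y:ℝ) < x := by exact_mod_cast hy
    linarith
  rw [div_le_iff₀ hd]
  have := feas_lower hF h1 hx hy
  nlinarith [this]

include hn hb0 hbpos hbmono hF in
lemma L_le_M {x : ℕ} (h1 : 1 ≤ x) (hx : x ≤ n) : L b ρ x ≤ M n b ρ x :=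
  le_trans (L_le_F hF h1 hx) (F_le_M hn hb0 hbpos hbmono hF x h1 hx)

include hn hb0 hbpos hbmono hbconv hρ0 hρ1 in
lemma UP : ∀ x : ℕ, 1 ≤ x → ∀ y : ℕ, x < y → y ≤ n →
    M n b ρ x * ((y:ℝ) - (x:ℝ)) ≤ g b y - ρ * g b x := by
  intro x
  induction x with
  | zero => omega
  | succ k ih =>
    intro _ y hxy hyn
    rcases Nat.eq_zero_or_pos k with hk0 | hk0
    · subst hk0
      rw [M_one hn hb0 hbpos hbmono]
      have hby : b 1 ≤ b y := b_le hb0 hbpos hbmono (by omega) hyn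
      have hb1 : 0 < b 1 := hbpos 1 le_rfl hn
      have hyR : (1:ℝ) ≤ (y:ℝ) := by exact_mod_cast by omega
      have hbynn : 0 ≤ b y := le_of_lt (lt_of_lt_of_le hb1 hby)
      simp only [g]
      push_cast
      nlinarith
    · have hkn : k + 1 ≤ n := by omega
      have hp : ((y, k + y - n) : ℕ × ℕ) ∈ blk n k := by
        rw [mem_blk]
        refine ⟨hyn, by omega, by omega, by omega⟩
      have hM := M_le_term (n:=n) (b:=b) (ρ := ρ) hp
      have hd := blk_denpos hp
      have hc := blk_coefnn hp
      simp only at hd hc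
      have he : (0:ℝ) < (y:ℝ) - (k:ℝ) := by
        have : (k:ℝ) < y := by exact_mod_cast by omega
        linarith
      have hUPy : M n b ρ k * ((y:ℝ) - (k:ℝ)) ≤ g b y - ρ * g b k := ih hk0 y (by omega) hyn
      have hterm : term b ρ k (M n b ρ k) (y, k + y - n) ≤ (g b y - ρ * g b k) / ((y:ℝ) - (k:ℝ)) := by
        rw [term_simp, div_le_div_iff₀ hd he]
        have h1 : ((k:ℝ) - ((k + y - n : ℕ):ℝ)) * (M n b ρ k * ((y:ℝ) - (k:ℝ)))
            ≤ ((k:ℝ) - ((k + y - n : ℕ):ℝ)) * (g b y - ρ * g b k) :=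
          mul_le_mul_of_nonneg_left hUPy hc
        nlinarith [h1]
      have hyk1 : (0:ℝ) < (y:ℝ) - ((k:ℝ) + 1) := by
        have h' : ((k:ℝ) + 1) < (y:ℝ) := by exact_mod_cast hxy
        linarith
      have hgm : g b k ≤ g b (k+1) := g_mono hb0 hbpos hbmono (by omega) hkn
      have hgnn : 0 ≤ g b (k+1) := g_nonneg hb0 hbpos hkn
      have hchord := chordL hb0 hbpos hbmono hbconv (show k ≤ k+1 by omega) (show k+1 ≤ y by omega) hyn
      push_cast at hchord
      have hA0 : (0:ℝ) ≤ ((y:ℝ) - ((k:ℝ)+1)) * (g b (k+1) - g b k) + g b (k+1) := by nlinarith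
      have hAgy : ((y:ℝ) - ((k:ℝ)+1)) * (g b (k+1) - g b k) + g b (k+1) ≤ g b y := by nlinarith
      have hρA : ρ * (((y:ℝ) - ((k:ℝ)+1)) * (g b (k+1) - g b k) + g b (k+1))
          ≤ ((y:ℝ) - ((k:ℝ)+1)) * (g b (k+1) - g b k) + g b (k+1) := by nlinarith
      have hclaim2 : (g b y - ρ * g b k) / ((y:ℝ) - (k:ℝ)) * ((y:ℝ) - ((k:ℝ)+1))
          ≤ g b y - ρ * g b (k+1) := by
        rw [div_mul_eq_mul_div, div_le_iff₀ he]
        nlinarith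
      have hfin := mul_le_mul_of_nonneg_right (le_trans hM hterm) (le_of_lt hyk1)
      push_cast
      exact le_trans hfin hclaim2

include hn hb0 hbpos hbmono hbconv hρ0 hρ1 hF in
lemma M_mono_step {x : ℕ} (h1 : 1 ≤ x) (hx : x + 1 ≤ n) :
    M n b ρ x ≤ M n b ρ (x+1) := by
  apply le_M hx
  intro p hp
  have hd := blk_denpos hp
  have hc := blk_coefnn hp
  rw [mem_blk] at hp
  obtain ⟨hy, hz, hzy, hs⟩ := hp
  rw [term_simp, le_div_iff₀ hd]
  rcases lt_trichotomy p.1 x with h | h | h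
  · -- y < x : use L
    have hL := le_trans (L_ge (ρ := ρ) h) (L_le_M hn hb0 hbpos hbmono hF h1 (by omega))
    have hdxy : (0:ℝ) < (x:ℝ) - (p.1:ℝ) := by
      have : (p.1:ℝ) < x := by exact_mod_cast h
      linarith
    rw [div_le_iff₀ hdxy] at hL
    nlinarith [hL]
  · -- y = x
    subst h
    have hgx : 0 ≤ g b p.1 := g_nonneg hb0 hbpos (by omega)
    nlinarith
  · -- y > x
    have hUP := UP hn hb0 hbpos hbmono hbconv hρ0 hρ1 x h1 p.1 h hy
    nlinarith [hUP]

include hn hb0 hbpos hbmono hbconv hρ0 hρ1 hF in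
lemma M_mono {x y : ℕ} (h1 : 1 ≤ x) (hxy : x ≤ y) (hy : y ≤ n) :
    M n b ρ x ≤ M n b ρ y := by
  induction y with
  | zero => omega
  | succ k ih =>
    rcases Nat.lt_or_ge x (k+1) with h | h
    · exact le_trans (ih (by omega) (by omega))
        (M_mono_step hn hb0 hbpos hbmono hbconv hρ0 hρ1 hF (by omega) hy)
    · have : x = k+1 := by omega
      rw [this]

include hn hb0 hbpos hbmono hbconv in
lemma L_strict (hρpos : 0 < ρ) (hρlt : ρ < 1) {x : ℕ} (h1 : 1 ≤ x) (hx : x + 1 ≤ n) :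
    L b ρ x < L b ρ (x+1) := by
  obtain ⟨w, hw, hweq⟩ := exists_L_eq (b := b) (ρ := ρ) h1
  have hXw : (0:ℝ) < (x:ℝ) - (w:ℝ) := by
    have : (w:ℝ) < x := by exact_mod_cast hw
    linarith
  have hXw1 : (0:ℝ) < ((x:ℝ)+1) - (w:ℝ) := by linarith
  have key : (ρ * g b x - g b w) / ((x:ℝ) - (w:ℝ))
      < (ρ * g b (x+1) - g b w) / (((x:ℝ)+1) - (w:ℝ)) := by
    rw [div_lt_div_iff₀ hXw hXw1]
    have hgw : 0 ≤ g b w := g_nonneg hb0 hbpos (by omega)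
    rcases Nat.eq_zero_or_pos w with hw0 | hw0
    · -- w = 0 case : use strict b increase
      subst hw0
      have hbi := b_inc hb0 hbconv x hx
      have hb1 : 0 < b 1 := hbpos 1 le_rfl (by omega)
      simp only [g, hb0, Nat.cast_zero, mul_zero, zero_mul, sub_zero]
      have hxR : (1:ℝ) ≤ (x:ℝ) := by exact_mod_cast h1
      have hbb : 0 < b (x+1) - b x := lt_of_lt_of_le hb1 hbi
      have hx0 : (0:ℝ) < (x:ℝ) := by linarith
      have hx10 : (0:ℝ) < (x:ℝ) + 1 := by linarith
      push_cast
      nlinarith [mul_pos hρpos (mul_pos (mul_pos hx0 hx10) hbb)]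
    · -- w ≥ 1
      have hgwpos : 0 < g b w := g_pos hbpos hw0 (by omega)
      have hchord := chordU hb0 hbpos hbmono hbconv (le_of_lt hw) (show x ≤ x + 1 by omega) hx
      push_cast at hchord
      nlinarith [mul_le_mul_of_nonneg_left
        (show -(g b w) ≤ ((x:ℝ) - (w:ℝ)) * (g b (x+1) - g b x) - g b x by nlinarith)
        (le_of_lt hρpos), mul_pos (show (0:ℝ) < 1 - ρ by linarith) hgwpos]
  have hfin : (ρ * g b (x+1) - g b w) / (((x:ℝ)+1) - (w:ℝ)) ≤ L b ρ (x+1) := by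
    have h2 := L_ge (b := b) (ρ := ρ) (x := x+1) (y := w) (by omega)
    push_cast at h2
    exact h2
  rw [hweq]
  exact lt_of_lt_of_le key hfin


include hn hb0 hbpos hbmono hbconv hρ0 hF in
lemma K0 (hρlt : ρ < 1) {x : ℕ} (h1 : 1 ≤ x) (hx : x + 1 ≤ n) :
    L b ρ x < M n b ρ x := by
  have hρ1 : ρ ≤ 1 := le_of_lt hρlt
  by_contra hcon
  push_neg at hcon
  -- hcon : M x ≤ L x
  have hb1 : 0 < b 1 := hbpos 1 le_rfl hn
  have hM1 : M n b ρ 1 = b 1 := M_one hn hb0 hbpos hbmono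
  have hMx1 : b 1 ≤ M n b ρ x := by
    rw [← hM1]
    exact M_mono hn hb0 hbpos hbmono hbconv hρ0 hρ1 hF le_rfl h1 (by omega)
  rcases eq_or_lt_of_le hρ0 with hρz | hρpos
  · -- ρ = 0
    have hLx : L b ρ x ≤ 0 := by
      apply L_le h1
      intro y hy
      have hgy : 0 ≤ g b y := g_nonneg hb0 hbpos (by omega)
      have hgx : 0 ≤ g b x := g_nonneg hb0 hbpos (by omega)
      have hd : (0:ℝ) < (x:ℝ) - (y:ℝ) := by
        have : (y:ℝ) < x := by exact_mod_cast hy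
        linarith
      apply div_nonpos_of_nonpos_of_nonneg _ (le_of_lt hd)
      nlinarith
    nlinarith
  · -- ρ > 0
    have hLL := L_strict hn hb0 hbpos hbmono hbconv hρpos hρlt h1 hx
    have hLM1 : L b ρ (x+1) ≤ M n b ρ (x+1) :=
      L_le_M hn hb0 hbpos hbmono hF (by omega) hx
    -- it suffices to show M (x+1) ≤ L x
    suffices hsuf : M n b ρ (x+1) ≤ L b ρ x by linarith
    obtain ⟨w, hw, hweq⟩ := exists_L_eq (b := b) (ρ := ρ) h1
    have hdw : (0:ℝ) < (x:ℝ) - (w:ℝ) := by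
      have : (w:ℝ) < x := by exact_mod_cast hw
      linarith
    have hkey : L b ρ x * ((x:ℝ) - (w:ℝ)) = ρ * g b x - g b w := by
      rw [hweq]; field_simp
    rcases Nat.eq_zero_or_pos w with hw0 | hw0
    · -- w = 0
      subst hw0
      have hg0 : g b 0 = 0 := by simp [g]
      rcases eq_or_lt_of_le h1 with hx1 | hx2
      · -- x = 1 : direct contradiction
        exfalso
        subst hx1
        rw [hM1] at hcon
        rw [hg0] at hweq
        norm_num at hweq
        have hg1 : g b 1 = b 1 := by simp [g]
        rw [hweq, hg1] at hcon
        nlinarith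
      · -- x ≥ 2
        have hL1p := L_ge (b := b) (ρ := ρ) (x := x) (y := 1) (by omega)
        have hLxval : L b ρ x = ρ * g b x / (x:ℝ) := by
          rw [hweq, hg0]
          push_cast
          ring
        have hxR : (0:ℝ) < (x:ℝ) := by positivity
        have hd1 : (0:ℝ) < (x:ℝ) - 1 := by
          have : (1:ℝ) < (x:ℝ) := by exact_mod_cast hx2
          linarith
        have hg1 : g b 1 = b 1 := by simp [g]
        -- from argmax property at y = 1 : ρ g x ≤ x * b 1
        have hprop : ρ * g b x ≤ (x:ℝ) * b 1 := by
          rw [hLxval] at hL1p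
          push_cast at hL1p
          rw [div_le_div_iff₀ hd1 hxR] at hL1p
          rw [hg1] at hL1p
          nlinarith
        -- L x ≤ b 1 ≤ M x ≤ L x
        have hLxb1 : L b ρ x ≤ b 1 := by
          rw [hLxval, div_le_iff₀ hxR]
          nlinarith
        have hMLx : M n b ρ x = L b ρ x := le_antisymm hcon (by linarith)
        have hMxb1 : M n b ρ x = b 1 := le_antisymm (by linarith) hMx1
        have hρgx : ρ * g b x = (x:ℝ) * b 1 := by
          have : L b ρ x = b 1 := by linarith [hMLx, hMxb1]
          rw [hLxval] at this
          field_simp at this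
          nlinarith [this]
        -- use the witness (1, 0)
        have hp10 : ((1,0) : ℕ × ℕ) ∈ blk n x := by
          rw [mem_blk]; exact ⟨hn, by omega, by omega, by omega⟩
        have hM2 := M_le_term (n:=n) (b:=b) (ρ := ρ) hp10
        rw [term_simp] at hM2
        simp only [Nat.cast_one, Nat.cast_zero, sub_zero, div_one] at hM2
        rw [hg1] at hM2
        have : M n b ρ (x+1) ≤ b 1 - ρ * g b x + (x:ℝ) * M n b ρ x := by
          calc M n b ρ (x+1) ≤ _ := hM2
            _ = b 1 - ρ * g b x + (x:ℝ) * M n b ρ x := by ring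
        rw [hMxb1, hρgx] at this
        have hfin : M n b ρ (x+1) ≤ b 1 := by linarith
        linarith [hMxb1, hMLx]
    · -- w ≥ 1 : emission witness (w, x + w - n)
      have hp : ((w, x + w - n) : ℕ × ℕ) ∈ blk n x := by
        rw [mem_blk]
        exact ⟨by omega, by omega, by omega, by omega⟩
      have hM2 := le_trans (M_le_term (n:=n) (b:=b) (ρ := ρ) hp) (term_mono hp hcon)
      have hd := blk_denpos hp
      have hzc : ((x + w - n : ℕ):ℝ) ≤ (w:ℝ) := by
        exact_mod_cast (by omega : x + w - n ≤ w)
      rw [term_simp] at hM2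
      have hnum : g b w - ρ * g b x + ((x:ℝ) - ((x + w - n : ℕ):ℝ)) * L b ρ x
          = L b ρ x * ((w:ℝ) - ((x + w - n : ℕ):ℝ)) := by
        have h2 : ρ * g b x - g b w = L b ρ x * ((x:ℝ) - (w:ℝ)) := hkey.symm
        nlinarith [h2]
      rw [hnum] at hM2
      rw [mul_div_assoc] at hM2
      rw [div_self (ne_of_gt hd)] at hM2
      simpa using hM2

end WithHyp

/-- Lipschitz constant for M in ρ -/
def Kc (n : ℕ) (b : ℕ → ℝ) : ℕ → ℝ
  | 0 => 0
  | (x+1) => g b x + ((n:ℝ)+1) * Kc n b x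

section WithHyp2
variable (hn : 0 < n) (hb0 : b 0 = 0)
  (hbpos : ∀ x : ℕ, 1 ≤ x → x ≤ n → 0 < b x)
  (hbmono : ∀ x : ℕ, 1 ≤ x → x < n → b x ≤ b (x + 1))
  (hbconv : ∀ x : ℕ, 1 ≤ x → x + 1 ≤ n → b x - b (x - 1) ≤ b (x + 1) - b x)
  (hρ0 : 0 ≤ ρ) (hF : FeasPoA n b F ρ)

include hb0 hbpos in
lemma Kc_nonneg : ∀ x : ℕ, x ≤ n → 0 ≤ Kc n b x := by
  intro x
  induction x with
  | zero => intro _; exact le_refl _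
  | succ k ih =>
    intro hk
    have h1 := ih (by omega)
    have h2 := g_nonneg hb0 hbpos (show k ≤ n by omega)
    show 0 ≤ g b k + ((n:ℝ)+1) * Kc n b k
    have hn1 : (0:ℝ) ≤ (n:ℝ)+1 := by positivity
    nlinarith

include hb0 hbpos in
lemma L_lip {δ : ℝ} (hδ : 0 ≤ δ) {x : ℕ} (h1 : 1 ≤ x) (hx : x ≤ n) :
    L b (ρ + δ) x ≤ L b ρ x + δ * g b x := by
  apply L_le h1
  intro y hy
  have hd : (0:ℝ) < (x:ℝ) - (y:ℝ) := by
    have : (y:ℝ) < x := by exact_mod_cast hy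
    linarith
  have hd1 : (1:ℝ) ≤ (x:ℝ) - (y:ℝ) := by
    have : (y:ℝ) + 1 ≤ x := by exact_mod_cast hy
    linarith
  have hgx : 0 ≤ g b x := g_nonneg hb0 hbpos hx
  have hsplit : ((ρ + δ) * g b x - g b y) / ((x:ℝ) - (y:ℝ))
      = (ρ * g b x - g b y) / ((x:ℝ) - (y:ℝ)) + (δ * g b x) / ((x:ℝ) - (y:ℝ)) := by
    rw [← add_div]
    ring_nf
  rw [hsplit]
  have h2 : (δ * g b x) / ((x:ℝ) - (y:ℝ)) ≤ δ * g b x :=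
    div_le_self (by positivity) hd1
  have h3 := L_ge (b := b) (ρ := ρ) hy
  linarith

include hb0 hbpos in
lemma M_lip {δ : ℝ} (hδ : 0 ≤ δ) : ∀ x : ℕ, x ≤ n →
    M n b ρ x - δ * Kc n b x ≤ M n b (ρ + δ) x := by
  intro x
  induction x with
  | zero =>
    intro _
    show M n b ρ 0 - δ * Kc n b 0 ≤ M n b (ρ+δ) 0
    show (0:ℝ) - δ * 0 ≤ (0:ℝ)
    simp
  | succ k ih =>
    intro hk
    apply le_M hk
    intro p hp
    have hIH := ih (by omega)
    have ht1 : term b (ρ+δ) k (M n b ρ k - δ * Kc n b k) p ≤ term b (ρ+δ) k (M n b (ρ+δ) k) p :=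
      term_mono hp hIH
    have hd := blk_denpos hp
    have hc := blk_coefnn hp
    have hd1 : (1:ℝ) ≤ (p.1:ℝ) - (p.2:ℝ) := by
      rw [mem_blk] at hp
      have : (p.2:ℝ) + 1 ≤ p.1 := by exact_mod_cast hp.2.2.1
      linarith
    have hgk : 0 ≤ g b k := g_nonneg hb0 hbpos (by omega)
    have hKk : 0 ≤ Kc n b k := Kc_nonneg hb0 hbpos k (by omega)
    have hcle : ((k:ℝ) - (p.2:ℝ)) ≤ (n:ℝ) + 1 := by
      have h' : (k:ℝ) ≤ n := by exact_mod_cast (by omega : k ≤ n)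
      have h2 : (0:ℝ) ≤ (p.2:ℝ) := by positivity
      linarith
    have heq : term b (ρ+δ) k (M n b ρ k - δ * Kc n b k) p
        = term b ρ k (M n b ρ k) p
          - (δ * (g b k + ((k:ℝ) - (p.2:ℝ)) * Kc n b k)) / ((p.1:ℝ) - (p.2:ℝ)) := by
      rw [term_simp, term_simp, ← sub_div]
      congr 1
      ring
    have hdiv : (δ * (g b k + ((k:ℝ) - (p.2:ℝ)) * Kc n b k)) / ((p.1:ℝ) - (p.2:ℝ))
        ≤ δ * (g b k + ((k:ℝ) - (p.2:ℝ)) * Kc n b k) := by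
      apply div_le_self _ hd1
      have : 0 ≤ ((k:ℝ) - (p.2:ℝ)) * Kc n b k := mul_nonneg hc hKk
      positivity
    have hKbound : δ * (g b k + ((k:ℝ) - (p.2:ℝ)) * Kc n b k) ≤ δ * Kc n b (k+1) := by
      show _ ≤ δ * (g b k + ((n:ℝ)+1) * Kc n b k)
      apply mul_le_mul_of_nonneg_left _ hδ
      nlinarith
    have hM := M_le_term (n:=n) (b:=b) (ρ := ρ) hp
    linarith

include hn hb0 hbpos hbmono hbconv hρ0 hF in
lemma pinch (hρlt : ρ < 1)
    (hopt : ∀ F' : ℕ → ℝ, ∀ ρ' : ℝ, FeasPoA n b F' ρ' → ρ' ≤ ρ) :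
    M n b ρ n = L b ρ n := by
  rcases eq_or_lt_of_le (L_le_M hn hb0 hbpos hbmono hF hn le_rfl) with he | hlt
  · exact he.symm
  exfalso
  -- build epsilon
  set S := Finset.Icc 1 n with hS
  have hSne : S.Nonempty := ⟨n, by simp [hS]; omega⟩
  set f : ℕ → ℝ := fun x => (M n b ρ x - L b ρ x) / (Kc n b x + g b x + 1) with hf
  set ε := min (S.inf' hSne f) ((1 - ρ)/2) with hε
  have hgap : ∀ x ∈ S, 0 < M n b ρ x - L b ρ x := by
    intro x hxS
    simp only [hS, Finset.mem_Icc] at hxS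
    rcases eq_or_lt_of_le hxS.2 with hxn | hxn
    · rw [hxn]; linarith
    · have := K0 hn hb0 hbpos hbmono hbconv hρ0 hF hρlt hxS.1 (by omega)
      linarith
  have hden : ∀ x ∈ S, 0 < Kc n b x + g b x + 1 := by
    intro x hxS
    simp only [hS, Finset.mem_Icc] at hxS
    have h1 := Kc_nonneg hb0 hbpos x hxS.2
    have h2 := g_nonneg hb0 hbpos hxS.2
    linarith
  have hεpos : 0 < ε := by
    rw [hε]
    apply lt_min _ (by linarith)
    rw [Finset.lt_inf'_iff]
    intro x hxS
    exact div_pos (hgap x hxS) (hden x hxS)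
  have hερ : ρ + ε ≤ 1 := by
    have : ε ≤ (1-ρ)/2 := min_le_right _ _
    linarith
  have hkey : ∀ x : ℕ, 1 ≤ x → x ≤ n → L b (ρ + ε) x ≤ M n b (ρ + ε) x := by
    intro x h1 hx
    have hxS : x ∈ S := by simp [hS]; omega
    have hεf : ε ≤ f x := le_trans (min_le_left _ _) (Finset.inf'_le f hxS)
    have hε2 : ε * (Kc n b x + g b x + 1) ≤ M n b ρ x - L b ρ x := by
      rw [hf] at hεf
      simp only at hεf
      rw [le_div_iff₀ (hden x hxS)] at hεf
      linarith
    have hlip1 := M_lip (ρ := ρ) hb0 hbpos (le_of_lt hεpos) x hx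
    have hlip2 := L_lip (ρ := ρ) hb0 hbpos (le_of_lt hεpos) h1 hx
    have hK := Kc_nonneg hb0 hbpos x hx
    have hg := g_nonneg hb0 hbpos hx
    nlinarith
  -- feasible point at ρ + ε
  set ρ' := ρ + ε with hρ'
  set Fp : ℕ → ℝ := fun k => if 1 ≤ k ∧ k ≤ n then M n b ρ' k else 0 with hFp
  have hfeas' : FeasPoA n b Fp ρ' := by
    refine ⟨by simp [hFp], by simp [hFp], ?_⟩
    intro x y z hxn hyn hzx hzy hs1 hs2
    by_cases hx0 : x = 0
    · subst hx0
      have hz0 : z = 0 := by omega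
      subst hz0
      have hy1 : 1 ≤ y := by omega
      have hFp0 : Fp 0 = 0 := by simp [hFp]
      have hFp1 : Fp 1 = b 1 := by
        rw [hFp]
        simp only [if_pos (⟨le_rfl, hn⟩ : 1 ≤ 1 ∧ 1 ≤ n)]
        exact M_one hn hb0 hbpos hbmono
      rw [hFp0, hFp1]
      have hby := b_le hb0 hbpos hbmono hy1 hyn
      have hb1 : 0 < b 1 := hbpos 1 le_rfl hn
      have hyR : (1:ℝ) ≤ (y:ℝ) := by exact_mod_cast hy1
      simp only [Nat.cast_zero, mul_zero, sub_zero, zero_mul, sub_self]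
      nlinarith
    · have hx1 : 1 ≤ x := by omega
      have hFpx : Fp x = M n b ρ' x := by rw [hFp]; simp only [if_pos (⟨hx1, hxn⟩ : 1 ≤ x ∧ x ≤ n)]
      by_cases hzy' : z = y
      · subst hzy'
        have hc0 : ((z:ℝ) - (z:ℝ)) = 0 := by ring
        rw [hc0, mul_zero, sub_zero]
        rcases eq_or_lt_of_le hzx with hzx' | hzx'
        · subst hzx'
          have hgz : 0 ≤ b z * z := by
            have := b_nonneg hb0 hbpos (le_trans hzx hxn)
            positivity
          nlinarith [hgz]
        · have hLM := hkey x hx1 hxn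
          have hLge := L_ge (b := b) (ρ := ρ') (x := x) (y := z) hzx'
          have hd : (0:ℝ) < (x:ℝ) - (z:ℝ) := by
            have : (z:ℝ) < x := by exact_mod_cast hzx'
            linarith
          rw [div_le_iff₀ hd] at hLge
          rw [hFpx]
          have : L b ρ' x ≤ M n b ρ' x := hLM
          simp only [g] at hLge
          nlinarith
      · have hzy2 : z < y := by omega
        have hxn1 : x + 1 ≤ n := by omega
        have hp : ((y, z) : ℕ × ℕ) ∈ blk n x := by
          rw [mem_blk]
          exact ⟨hyn, hzx, hzy2, hs2⟩
        have hFpx1 : Fp (x+1) = M n b ρ' (x+1) := by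
          rw [hFp]; simp only [if_pos (⟨by omega, hxn1⟩ : 1 ≤ x+1 ∧ x+1 ≤ n)]
        have hM := M_le_term (n:=n) (b:=b) (ρ := ρ') hp
        rw [term_simp] at hM
        have hd := blk_denpos hp
        rw [le_div_iff₀ hd] at hM
        rw [hFpx, hFpx1]
        simp only [g] at hM
        nlinarith
  have := hopt Fp ρ' hfeas'
  rw [hρ'] at this
  linarith

end WithHyp2

section WithHyp3
variable (hn : 0 < n) (hb0 : b 0 = 0)
  (hbpos : ∀ x : ℕ, 1 ≤ x → x ≤ n → 0 < b x)
  (hbmono : ∀ x : ℕ, 1 ≤ x → x < n → b x ≤ b (x + 1))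
  (hbconv : ∀ x : ℕ, 1 ≤ x → x + 1 ≤ n → b x - b (x - 1) ≤ b (x + 1) - b x)
  (hρ0 : 0 ≤ ρ) (hρlt : ρ < 1) (hF : FeasPoA n b F ρ)

lemma term_strict {x : ℕ} {u v : ℝ} {p : ℕ × ℕ} (hp : p ∈ blk n x) (hz : p.2 < x)
    (huv : u < v) : term b ρ x u p < term b ρ x v p := by
  have hd := blk_denpos hp
  have hc : (0:ℝ) < (x:ℝ) - (p.2:ℝ) := by
    have : (p.2:ℝ) < x := by exact_mod_cast hz
    linarith
  rw [term_simp, term_simp, div_lt_div_iff₀ hd hd]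
  have h1 : (g b p.1 - ρ * g b x + ((x:ℝ)-(p.2:ℝ)) * u)
      < (g b p.1 - ρ * g b x + ((x:ℝ)-(p.2:ℝ)) * v) := by nlinarith
  exact mul_lt_mul_of_pos_right h1 hd

include hn hb0 hbpos hbmono hbconv hρ0 hρlt in
lemma Mtop (hn2 : 2 ≤ n) (hpinch : M n b ρ n = L b ρ n) :
    M n b ρ (n-1) ≤ g b n - g b (n-1) := by
  obtain ⟨m, rfl⟩ : ∃ m, n = m + 1 := ⟨n-1, by omega⟩
  have hm1 : 1 ≤ m := by omega
  simp only [Nat.add_sub_cancel]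
  by_contra hMt
  push_neg at hMt
  -- Step A : M (m+1) = g (m+1) - ρ * g m
  have hpmem : ((m+1, m) : ℕ × ℕ) ∈ blk (m+1) m := by
    rw [mem_blk]; exact ⟨le_rfl, le_rfl, by omega, by omega⟩
  have hval : term b ρ m (M (m+1) b ρ m) (m+1, m) = g b (m+1) - ρ * g b m := by
    rw [term_simp]
    push_cast
    have h0 : ((m:ℝ) - (m:ℝ)) = 0 := by ring
    have h1 : ((m:ℝ) + 1 - (m:ℝ)) = 1 := by ring
    rw [h0, h1, zero_mul, add_zero, div_one]
  have hMn : M (m+1) b ρ (m+1) = g b (m+1) - ρ * g b m := by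
    apply le_antisymm
    · have := M_le_term (n := m+1) (b := b) (ρ := ρ) hpmem
      rwa [hval] at this
    · apply le_M le_rfl
      intro p hp
      rw [mem_blk] at hp
      obtain ⟨hy, hzm, hzy, hs⟩ := hp
      have hyz1 : p.1 = p.2 + 1 := by omega
      rcases eq_or_lt_of_le hzm with hzm' | hzm'
      · have hp1 : p = (m+1, m) := by
          ext
          · simp [hyz1, hzm']
          · simp [hzm']
        rw [hp1, hval]
      · -- p.2 < m
        rw [term_simp, hyz1]
        have hden1 : ((p.2:ℝ) + 1 - (p.2:ℝ)) = 1 := by ring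
        push_cast
        rw [hden1, div_one]
        have hcoef : (0:ℝ) < (m:ℝ) - (p.2:ℝ) := by
          have : (p.2:ℝ) < m := by exact_mod_cast hzm'
          linarith
        have hch := chordU hb0 hbpos hbmono hbconv (show p.2 + 1 ≤ m+1 by omega)
          (le_refl (m+1)) (le_refl (m+1))
        push_cast at hch
        nlinarith [mul_le_mul_of_nonneg_left (le_of_lt hMt) (le_of_lt hcoef)]
  -- Step B : contradiction with pinch
  have hLn : L b ρ (m+1) = g b (m+1) - ρ * g b m := by rw [← hpinch]; exact hMn
  obtain ⟨w, hw, hweq⟩ := exists_L_eq (b := b) (ρ := ρ) (x := m+1) (by omega)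
  have hdw : (0:ℝ) < ((m:ℝ)+1) - (w:ℝ) := by
    have : (w:ℝ) < (m:ℝ)+1 := by exact_mod_cast hw
    linarith
  have hEq : ρ * g b (m+1) - g b w = (((m:ℝ)+1) - (w:ℝ)) * (g b (m+1) - ρ * g b m) := by
    rw [hLn] at hweq
    push_cast at hweq
    field_simp at hweq
    linarith [hweq]
  have hch : g b m - g b w ≤ ((m:ℝ) - (w:ℝ)) * (g b (m+1) - g b m) :=
    chordU hb0 hbpos hbmono hbconv (show w ≤ m by omega) (by omega) (by omega)
  have hgn : 0 < g b (m+1) := g_pos hbpos (by omega) le_rfl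
  have hgm : 0 ≤ g b m := g_nonneg hb0 hbpos (by omega)
  have hwm : (w:ℝ) ≤ m := by exact_mod_cast (by omega : w ≤ m)
  have hP : 0 < g b (m+1) + (((m:ℝ)+1) - (w:ℝ)) * g b m := by
    nlinarith [mul_nonneg (le_of_lt hdw) hgm]
  nlinarith [hEq, hch, mul_pos (show (0:ℝ) < 1 - ρ by linarith) hP]

include hn hb0 hbpos hbmono hbconv hρ0 hρlt hF in
lemma downprop (hMtop : M n b ρ (n-1) ≤ g b n - g b (n-1))
    {x : ℕ} (h1 : 1 ≤ x) (hx : x + 1 ≤ n) (hFx : F x < M n b ρ x) :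
    F (x+1) < M n b ρ (x+1) := by
  have hρ1 : ρ ≤ 1 := le_of_lt hρlt
  obtain ⟨p, hp, hpe⟩ := exists_M_eq (b := b) (ρ := ρ) hx
  obtain ⟨y0, z0⟩ := p
  have hpm := mem_blk.mp hp
  simp only at hpm
  obtain ⟨hy, hzx, hzy, hs⟩ := hpm
  rcases eq_or_lt_of_le hzx with hzeq | hzlt
  swap
  · -- z0 < x : direct strict propagation
    calc F (x+1) ≤ term b ρ x (F x) (y0, z0) := feas_le hF hp
      _ < term b ρ x (M n b ρ x) (y0, z0) := term_strict hp hzlt hFx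
      _ = M n b ρ (x+1) := hpe.symm
  · -- z0 = x, so y0 > x: the binding constraint is "pure"
    subst hzeq
    have hxy : z0 < y0 := hzy
    have hpval : M n b ρ (z0+1) = (g b y0 - ρ * g b z0) / ((y0:ℝ) - (z0:ℝ)) := by
      rw [hpe, term_simp]
      simp only [sub_self, zero_mul, add_zero]
    -- find a mixed minimizer q
    have hmain : ∃ q : ℕ × ℕ, q ∈ blk n z0 ∧ q.2 < z0 ∧
        term b ρ z0 (M n b ρ z0) q ≤ M n b ρ (z0+1) := by
      rcases eq_or_lt_of_le hy with hyn | hyn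
      · -- y0 = n : use (n-1, z0-1)
        refine ⟨(n-1, z0-1), ?_, by omega, ?_⟩
        · rw [mem_blk]; exact ⟨by omega, by omega, by omega, by omega⟩
        · rw [term_simp, hpval, hyn]
          have e1 : ((n-1:ℕ):ℝ) = (n:ℝ) - 1 := by
            push_cast [Nat.cast_sub (show 1 ≤ n by omega)]; ring
          have e2 : ((z0-1:ℕ):ℝ) = (z0:ℝ) - 1 := by
            push_cast [Nat.cast_sub h1]; ring
          simp only [e1, e2]
          have hc1 : ((z0:ℝ) - ((z0:ℝ) - 1)) = 1 := by ring
          have hc2 : ((n:ℝ) - 1 - ((z0:ℝ) - 1)) = (n:ℝ) - (z0:ℝ) := by ring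
          rw [hc1, hc2, one_mul]
          have hdnx : (0:ℝ) < (n:ℝ) - (z0:ℝ) := by
            have : (z0:ℝ) < n := by exact_mod_cast (by omega : z0 < n)
            linarith
          rw [div_le_div_iff₀ hdnx hdnx]
          have hMxle : M n b ρ z0 ≤ M n b ρ (n-1) :=
            M_mono hn hb0 hbpos hbmono hbconv hρ0 hρ1 hF h1 (by omega) (by omega)
          nlinarith [hMtop, hMxle, hdnx]
      · -- y0 < n : use (y0, z0 + y0 - n)
        refine ⟨(y0, z0 + y0 - n), ?_, by omega, ?_⟩
        · rw [mem_blk]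
          refine ⟨hy, by omega, by omega, by omega⟩
        · rw [term_simp, hpval]
          have he : (0:ℝ) < (y0:ℝ) - (z0:ℝ) := by
            have : (z0:ℝ) < y0 := by exact_mod_cast hxy
            linarith
          have hq : ((z0 + y0 - n : ℕ):ℝ) ≤ (z0:ℝ) := by
            exact_mod_cast (by omega : z0 + y0 - n ≤ z0)
          have hd : (0:ℝ) < (y0:ℝ) - ((z0 + y0 - n : ℕ):ℝ) := by
            have h' : ((z0 + y0 - n : ℕ):ℝ) < (y0:ℝ) := by
              exact_mod_cast (by omega : z0 + y0 - n < y0)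
            linarith
          rw [div_le_div_iff₀ hd he]
          have hUPx := UP hn hb0 hbpos hbmono hbconv hρ0 hρ1 z0 h1 y0 hxy hy
          have hcnn : (0:ℝ) ≤ (z0:ℝ) - ((z0 + y0 - n : ℕ):ℝ) := by linarith
          nlinarith [mul_le_mul_of_nonneg_left hUPx hcnn]
    obtain ⟨q, hq, hq2, hqle⟩ := hmain
    have hqeq : term b ρ z0 (M n b ρ z0) q = M n b ρ (z0+1) :=
      le_antisymm hqle (M_le_term hq)
    calc F (z0+1) ≤ term b ρ z0 (F z0) q := feas_le hF hq
      _ < term b ρ z0 (M n b ρ z0) q := term_strict hq hq2 hFx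
      _ = M n b ρ (z0+1) := hqeq

include hn hb0 hbpos hbmono hbconv hρ0 hρlt hF in
lemma F_eq_M (hpinch : M n b ρ n = L b ρ n) (hn2 : 2 ≤ n) :
    ∀ x : ℕ, 1 ≤ x → x ≤ n → F x = M n b ρ x := by
  have hρ1 : ρ ≤ 1 := le_of_lt hρlt
  have hMtop := Mtop hn hb0 hbpos hbmono hbconv hρ0 hρlt hn2 hpinch
  have key : ∀ k : ℕ, ∀ x : ℕ, 1 ≤ x → x ≤ n → n ≤ x + k → F x = M n b ρ x := by
    intro k
    induction k with
    | zero =>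
      intro x h1 hxn hnx
      have hxn' : x = n := by omega
      subst hxn'
      apply le_antisymm (F_le_M hn hb0 hbpos hbmono hF x h1 hxn)
      rw [hpinch]
      exact L_le_F hF h1 hxn
    | succ k ih =>
      intro x h1 hxn hnx
      rcases eq_or_lt_of_le hxn with hxeq | hxlt
      · subst hxeq
        apply le_antisymm (F_le_M hn hb0 hbpos hbmono hF x h1 le_rfl)
        rw [hpinch]
        exact L_le_F hF h1 le_rfl
      · rcases eq_or_lt_of_le (F_le_M hn hb0 hbpos hbmono hF x h1 hxn) with he | hlt
        · exact he
        · exfalso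
          have hstep := downprop hn hb0 hbpos hbmono hbconv hρ0 hρlt hF hMtop h1 (by omega) hlt
          have := ih (x+1) (by omega) (by omega) (by omega)
          linarith
  intro x h1 hxn
  exact key n x h1 hxn (by omega)

end WithHyp3
end PoAAux

/-- For a positive, convex, nondecreasing basis function `b`
(with `b(0) = 0`), every optimal solution `(F, ρ*)` of the linear program has
`F` nondecreasing on `{1,…,n}`; moreover, if the optimal value satisfies
`ρ* < 1`, then the optimal function is unique: any two optimal solutions agree
on `{1,…,n}`. -/
theorem optimal_F_nondecreasing_and_unique
    (n : ℕ) (hn : 0 < n) (b : ℕ → ℝ)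
    (hb0 : b 0 = 0)
    (hbpos : ∀ x : ℕ, 1 ≤ x → x ≤ n → 0 < b x)
    (hbmono : ∀ x : ℕ, 1 ≤ x → x < n → b x ≤ b (x + 1))
    (hbconv : ∀ x : ℕ, 1 ≤ x → x + 1 ≤ n → b x - b (x - 1) ≤ b (x + 1) - b x)
    (F : ℕ → ℝ) (ρstar : ℝ)
    (hfeas : FeasPoA n b F ρstar)
    (hopt : ∀ F' : ℕ → ℝ, ∀ ρ' : ℝ, FeasPoA n b F' ρ' → ρ' ≤ ρstar) :
    (∀ x : ℕ, 1 ≤ x → x < n → F x ≤ F (x + 1)) ∧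
    (ρstar < 1 → ∀ F' : ℕ → ℝ, FeasPoA n b F' ρstar →
      ∀ x : ℕ, 1 ≤ x → x ≤ n → F x = F' x) := by
  have hb1 : 0 < b 1 := hbpos 1 le_rfl hn
  have hρ1 : ρstar ≤ 1 := by
    have hcon := hfeas.2.2 1 1 1 hn hn le_rfl le_rfl (by omega) (by omega)
    push_cast at hcon
    nlinarith [hcon]
  have hρ0 : 0 ≤ ρstar := by
    have hfeas0 : FeasPoA n b (fun _ => 0) 0 := by
      refine ⟨rfl, rfl, ?_⟩
      intro x y z hxn hyn hzx hzy hs1 hs2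
      have hby := PoAAux.b_nonneg hb0 hbpos hyn
      have hyR : (0:ℝ) ≤ (y:ℝ) := by positivity
      simp only [zero_mul, mul_zero, sub_zero, add_zero]
      have : 0 ≤ b y * (y:ℝ) := mul_nonneg hby hyR
      nlinarith
    exact hopt _ 0 hfeas0
  rcases eq_or_lt_of_le hρ1 with hρeq | hρlt
  · -- case ρstar = 1 : F is forced to g x - g (x-1)
    have hval : ∀ x : ℕ, 1 ≤ x → x ≤ n →
        F x = PoAAux.g b x - PoAAux.g b (x-1) := by
      intro x h1 hx
      have hcast : ((x-1:ℕ):ℝ) = (x:ℝ) - 1 := by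
        push_cast [Nat.cast_sub h1]; ring
      -- lower bound : constraint (x, x-1, x-1)
      have hcon1 := hfeas.2.2 x (x-1) (x-1) hx (by omega) (by omega) le_rfl
        (by omega) (by omega)
      -- upper bound : constraint (x-1, x, x-1)
      have hcon2 := hfeas.2.2 (x-1) x (x-1) (by omega) hx le_rfl (by omega)
        (by omega) (by omega)
      have hxx : x - 1 + 1 = x := by omega
      rw [hxx] at hcon2
      rw [hρeq] at hcon1 hcon2
      rw [hcast] at hcon1 hcon2
      simp only [PoAAux.g]
      have he1 : ((x:ℝ) - ((x:ℝ) - 1)) = 1 := by ring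
      have he2 : (((x:ℝ) - 1) - ((x:ℝ) - 1)) = 0 := by ring
      rw [he1, he2] at hcon1
      rw [he2, he1] at hcon2
      rw [hcast]
      nlinarith [hcon1, hcon2]
    constructor
    · intro x h1 hxlt
      rw [hval x h1 (by omega), hval (x+1) (by omega) (by omega)]
      have hD := PoAAux.Dmono hb0 hbpos hbmono hbconv (show x-1 ≤ x by omega)
        (show x+1 ≤ n by omega)
      have hxx : x - 1 + 1 = x := by omega
      rw [hxx] at hD
      have hxx2 : x + 1 - 1 = x := by omega
      rw [hxx2]
      linarith
    · intro hlt
      rw [← hρeq] at hlt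
      exact absurd hlt (lt_irrefl _)
  · -- case ρstar < 1
    have hpinch := PoAAux.pinch hn hb0 hbpos hbmono hbconv hρ0 hfeas hρlt hopt
    have hn2 : 2 ≤ n := by
      by_contra hc
      push_neg at hc
      have hn1 : n = 1 := by omega
      subst hn1
      have hM1 : PoAAux.M 1 b ρstar 1 = b 1 := PoAAux.M_one hn hb0 hbpos hbmono
      have hL1 : PoAAux.L b ρstar 1 = ρstar * b 1 := by
        obtain ⟨w, hw, hweq⟩ := PoAAux.exists_L_eq (b := b) (ρ := ρstar) (x := 1) le_rfl
        have hw0 : w = 0 := by omega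
        subst hw0
        rw [hweq]
        simp [PoAAux.g, hb0]
      rw [hM1, hL1] at hpinch
      nlinarith
    have hFM := PoAAux.F_eq_M hn hb0 hbpos hbmono hbconv hρ0 hρlt hfeas hpinch hn2
    constructor
    · intro x h1 hxlt
      rw [hFM x h1 (by omega), hFM (x+1) (by omega) (by omega)]
      exact PoAAux.M_mono_step hn hb0 hbpos hbmono hbconv hρ0 (le_of_lt hρlt) hfeas h1 (by omega)
    · intro _ F' hfeas' x h1 hx
      have hF'M := PoAAux.F_eq_M hn hb0 hbpos hbmono hbconv hρ0 hρlt hfeas' hpinch hn2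
      rw [hFM x h1 hx, hF'M x h1 hx]
end
end

section
/- Let n ≥ 1, let b : {0,…,n} → ℝ be nondecreasing with b(0) = 0, b(1) = 1 and b(x) > 0 for x ≥ 1, let F : {1,…,n} → ℝ be nondecreasing with F(1) = 1, let y* ∈ {0,…,n−1} and ε > 0. Consider the congestion game with users N = {1,…,n} and resources {e_0, e_1, …, e_{n−y*}} in which each user i ≤ n−y* has action set {{e_0}, {e_i}} and each user i > n−y* has the single action {e_0}; resource e_0 has cost function b and incentive F − b (so its cost-plus-incentive is F), and each resource e_k with k ≥ 1 has cost function (F(n)+ε)·b and incentive (F(n)+ε)·(F − b). Then: (i) the assignment ā in which every user selects e_0 is the unique pure Nash equilibrium; (ii) SC(ā) = b(n)·n; (iii) the assignment a* in which each user i ≤ n−y* selects e_i and the remaining users select e_0 has SC(a*) = (n−y*)·(F(n)+ε) + b(y*)·y* (with the convention b(0)·0 = 0); consequently min_{a∈NE} SC(a)/MinCost ≥ b(n)·n / [(n−y*)·(F(n)+ε) + b(y*)·y*]. -/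
open scoped BigOperators ENNReal

noncomputable section

/-- The lower-bound congestion game construction: users `N = {1,…,n}` and
resources `{e_0, e_1, …, e_{n−y*}}`; each user `i ≤ n−y*` chooses between
`{e_0}` and `{e_i}`, each user `i > n−y*` only has action `{e_0}`. Resource
`e_0` has cost `b` and incentive `F − b`; each `e_k`, `k ≥ 1`, has cost
`(F(n)+ε)·b` and incentive `(F(n)+ε)·(F − b)`. -/
def lbGame (n ystar : ℕ) (b F : ℕ → ℝ) (ε : ℝ) : CGame where
  n := n
  R := n - ystar + 1
  act := fun i =>
    if h : (i : ℕ) < n - ystar then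
      {{(0 : Fin (n - ystar + 1))}, {(⟨(i : ℕ) + 1, by omega⟩ : Fin (n - ystar + 1))}}
    else
      {{(0 : Fin (n - ystar + 1))}}
  act_ne := fun i => by
    by_cases h : (i : ℕ) < n - ystar <;> simp [h]
  cost := fun e x => if (e : ℕ) = 0 then b x else (F n + ε) * b x
  tax := fun e x => if (e : ℕ) = 0 then F x - b x else (F n + ε) * (F x - b x)

/-- The assignment in which every user selects `e_0`. -/
def lbEq (n ystar : ℕ) (b F : ℕ → ℝ) (ε : ℝ) : (lbGame n ystar b F ε).Assign :=
  fun _ => {(⟨0, Nat.succ_pos _⟩ : Fin (n - ystar + 1))}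

/-- The assignment in which each user `i ≤ n−y*` selects `e_i` and the
remaining users select `e_0`. -/
def lbOpt (n ystar : ℕ) (b F : ℕ → ℝ) (ε : ℝ) : (lbGame n ystar b F ε).Assign :=
  fun i =>
    if h : (i : ℕ) < n - ystar then
      {(⟨(i : ℕ) + 1, by omega⟩ : Fin (n - ystar + 1))}
    else
      {(⟨0, Nat.succ_pos _⟩ : Fin (n - ystar + 1))}


attribute [reducible] lbGame

section LBAux

variable {n ystar : ℕ} {b F : ℕ → ℝ} {ε : ℝ}

lemma F_chain (n : ℕ) (F : ℕ → ℝ) (hFmono : ∀ x : ℕ, 1 ≤ x → x < n → F x ≤ F (x + 1)) :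
    ∀ j k : ℕ, 1 ≤ j → j ≤ k → k ≤ n → F j ≤ F k := by
  intro j k hj hjk hk
  induction k with
  | zero => omega
  | succ m ih =>
    rcases Nat.lt_or_ge j (m+1) with h | h
    · exact le_trans (ih (by omega) (by omega)) (hFmono m (by omega) (by omega))
    · have : j = m + 1 := by omega
      simp [this]

lemma card_filter_lt_fin (n m : ℕ) (h : m ≤ n) :
    ((Finset.univ : Finset (Fin n)).filter fun i : Fin n => (i : ℕ) < m).card = m := by
  rw [Finset.card_filter]
  rw [Fin.sum_univ_eq_sum_range (fun i => if i < m then (1:ℕ) else 0) n]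
  rw [← Finset.card_filter]
  have : (Finset.range n).filter (fun i => i < m) = Finset.range m := by
    ext x; simp; omega
  rw [this, Finset.card_range]

lemma card_filter_le_fin (n m : ℕ) :
    ((Finset.univ : Finset (Fin n)).filter fun i : Fin n => m ≤ (i:ℕ)).card = n - m := by
  rw [Finset.card_filter]
  rw [Fin.sum_univ_eq_sum_range (fun i => if m ≤ i then (1:ℕ) else 0) n]
  rw [← Finset.card_filter]
  have : (Finset.range n).filter (fun i => m ≤ i) = Finset.Ico m n := by
    ext x; simp; omega
  rw [this, Nat.card_Ico]

lemma CGame.load_eq_of_iff (G : CGame) (a : G.Assign) (e : Fin G.R)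
    (p : Fin G.n → Prop) [DecidablePred p] (h : ∀ i, e ∈ a i ↔ p i) :
    G.load a e = (Finset.univ.filter p).card := by
  unfold CGame.load
  congr 1
  ext j
  simp [h j]

lemma lb_act_mem {i : Fin n} {s : Finset (Fin (n - ystar + 1))}
    (hs : s ∈ (lbGame n ystar b F ε).act i) :
    s = {(⟨0, Nat.succ_pos _⟩ : Fin (n - ystar + 1))} ∨
      (∃ h : (i : ℕ) < n - ystar,
        s = {(⟨(i : ℕ) + 1, by omega⟩ : Fin (n - ystar + 1))}) := by
  by_cases h : (i : ℕ) < n - ystar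
  · simp only [lbGame, h, dif_pos, Finset.mem_insert, Finset.mem_singleton] at hs
    rcases hs with hs | hs
    · left; rw [hs]; congr
    · right; exact ⟨h, hs⟩
  · simp only [lbGame, h, dif_neg, not_false_iff, Finset.mem_singleton] at hs
    left; rw [hs]; congr

lemma lb_e0_mem_act (i : Fin n) :
    ({(⟨0, Nat.succ_pos _⟩ : Fin (n - ystar + 1))} : Finset (Fin (n - ystar + 1)))
      ∈ (lbGame n ystar b F ε).act i := by
  by_cases h : (i : ℕ) < n - ystar <;> simp [lbGame, h]

lemma lb_load_le (a : (lbGame n ystar b F ε).Assign) (e : Fin (n - ystar + 1)) :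
    (lbGame n ystar b F ε).load a e ≤ n := by
  have : ((Finset.univ : Finset (Fin n)).filter fun i => e ∈ a i).card ≤
      (Finset.univ : Finset (Fin n)).card := Finset.card_filter_le _ _
  simpa [CGame.load] using this

lemma lb_load_pos {a : (lbGame n ystar b F ε).Assign} {e : Fin (n - ystar + 1)}
    {i : Fin n} (h : e ∈ a i) : 1 ≤ (lbGame n ystar b F ε).load a e := by
  have : i ∈ (Finset.univ : Finset (Fin n)).filter fun j => e ∈ a j := by
    simp [h]
  exact Finset.card_pos.mpr ⟨i, this⟩

lemma lb_userCost_singleton (a : (lbGame n ystar b F ε).Assign) (i : Fin n)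
    (e : Fin (n - ystar + 1)) (h : a i = {e}) :
    (lbGame n ystar b F ε).userCost i a =
      (lbGame n ystar b F ε).cost e ((lbGame n ystar b F ε).load a e) +
      (lbGame n ystar b F ε).tax e ((lbGame n ystar b F ε).load a e) := by
  simp [CGame.userCost, h]

lemma lb_cost_tax_zero (x : ℕ) :
    (lbGame n ystar b F ε).cost (⟨0, Nat.succ_pos _⟩ : Fin (n - ystar + 1)) x +
      (lbGame n ystar b F ε).tax (⟨0, Nat.succ_pos _⟩ : Fin (n - ystar + 1)) x = F x := by
  simp [lbGame]

lemma lb_cost_tax_pos {e : Fin (n - ystar + 1)} (he : (e : ℕ) ≠ 0) (x : ℕ) :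
    (lbGame n ystar b F ε).cost e x + (lbGame n ystar b F ε).tax e x
      = (F n + ε) * F x := by
  simp [lbGame, he]; ring

end LBAux

/-- In the lower-bound construction (for `b` nondecreasing
with `b(0) = 0`, `b(1) = 1`, `b > 0` on `{1,…,n}`, `F` nondecreasing with
`F(1) = 1`, `y* ≤ n−1` and `ε > 0`): (i) the all-`e_0` assignment `ā` is the
unique pure Nash equilibrium; (ii) `SC(ā) = b(n)·n`; (iii) the alternative
assignment `a*` has `SC(a*) = (n−y*)·(F(n)+ε) + b(y*)·y*`; consequently
(iv) every Nash equilibrium satisfies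
`SC(a)/MinCost ≥ b(n)·n / [(n−y*)·(F(n)+ε) + b(y*)·y*]`. -/
theorem lb_game_construction (n ystar : ℕ) (hn : 1 ≤ n) (hy : ystar < n)
    (b F : ℕ → ℝ) (ε : ℝ) (hε : 0 < ε)
    (hb0 : b 0 = 0) (hb1 : b 1 = 1)
    (hbpos : ∀ x : ℕ, 1 ≤ x → x ≤ n → 0 < b x)
    (hbmono : ∀ x : ℕ, x < n → b x ≤ b (x + 1))
    (hF1 : F 1 = 1)
    (hFmono : ∀ x : ℕ, 1 ≤ x → x < n → F x ≤ F (x + 1)) :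
    ((lbGame n ystar b F ε).IsNE (lbEq n ystar b F ε) ∧
      ∀ a : (lbGame n ystar b F ε).Assign,
        (lbGame n ystar b F ε).IsNE a → a = lbEq n ystar b F ε) ∧
    (lbGame n ystar b F ε).SC (lbEq n ystar b F ε) = b n * n ∧
    (lbGame n ystar b F ε).SC (lbOpt n ystar b F ε)
      = ((n : ℝ) - (ystar : ℝ)) * (F n + ε) + b ystar * ystar ∧
    ∀ a : (lbGame n ystar b F ε).Assign, (lbGame n ystar b F ε).IsNE a →
      (lbGame n ystar b F ε).SC a / (lbGame n ystar b F ε).MinCost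
        ≥ b n * n / (((n : ℝ) - (ystar : ℝ)) * (F n + ε) + b ystar * ystar) := by
  classical
  have hF : ∀ j k : ℕ, 1 ≤ j → j ≤ k → k ≤ n → F j ≤ F k := F_chain n F hFmono
  have hFn1 : (1:ℝ) ≤ F n := by
    calc (1:ℝ) = F 1 := hF1.symm
    _ ≤ F n := hF 1 n le_rfl hn le_rfl
  have hFε : (0:ℝ) < F n + ε := by linarith
  have hFge1 : ∀ k : ℕ, 1 ≤ k → k ≤ n → (1:ℝ) ≤ F k := by
    intro k h1 h2
    calc (1:ℝ) = F 1 := hF1.symm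
    _ ≤ F k := hF 1 k le_rfl h1 h2
  -- the zero resource
  set z : Fin (n - ystar + 1) := ⟨0, Nat.succ_pos _⟩ with hz
  -- load of z in lbEq is n
  have loadEq : (lbGame n ystar b F ε).load (lbEq n ystar b F ε) z = n := by
    rw [CGame.load_eq_of_iff _ _ _ (fun _ : Fin n => True) (fun i => by simp [lbEq, hz])]
    show (Finset.filter (fun _ : Fin n => True) (Finset.univ : Finset (Fin n))).card = n
    simp
  -- userCost of lbEq
  have hUCEq : ∀ i : Fin n, (lbGame n ystar b F ε).userCost i (lbEq n ystar b F ε) = F n := by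
    intro i
    rw [lb_userCost_singleton _ i z rfl, loadEq, hz, lb_cost_tax_zero]
  -- lbEq is a feasible assignment
  have hEqFeas : (lbGame n ystar b F ε).IsAssign (lbEq n ystar b F ε) := by
    intro i; exact lb_e0_mem_act i
  -- lbEq is a NE
  have hNEEq : (lbGame n ystar b F ε).IsNE (lbEq n ystar b F ε) := by
    refine ⟨hEqFeas, ?_⟩
    intro i s hs
    rcases lb_act_mem hs with h0 | ⟨h, he⟩
    · have : Function.update (lbEq n ystar b F ε) i s = lbEq n ystar b F ε := by
        rw [h0]; exact Function.update_eq_self i _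
      rw [this]
    · set e : Fin (n - ystar + 1) := ⟨(i:ℕ)+1, by omega⟩ with hedef
      set a' := Function.update (lbEq n ystar b F ε) i s with ha'
      have ha'i : a' i = {e} := by rw [ha', Function.update_self, he]
      have hL1 : 1 ≤ (lbGame n ystar b F ε).load a' e :=
        lb_load_pos (by rw [ha'i]; exact Finset.mem_singleton_self e)
      have hLn : (lbGame n ystar b F ε).load a' e ≤ n := lb_load_le a' e
      have hene : ((e : ℕ) : ℕ) ≠ 0 := by simp [hedef]
      have : (lbGame n ystar b F ε).userCost i a' =
          (F n + ε) * F ((lbGame n ystar b F ε).load a' e) := by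
        rw [lb_userCost_singleton a' i e ha'i, lb_cost_tax_pos hene]
      rw [hUCEq i, this]
      have h1 : (1:ℝ) ≤ F ((lbGame n ystar b F ε).load a' e) := hFge1 _ hL1 hLn
      nlinarith
  -- uniqueness
  have hUniq : ∀ a : (lbGame n ystar b F ε).Assign,
      (lbGame n ystar b F ε).IsNE a → a = lbEq n ystar b F ε := by
    intro a ⟨hfeas, hne⟩
    funext i
    by_contra hne0
    rcases lb_act_mem (hfeas i) with h0 | ⟨h, he⟩
    · exact hne0 h0
    set e : Fin (n - ystar + 1) := ⟨(i:ℕ)+1, by omega⟩ with hedef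
    have hene : ((e : ℕ) : ℕ) ≠ 0 := by simp [hedef]
    have hL1 : 1 ≤ (lbGame n ystar b F ε).load a e :=
      lb_load_pos (by rw [he]; exact Finset.mem_singleton_self e)
    have hLn : (lbGame n ystar b F ε).load a e ≤ n := lb_load_le a e
    have hlow : F n + ε ≤ (lbGame n ystar b F ε).userCost i a := by
      rw [lb_userCost_singleton a i e he, lb_cost_tax_pos hene]
      have h1 : (1:ℝ) ≤ F ((lbGame n ystar b F ε).load a e) := hFge1 _ hL1 hLn
      nlinarith
    -- deviate to {z}
    set a' := Function.update a i ({z} : Finset (Fin (n - ystar + 1))) with ha'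
    have ha'i : a' i = {z} := by rw [ha', Function.update_self]
    have hL1' : 1 ≤ (lbGame n ystar b F ε).load a' z :=
      lb_load_pos (by rw [ha'i]; exact Finset.mem_singleton_self z)
    have hLn' : (lbGame n ystar b F ε).load a' z ≤ n := lb_load_le a' z
    have hdev := hne i ({z} : Finset (Fin (n - ystar + 1))) (lb_e0_mem_act i)
    have hhigh : (lbGame n ystar b F ε).userCost i a' ≤ F n := by
      rw [lb_userCost_singleton a' i z ha'i, hz, lb_cost_tax_zero]
      exact hF _ n hL1' hLn' le_rfl
    rw [← ha'] at hdev
    linarith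
  -- SC of lbEq
  have hSCEq : (lbGame n ystar b F ε).SC (lbEq n ystar b F ε) = b n * n := by
    have hc : (lbGame n ystar b F ε).cost z n = b n := by simp [lbGame, hz]
    calc (lbGame n ystar b F ε).SC (lbEq n ystar b F ε)
        = ∑ _i : Fin n, b n := by
          apply Finset.sum_congr rfl
          intro i _
          show ∑ e ∈ (lbEq n ystar b F ε) i, _ = b n
          rw [show (lbEq n ystar b F ε) i = {z} from rfl, Finset.sum_singleton, loadEq, hc]
    _ = b n * n := by simp [mul_comm]
  -- feasibility of lbOpt
  have hOptFeas : (lbGame n ystar b F ε).IsAssign (lbOpt n ystar b F ε) := by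
    intro i
    by_cases h : (i : ℕ) < n - ystar <;> simp [lbGame, lbOpt, h]
  -- loads of lbOpt
  have loadOpt0 : (lbGame n ystar b F ε).load (lbOpt n ystar b F ε) z = ystar := by
    rw [CGame.load_eq_of_iff _ _ _ (fun i : Fin n => n - ystar ≤ (i:ℕ))
      (fun i => by
        by_cases h : (i : ℕ) < n - ystar <;>
          simp [lbOpt, h, hz, Fin.ext_iff] <;> omega)]
    show (Finset.filter (fun i : Fin n => n - ystar ≤ (i:ℕ))
      (Finset.univ : Finset (Fin n))).card = ystar
    rw [card_filter_le_fin]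
    omega
  have loadOpti : ∀ i : Fin n, (h : (i:ℕ) < n - ystar) →
      (lbGame n ystar b F ε).load (lbOpt n ystar b F ε)
        (⟨(i:ℕ)+1, by omega⟩ : Fin (n - ystar + 1)) = 1 := by
    intro i h
    rw [CGame.load_eq_of_iff _ _ _ (fun j : Fin n => j = i)
      (fun j => by
        by_cases hj : (j : ℕ) < n - ystar
        · simp [lbOpt, hj, Fin.ext_iff]; omega
        · simp [lbOpt, hj, Fin.ext_iff]; omega)]
    show (Finset.filter (fun j : Fin n => j = i) (Finset.univ : Finset (Fin n))).card = 1
    rw [Finset.filter_eq', if_pos (Finset.mem_univ i), Finset.card_singleton]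
  -- SC of lbOpt
  have hSCOpt : (lbGame n ystar b F ε).SC (lbOpt n ystar b F ε)
      = ((n : ℝ) - (ystar : ℝ)) * (F n + ε) + b ystar * ystar := by
    have hterm : ∀ i : Fin n,
        (∑ e ∈ (lbOpt n ystar b F ε) i,
          (lbGame n ystar b F ε).cost e ((lbGame n ystar b F ε).load (lbOpt n ystar b F ε) e))
        = if (i:ℕ) < n - ystar then F n + ε else b ystar := by
      intro i
      by_cases h : (i : ℕ) < n - ystar
      · rw [if_pos h]
        rw [show (lbOpt n ystar b F ε) i
            = {(⟨(i:ℕ)+1, by omega⟩ : Fin (n - ystar + 1))} by simp [lbOpt, h]]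
        rw [Finset.sum_singleton, loadOpti i h]
        simp [lbGame, hb1]
      · rw [if_neg h]
        rw [show (lbOpt n ystar b F ε) i = {z} by simp [lbOpt, h, hz]]
        rw [Finset.sum_singleton, loadOpt0]
        simp [lbGame, hz]
    calc (lbGame n ystar b F ε).SC (lbOpt n ystar b F ε)
        = ∑ i : Fin n, if (i:ℕ) < n - ystar then F n + ε else b ystar :=
          Finset.sum_congr rfl fun i _ => hterm i
    _ = ((n : ℝ) - (ystar : ℝ)) * (F n + ε) + b ystar * ystar := by
        rw [Finset.sum_ite, Finset.sum_const, Finset.sum_const,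
          card_filter_lt_fin n (n - ystar) (Nat.sub_le _ _),
          Finset.filter_not, Finset.card_sdiff_of_subset (Finset.filter_subset _ _),
          card_filter_lt_fin n (n - ystar) (Nat.sub_le _ _), Finset.card_univ,
          Fintype.card_fin]
        have h1 : ((n - ystar : ℕ) : ℝ) = (n : ℝ) - (ystar : ℝ) :=
          Nat.cast_sub (le_of_lt hy)
        have h2 : n - (n - ystar) = ystar := by omega
        rw [h2, nsmul_eq_mul, nsmul_eq_mul, h1]
        push_cast
        ring
  -- positivity of SC on feasible assignments
  have hSCpos : ∀ a : (lbGame n ystar b F ε).Assign,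
      (lbGame n ystar b F ε).IsAssign a → 0 < (lbGame n ystar b F ε).SC a := by
    intro a hfeas
    apply Finset.sum_pos
    · intro i _
      have hbL : ∀ e : Fin (n - ystar + 1), e ∈ a i →
          0 < b ((lbGame n ystar b F ε).load a e) :=
        fun e hei => hbpos _ (lb_load_pos hei) (lb_load_le a e)
      rcases lb_act_mem (hfeas i) with h0 | ⟨h, he⟩
      · rw [h0, Finset.sum_singleton]
        have := hbL z (by rw [h0]; exact Finset.mem_singleton_self z)
        simpa [lbGame, hz] using this
      · rw [he, Finset.sum_singleton]
        have := hbL _ (by rw [he]; exact Finset.mem_singleton_self _)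
        have hne0 : (((⟨(i:ℕ)+1, by omega⟩ : Fin (n - ystar + 1)) : ℕ)) ≠ 0 := by simp
        simp only [lbGame, hne0, if_neg, if_false]
        positivity
    · have : Nonempty (Fin (lbGame n ystar b F ε).n) := ⟨⟨0, hn⟩⟩
      exact Finset.univ_nonempty
  -- MinCost facts
  have hSfin : {c | ∃ a, (lbGame n ystar b F ε).IsAssign a ∧ (lbGame n ystar b F ε).SC a = c}.Finite := by
    have : {c | ∃ a, (lbGame n ystar b F ε).IsAssign a ∧ (lbGame n ystar b F ε).SC a = c}
        = (lbGame n ystar b F ε).SC '' {a | (lbGame n ystar b F ε).IsAssign a} := by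
      ext c; simp [Set.mem_image, eq_comm]
    rw [this]
    exact (Set.toFinite _).image _
  have hSne : {c | ∃ a, (lbGame n ystar b F ε).IsAssign a ∧ (lbGame n ystar b F ε).SC a = c}.Nonempty :=
    ⟨_, lbOpt n ystar b F ε, hOptFeas, rfl⟩
  have hmin_mem := hSne.csInf_mem hSfin
  obtain ⟨a0, ha0feas, ha0⟩ := hmin_mem
  have hmin_pos : 0 < (lbGame n ystar b F ε).MinCost := by
    rw [CGame.MinCost, ← ha0]; exact hSCpos a0 ha0feas
  have hmin_le : (lbGame n ystar b F ε).MinCost ≤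
      ((n : ℝ) - (ystar : ℝ)) * (F n + ε) + b ystar * ystar := by
    rw [CGame.MinCost, ← hSCOpt]
    exact csInf_le hSfin.bddBelow ⟨lbOpt n ystar b F ε, hOptFeas, rfl⟩
  refine ⟨⟨hNEEq, hUniq⟩, hSCEq, hSCOpt, ?_⟩
  intro a hNE
  rw [hUniq a hNE, hSCEq]
  have hnum : (0:ℝ) ≤ b n * n := by
    have := hbpos n hn le_rfl
    positivity
  exact div_le_div_of_nonneg_left hnum hmin_pos hmin_le
end
end

section
/- Consider the set 𝒢 of congestion games with at most n users and resource cost functions in 𝓛 for positive basis functions b_1,…,b_m. Suppose that for each j ∈ {1,…,m} there are F_j : {0,…,n+1} → ℝ with F_j(0) = F_j(n+1) = 0 and ρ_j > 0 satisfying b_j(y)·y − ρ_j·b_j(x)·x + F_j(x)·(x−z) − F_j(x+1)·(y−z) ≥ 0 for all (x,y,z) ∈ I(n), where b_j(0) = 0. Then the linear local incentive mechanism T defined by T(Σ_j α_j b_j) = Σ_j α_j (F_j − b_j) satisfies PoA(T) ≤ max_j 1/ρ_j. -/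
open scoped BigOperators ENNReal

noncomputable section

private lemma sum_over_actions {N R : ℕ} (S : Fin N → Finset (Fin R)) (g : Fin R → ℝ) :
    ∑ i, ∑ e ∈ S i, g e
      = ∑ e, ((Finset.univ.filter fun i => e ∈ S i).card : ℝ) * g e := by
  have h1 : ∀ i : Fin N, ∑ e ∈ S i, g e = ∑ e : Fin R, if e ∈ S i then g e else 0 := by
    intro i
    rw [Finset.sum_ite_mem, Finset.univ_inter]
  simp_rw [h1]
  rw [Finset.sum_comm]
  refine Finset.sum_congr rfl fun e _ => ?_
  rw [Finset.sum_ite, Finset.sum_const, Finset.sum_const_zero, add_zero, nsmul_eq_mul]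

private lemma load_update (G : CGame) (a : G.Assign) (i : Fin G.n) (s : Finset (Fin G.R))
    (e : Fin G.R) :
    G.load (Function.update a i s) e + (if e ∈ a i then 1 else 0)
      = G.load a e + (if e ∈ s then 1 else 0) := by
  unfold CGame.load
  rw [Finset.card_filter, Finset.card_filter]
  have h : ∀ k : Fin G.n, (if e ∈ Function.update a i s k then 1 else 0)
      = Function.update (fun k => if e ∈ a k then 1 else 0) i (if e ∈ s then 1 else 0) k := by
    intro k
    rcases eq_or_ne k i with rfl | hk
    · simp
    · simp [Function.update_of_ne hk]
  simp_rw [h]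
  rw [Finset.sum_update_of_mem (Finset.mem_univ i), add_assoc,
    ← Finset.sum_eq_sum_sdiff_singleton_add (Finset.mem_univ i)]
  exact add_comm _ _

/-- Over congestion games with at most `n` users and costs
generated by positive basis functions `b_1, …, b_m` (with `b_j(0) = 0`), if for
each `j` the pair `(F_j, ρ_j)` with `ρ_j > 0` satisfies the linear program
constraints, then the linear local mechanism `T` with `T(b_j) = F_j − b_j`
satisfies `PoA(T) ≤ max_j 1/ρ_j`. -/
theorem feasible_LP_gives_PoA_upper_bound
    (n m : ℕ)
    (b : Fin m → ℕ → ℝ)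
    (hb0 : ∀ j, b j 0 = 0)
    (hbpos : ∀ j, ∀ x : ℕ, 1 ≤ x → x ≤ n → 0 < b j x)
    (F : Fin m → ℕ → ℝ) (ρ : Fin m → ℝ)
    (hρpos : ∀ j, 0 < ρ j)
    (hfeas : ∀ j, FeasPoA n (b j) (F j) (ρ j))
    (T : Mech)
    (hT : ∀ α : Fin m → ℝ, (∀ j, 0 ≤ α j) →
      ∀ x, T (fun y => ∑ j, α j * b j y) x = ∑ j, α j * (F j x - b j x)) :
    PoA n m b T ≤ ⨆ j : Fin m, ENNReal.ofReal (1 / ρ j) := by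
  classical
  refine iSup_le fun G => iSup_le fun hG => iSup_le fun a => iSup_le fun hNE => ?_
  obtain ⟨⟨hGn, hcost, htax⟩, hMpos⟩ := hG
  -- a social optimum exists
  have hex : ∃ a0 : G.Assign, G.IsAssign a0 :=
    ⟨fun i => (G.act_ne i).choose, fun i => (G.act_ne i).choose_spec⟩
  have hVfin : {c | ∃ a0, G.IsAssign a0 ∧ G.SC a0 = c}.Finite :=
    (Set.finite_range G.SC).subset (by rintro c ⟨a0, _, rfl⟩; exact ⟨a0, rfl⟩)
  have hVne : {c | ∃ a0, G.IsAssign a0 ∧ G.SC a0 = c}.Nonempty :=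
    ⟨G.SC hex.choose, hex.choose, hex.choose_spec, rfl⟩
  obtain ⟨ao, haoA, haoSC⟩ : ∃ a0, G.IsAssign a0 ∧ G.SC a0 = G.MinCost :=
    hVne.csInf_mem hVfin
  -- m is positive
  have hm : Nonempty (Fin m) := by
    by_contra h
    rw [not_nonempty_iff] at h
    have hzero : ∀ e k, G.cost e k = 0 := by
      intro e k
      obtain ⟨α, _, hα⟩ := hcost e
      rw [hα]
      simp
    have hSC0 : G.SC ao = 0 := by
      unfold CGame.SC
      exact Finset.sum_eq_zero fun i _ => Finset.sum_eq_zero fun e _ => hzero e _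
    rw [haoSC] at hSC0
    linarith
  obtain ⟨j0, -, hj0⟩ :=
    Finset.exists_min_image (Finset.univ : Finset (Fin m)) ρ Finset.univ_nonempty
  have hρ0pos : 0 < ρ j0 := hρpos j0
  have hρ0le : ∀ j, ρ j0 ≤ ρ j := fun j => hj0 j (Finset.mem_univ j)
  -- abbreviations
  set x : Fin G.R → ℕ := fun e => G.load a e with hxdef
  set y : Fin G.R → ℕ := fun e => G.load ao e with hydef
  set z : Fin G.R → ℕ := fun e => (Finset.univ.filter fun i => e ∈ a i ∧ e ∈ ao i).card
    with hzdef
  set f : Fin G.R → ℕ → ℝ := fun e k => G.cost e k + G.tax e k with hfdef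
  have hload_le : ∀ (c : G.Assign) (e : Fin G.R), G.load c e ≤ G.n := by
    intro c e
    unfold CGame.load
    simpa using Finset.card_filter_le Finset.univ (fun i => e ∈ c i)
  -- the per-resource inequality
  have key : ∀ e : Fin G.R,
      0 ≤ (y e : ℝ) * G.cost e (y e) - ρ j0 * ((x e : ℝ) * G.cost e (x e))
        + f e (x e) * ((x e : ℝ) - (z e : ℝ)) - f e (x e + 1) * ((y e : ℝ) - (z e : ℝ)) := by
    intro e
    obtain ⟨α, hα0, hα⟩ := hcost e
    have hcoste : G.cost e = fun k => ∑ j, α j * b j k := funext hα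
    have htaxe : ∀ k, G.tax e k = ∑ j, α j * (F j k - b j k) := by
      intro k
      rw [htax e k, hcoste]
      exact hT α hα0 k
    have hfe : ∀ k, f e k = ∑ j, α j * F j k := by
      intro k
      simp only [hfdef]
      rw [hα k, htaxe k, ← Finset.sum_add_distrib]
      exact Finset.sum_congr rfl fun j _ => by ring
    -- natural number facts
    have hxn : x e ≤ n := le_trans (hload_le a e) hGn
    have hyn : y e ≤ n := le_trans (hload_le ao e) hGn
    have hzx : z e ≤ x e := by
      apply Finset.card_le_card
      intro i hi
      simp only [Finset.mem_filter] at hi ⊢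
      exact ⟨hi.1, hi.2.1⟩
    have hzy : z e ≤ y e := by
      apply Finset.card_le_card
      intro i hi
      simp only [Finset.mem_filter] at hi ⊢
      exact ⟨hi.1, hi.2.2⟩
    have hunion :
        x e + y e = (Finset.univ.filter fun i => e ∈ a i ∨ e ∈ ao i).card + z e := by
      have h := Finset.card_union_add_card_inter
        (Finset.univ.filter fun i => e ∈ a i) (Finset.univ.filter fun i => e ∈ ao i)
      rw [← Finset.filter_or, ← Finset.filter_and] at h
      exact h.symm
    have hun : (Finset.univ.filter fun i => e ∈ a i ∨ e ∈ ao i).card ≤ n := by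
      refine le_trans ?_ hGn
      have := Finset.card_filter_le (Finset.univ : Finset (Fin G.n))
        (fun i => e ∈ a i ∨ e ∈ ao i)
      simpa using this
    by_cases hu0 : (Finset.univ.filter fun i => e ∈ a i ∨ e ∈ ao i).card = 0
    · have hx0 : x e = 0 := by omega
      have hy0 : y e = 0 := by omega
      have hz0 : z e = 0 := by omega
      rw [hx0, hy0, hz0]
      push_cast
      ring_nf
      rfl
    · -- apply feasibility for each j with the minimal ρ
      have hperj : ∀ j : Fin m,
          0 ≤ b j (y e) * (y e : ℝ) - ρ j0 * (b j (x e) * (x e : ℝ))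
            + F j (x e) * ((x e : ℝ) - (z e : ℝ))
            - F j (x e + 1) * ((y e : ℝ) - (z e : ℝ)) := by
        intro j
        have hfj := (hfeas j).2.2 (x e) (y e) (z e) hxn hyn hzx hzy (by omega) (by omega)
        have hbnn : 0 ≤ b j (x e) * (x e : ℝ) := by
          rcases Nat.eq_zero_or_pos (x e) with h0 | h1
          · rw [h0, hb0 j]; simp
          · exact le_of_lt (mul_pos (hbpos j (x e) h1 hxn) (by exact_mod_cast h1))
        nlinarith [hρ0le j]
      rw [hα (y e), hα (x e), hfe (x e), hfe (x e + 1)]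
      have hid : (((y e : ℝ)) * ∑ j, α j * b j (y e))
            - ρ j0 * ((x e : ℝ) * ∑ j, α j * b j (x e))
            + (∑ j, α j * F j (x e)) * ((x e : ℝ) - (z e : ℝ))
            - (∑ j, α j * F j (x e + 1)) * ((y e : ℝ) - (z e : ℝ))
          = ∑ j, α j * (b j (y e) * (y e : ℝ) - ρ j0 * (b j (x e) * (x e : ℝ))
              + F j (x e) * ((x e : ℝ) - (z e : ℝ))
              - F j (x e + 1) * ((y e : ℝ) - (z e : ℝ))) := by
        rw [Finset.mul_sum, Finset.mul_sum, Finset.sum_mul, Finset.sum_mul, Finset.mul_sum,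
          ← Finset.sum_sub_distrib, ← Finset.sum_add_distrib, ← Finset.sum_sub_distrib]
        exact Finset.sum_congr rfl fun j _ => by ring
      rw [hid]
      exact Finset.sum_nonneg fun j _ => mul_nonneg (hα0 j) (hperj j)
  -- global sum identities
  have E1 : G.SC a = ∑ e, (x e : ℝ) * G.cost e (x e) := by
    unfold CGame.SC
    exact sum_over_actions a (fun e => G.cost e (G.load a e))
  have E2 : G.SC ao = ∑ e, (y e : ℝ) * G.cost e (y e) := by
    unfold CGame.SC
    exact sum_over_actions ao (fun e => G.cost e (G.load ao e))
  have E3 : ∑ i, G.userCost i a = ∑ e, (x e : ℝ) * f e (x e) := by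
    unfold CGame.userCost
    exact sum_over_actions a (fun e => G.cost e (G.load a e) + G.tax e (G.load a e))
  have E4 : ∑ i, G.userCost i (Function.update a i (ao i))
      = ∑ e, ((z e : ℝ) * (f e (x e) - f e (x e + 1)) + (y e : ℝ) * f e (x e + 1)) := by
    have hstep : ∀ i, G.userCost i (Function.update a i (ao i))
        = (∑ e ∈ ao i ∩ a i, (f e (x e) - f e (x e + 1))) + ∑ e ∈ ao i, f e (x e + 1) := by
      intro i
      unfold CGame.userCost
      rw [Function.update_self]
      have hterm : ∀ e ∈ ao i,
          G.cost e (G.load (Function.update a i (ao i)) e)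
            + G.tax e (G.load (Function.update a i (ao i)) e)
          = (if e ∈ a i then f e (x e) - f e (x e + 1) else 0) + f e (x e + 1) := by
        intro e he
        have hlu := load_update G a i (ao i) e
        by_cases hea : e ∈ a i
        · have hl : G.load (Function.update a i (ao i)) e = G.load a e := by
            simp only [hea, he, if_pos] at hlu
            omega
          rw [hl, if_pos hea]
          simp only [hfdef, hxdef]
          ring
        · have hl : G.load (Function.update a i (ao i)) e = G.load a e + 1 := by
            simp only [hea, he, if_pos, if_neg, not_false_iff] at hlu
            omega
          rw [hl, if_neg hea]
          simp only [hfdef, hxdef]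
          ring
      rw [Finset.sum_congr rfl hterm, Finset.sum_add_distrib, Finset.sum_ite_mem]
    rw [Finset.sum_congr rfl fun i _ => hstep i, Finset.sum_add_distrib,
      sum_over_actions (fun i => ao i ∩ a i) (fun e => f e (x e) - f e (x e + 1)),
      sum_over_actions ao (fun e => f e (x e + 1)), ← Finset.sum_add_distrib]
    refine Finset.sum_congr rfl fun e _ => ?_
    have hcard : (Finset.univ.filter fun i => e ∈ ao i ∩ a i).card = z e := by
      congr 1
      ext i
      simp only [Finset.mem_filter, Finset.mem_inter]
      tauto
    rw [hcard]
    rfl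
  have hNEsum : ∑ i, G.userCost i a ≤ ∑ i, G.userCost i (Function.update a i (ao i)) :=
    Finset.sum_le_sum fun i _ => hNE.2 i (ao i) (haoA i)
  -- sum the per-resource inequalities
  have hkey_sum : (0:ℝ) ≤ ∑ e, ((y e : ℝ) * G.cost e (y e)
      - ρ j0 * ((x e : ℝ) * G.cost e (x e))
      + f e (x e) * ((x e : ℝ) - (z e : ℝ)) - f e (x e + 1) * ((y e : ℝ) - (z e : ℝ))) :=
    Finset.sum_nonneg fun e _ => key e
  have hexpand : ∑ e, ((y e : ℝ) * G.cost e (y e)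
      - ρ j0 * ((x e : ℝ) * G.cost e (x e))
      + f e (x e) * ((x e : ℝ) - (z e : ℝ)) - f e (x e + 1) * ((y e : ℝ) - (z e : ℝ)))
      = (∑ e, (y e : ℝ) * G.cost e (y e)) - ρ j0 * (∑ e, (x e : ℝ) * G.cost e (x e))
        + ((∑ e, (x e : ℝ) * f e (x e))
          - ∑ e, ((z e : ℝ) * (f e (x e) - f e (x e + 1)) + (y e : ℝ) * f e (x e + 1))) := by
    rw [Finset.mul_sum, ← Finset.sum_sub_distrib, ← Finset.sum_sub_distrib,
      ← Finset.sum_add_distrib]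
    exact Finset.sum_congr rfl fun e _ => by ring
  have hmain : ρ j0 * G.SC a ≤ G.MinCost := by
    rw [← haoSC]
    rw [hexpand] at hkey_sum
    rw [E1, E2]
    rw [E3] at hNEsum
    rw [E4] at hNEsum
    linarith
  have hdiv : G.SC a / G.MinCost ≤ 1 / ρ j0 := by
    rw [div_le_div_iff₀ hMpos hρ0pos]
    calc G.SC a * ρ j0 = ρ j0 * G.SC a := mul_comm _ _
      _ ≤ G.MinCost := hmain
      _ = 1 * G.MinCost := (one_mul _).symm
  exact le_trans (ENNReal.ofReal_le_ofReal hdiv)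
    (le_iSup (fun j => ENNReal.ofReal (1 / ρ j)) j0)
end
end
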